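/- arXiv:2210.15829 — 9 statements merged into one kernel-verified Lean document; each statement's English description precedes it below -/
import Mathlib

section
/- Let (ε_j, Z_j) and (ε_l, Z_l) be two independent, identically distributed random pairs on a probability space (Ω, 𝓕, P), with values in ℝ × ℝ^q and ε_j integrable. Then ∫_{ℝ^q} |E[ε_j · exp(i⟨t, Z_j⟩)]|² dμ(t) = E[ε_j · ε_l · k(Z_j − Z_l)], where |·| denotes the complex modulus (equivalence of the SMD objective function in characteristic-function form and in kernel-weighted double-expectation form). -/
open MeasureTheory ProbabilityTheory Filter Topology Complex Matrix NNReal ENNReal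

/-- Product of independent integrable complex random variables: the expectation of the
product is the product of expectations. -/
lemma indepFun_integral_mul_complex {Ω : Type*} [MeasurableSpace Ω] {P : Measure Ω}
    [IsProbabilityMeasure P] {X Y : Ω → ℂ} (h : IndepFun X Y P)
    (hX : Integrable X P) (hY : Integrable Y P) :
    ∫ ω, X ω * Y ω ∂P = (∫ ω, X ω ∂P) * ∫ ω, Y ω ∂P := by
  have hXm : AEMeasurable X P := hX.aemeasurable
  have hYm : AEMeasurable Y P := hY.aemeasurable
  have hmap := (indepFun_iff_map_prod_eq_prod_map_map hXm hYm).mp h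
  have h1 : ∫ ω, X ω * Y ω ∂P = ∫ p : ℂ × ℂ, p.1 * p.2 ∂(P.map (fun ω => (X ω, Y ω))) := by
    rw [integral_map (hXm.prodMk hYm) (f := fun p : ℂ × ℂ => p.1 * p.2)
      (measurable_fst.mul measurable_snd).aestronglyMeasurable]
  have h2 : ∫ p : ℂ × ℂ, p.1 * p.2 ∂((P.map X).prod (P.map Y))
      = (∫ x, x ∂(P.map X)) * ∫ y, y ∂(P.map Y) :=
    integral_prod_mul (fun x : ℂ => x) (fun y : ℂ => y)
  have h3 : ∫ x, x ∂(P.map X) = ∫ ω, X ω ∂P :=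
    integral_map hXm (f := fun x : ℂ => x) measurable_id'.aestronglyMeasurable
  have h4 : ∫ y, y ∂(P.map Y) = ∫ ω, Y ω ∂P :=
    integral_map hYm (f := fun x : ℂ => x) measurable_id'.aestronglyMeasurable
  rw [h1, hmap, h2, h3, h4]

set_option maxHeartbeats 2000000 in
/-- Equivalence of the SMD objective function in characteristic-function form and in
kernel-weighted double-expectation form: for two iid pairs `(εj, Zj)` and `(εl, Zl)`,
`∫ |E[εj · exp(i⟨t,Zj⟩)]|² dμ(t) = E[εj · εl · k(Zj − Zl)]`. -/
theorem smd_objective_equivalence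
    {Ω : Type*} [MeasurableSpace Ω] (P : Measure Ω) [IsProbabilityMeasure P]
    {q : ℕ} (μ : Measure (Fin q → ℝ)) [IsFiniteMeasure μ]
    (hμsymm : μ.map (fun t => -t) = μ)
    (k : (Fin q → ℝ) → ℝ)
    (hk : ∀ u, (k u : ℂ) = ∫ t, Complex.exp (Complex.I * ((t ⬝ᵥ u : ℝ) : ℂ)) ∂μ)
    (εj εl : Ω → ℝ) (Zj Zl : Ω → Fin q → ℝ)
    (hεjmeas : Measurable εj) (hεlmeas : Measurable εl)
    (hZjmeas : Measurable Zj) (hZlmeas : Measurable Zl)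
    (hεjint : Integrable εj P)
    (hindep : IndepFun (fun ω => (εj ω, Zj ω)) (fun ω => (εl ω, Zl ω)) P)
    (hident : IdentDistrib (fun ω => (εj ω, Zj ω)) (fun ω => (εl ω, Zl ω)) P P) :
    ∫ t, (‖∫ ω, (εj ω : ℂ) *
          Complex.exp (Complex.I * ((t ⬝ᵥ Zj ω : ℝ) : ℂ)) ∂P‖) ^ 2 ∂μ
      = ∫ ω, εj ω * εl ω * k (Zj ω - Zl ω) ∂P := by
  -- basic measurability / continuity facts
  have hdotc : Continuous fun p : (Fin q → ℝ) × (Fin q → ℝ) => (p.1 ⬝ᵥ p.2 : ℝ) := by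
    simp only [dotProduct]
    exact continuous_finset_sum _ fun i _ =>
      (((continuous_apply i).comp continuous_fst).mul ((continuous_apply i).comp continuous_snd))
  have hdott : ∀ t : Fin q → ℝ, Measurable fun z : Fin q → ℝ => (t ⬝ᵥ z : ℝ) := fun t =>
    (hdotc.comp (Continuous.prodMk_right t)).measurable
  have hec : Continuous fun p : (Fin q → ℝ) × (Fin q → ℝ) =>
      Complex.exp (Complex.I * ((p.1 ⬝ᵥ p.2 : ℝ) : ℂ)) :=
    Complex.continuous_exp.comp (continuous_const.mul (Complex.continuous_ofReal.comp hdotc))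
  have hnorm : ∀ (x : ℝ), ‖Complex.exp (Complex.I * (x : ℂ))‖ = 1 := by
    intro x
    rw [mul_comm]
    exact Complex.norm_exp_ofReal_mul_I x
  have hnorm' : ∀ (x : ℝ), ‖Complex.exp (-(Complex.I * (x : ℂ)))‖ = 1 := by
    intro x
    have : -(Complex.I * (x : ℂ)) = Complex.I * ((-x : ℝ) : ℂ) := by push_cast; ring
    rw [this]; exact hnorm (-x)
  -- integrability of εl
  have hεlint : Integrable εl P :=
    (hident.comp measurable_fst).integrable_iff.mp hεjint
  have hεjεlindep : IndepFun εj εl P := hindep.comp measurable_fst measurable_fst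
  have hmulint : Integrable (fun ω => εj ω * εl ω) P :=
    hεjεlindep.integrable_mul hεjint hεlint
  -- the two factors
  set f : (Fin q → ℝ) → Ω → ℂ :=
    fun t ω => (εj ω : ℂ) * Complex.exp (Complex.I * ((t ⬝ᵥ Zj ω : ℝ) : ℂ)) with hf
  set g : (Fin q → ℝ) → Ω → ℂ :=
    fun t ω => (εl ω : ℂ) * Complex.exp (-(Complex.I * ((t ⬝ᵥ Zl ω : ℝ) : ℂ))) with hg
  have hfmeas : ∀ t, Measurable (f t) := by
    intro t
    exact (Complex.measurable_ofReal.comp hεjmeas).mul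
      (Complex.measurable_exp.comp
        ((measurable_const.mul (Complex.measurable_ofReal.comp ((hdott t).comp hZjmeas)))))
  have hgmeas : ∀ t, Measurable (g t) := by
    intro t
    exact (Complex.measurable_ofReal.comp hεlmeas).mul
      (Complex.measurable_exp.comp
        ((measurable_const.mul (Complex.measurable_ofReal.comp ((hdott t).comp hZlmeas))).neg))
  have hfint : ∀ t, Integrable (f t) P := by
    intro t
    refine Integrable.mono' hεjint.norm (hfmeas t).aestronglyMeasurable ?_
    filter_upwards with ω
    rw [hf]
    simp only [norm_mul, hnorm, mul_one, Complex.norm_real]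
    exact le_refl _
  have hgint : ∀ t, Integrable (g t) P := by
    intro t
    refine Integrable.mono' hεlint.norm (hgmeas t).aestronglyMeasurable ?_
    filter_upwards with ω
    rw [hg]
    simp only [norm_mul, hnorm', mul_one, Complex.norm_real]
    exact le_refl _
  -- the conjugate of the first factor's expectation
  have hconj : ∀ t, (starRingEnd ℂ) (∫ ω, f t ω ∂P) = ∫ ω, g t ω ∂P := by
    intro t
    rw [← integral_conj]
    have h1 : ∀ ω, (starRingEnd ℂ) (f t ω)
        = (εj ω : ℂ) * Complex.exp (-(Complex.I * ((t ⬝ᵥ Zj ω : ℝ) : ℂ))) := by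
      intro ω
      simp only [hf]
      rw [_root_.map_mul, Complex.conj_ofReal, ← Complex.exp_conj, _root_.map_mul,
        Complex.conj_I, Complex.conj_ofReal, neg_mul]
    simp_rw [h1]
    have hφ : Measurable fun p : ℝ × (Fin q → ℝ) =>
        (p.1 : ℂ) * Complex.exp (-(Complex.I * ((t ⬝ᵥ p.2 : ℝ) : ℂ))) :=
      (Complex.measurable_ofReal.comp measurable_fst).mul
        (Complex.measurable_exp.comp
          ((measurable_const.mul
            (Complex.measurable_ofReal.comp ((hdott t).comp measurable_snd))).neg))
    exact (hident.comp hφ).integral_eq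
  -- the product of expectations as a single expectation
  have hmul : ∀ t, (∫ ω, f t ω ∂P) * (∫ ω, g t ω ∂P)
      = ∫ ω, ((εj ω * εl ω : ℝ) : ℂ) *
          Complex.exp (Complex.I * ((t ⬝ᵥ (Zj ω - Zl ω) : ℝ) : ℂ)) ∂P := by
    intro t
    have hφ1 : Measurable fun p : ℝ × (Fin q → ℝ) =>
        (p.1 : ℂ) * Complex.exp (Complex.I * ((t ⬝ᵥ p.2 : ℝ) : ℂ)) :=
      (Complex.measurable_ofReal.comp measurable_fst).mul
        (Complex.measurable_exp.comp
          (measurable_const.mul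
            (Complex.measurable_ofReal.comp ((hdott t).comp measurable_snd))))
    have hφ2 : Measurable fun p : ℝ × (Fin q → ℝ) =>
        (p.1 : ℂ) * Complex.exp (-(Complex.I * ((t ⬝ᵥ p.2 : ℝ) : ℂ))) :=
      (Complex.measurable_ofReal.comp measurable_fst).mul
        (Complex.measurable_exp.comp
          ((measurable_const.mul
            (Complex.measurable_ofReal.comp ((hdott t).comp measurable_snd))).neg))
    have hind : IndepFun (f t) (g t) P := hindep.comp hφ1 hφ2
    rw [← indepFun_integral_mul_complex hind (hfint t) (hgint t)]
    refine integral_congr_ae (Filter.Eventually.of_forall fun ω => ?_)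
    simp only [hf, hg]
    rw [show ((t ⬝ᵥ (Zj ω - Zl ω) : ℝ) : ℂ) = ((t ⬝ᵥ Zj ω : ℝ) : ℂ) - ((t ⬝ᵥ Zl ω : ℝ) : ℂ) by
      rw [dotProduct_sub]; push_cast; ring]
    rw [show Complex.I * (((t ⬝ᵥ Zj ω : ℝ) : ℂ) - ((t ⬝ᵥ Zl ω : ℝ) : ℂ))
        = Complex.I * ((t ⬝ᵥ Zj ω : ℝ) : ℂ) + -(Complex.I * ((t ⬝ᵥ Zl ω : ℝ) : ℂ)) by ring]
    rw [Complex.exp_add]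
    push_cast
    ring
  -- reduce to an equality of complex numbers
  rw [← Complex.ofReal_inj]
  have hL : ((∫ t, ‖∫ ω, (εj ω : ℂ) *
          Complex.exp (Complex.I * ((t ⬝ᵥ Zj ω : ℝ) : ℂ)) ∂P‖ ^ 2 ∂μ : ℝ) : ℂ)
      = ∫ t, ((‖∫ ω, f t ω ∂P‖ ^ 2 : ℝ) : ℂ) ∂μ := integral_ofReal.symm
  have hR : ((∫ ω, εj ω * εl ω * k (Zj ω - Zl ω) ∂P : ℝ) : ℂ)
      = ∫ ω, ((εj ω * εl ω * k (Zj ω - Zl ω) : ℝ) : ℂ) ∂P := integral_ofReal.symm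
  rw [hL, hR]
  have habs : ∀ z : ℂ, ((‖z‖ ^ 2 : ℝ) : ℂ) = z * (starRingEnd ℂ) z := by
    intro z
    rw [Complex.sq_norm, Complex.mul_conj]
  have hm1 : Measurable fun p : (Fin q → ℝ) × Ω => ((εj p.2 * εl p.2 : ℝ) : ℂ) :=
    Complex.measurable_ofReal.comp ((hεjmeas.mul hεlmeas).comp measurable_snd)
  have hm2 : Measurable fun p : (Fin q → ℝ) × Ω => (p.1 ⬝ᵥ (Zj p.2 - Zl p.2) : ℝ) :=
    hdotc.measurable.comp (measurable_fst.prodMk ((hZjmeas.sub hZlmeas).comp measurable_snd))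
  have hm3 : Measurable fun p : (Fin q → ℝ) × Ω =>
      Complex.exp (Complex.I * ((p.1 ⬝ᵥ (Zj p.2 - Zl p.2) : ℝ) : ℂ)) :=
    Complex.measurable_exp.comp (measurable_const.mul (Complex.measurable_ofReal.comp hm2))
  have hm4 : Measurable fun p : (Fin q → ℝ) × Ω => ((εj p.2 * εl p.2 : ℝ) : ℂ) *
      Complex.exp (Complex.I * ((p.1 ⬝ᵥ (Zj p.2 - Zl p.2) : ℝ) : ℂ)) := hm1.mul hm3
  have hHint : Integrable (Function.uncurry fun t ω => ((εj ω * εl ω : ℝ) : ℂ) *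
      Complex.exp (Complex.I * ((t ⬝ᵥ (Zj ω - Zl ω) : ℝ) : ℂ))) (μ.prod P) := by
    refine Integrable.mono' (Integrable.mul_prod (integrable_const (1 : ℝ)) hmulint.norm)
      hm4.aestronglyMeasurable ?_
    filter_upwards with p
    simp only [Function.uncurry, norm_mul, hnorm, mul_one, Complex.norm_real, one_mul]
    exact le_rfl
  calc ∫ t, ((‖∫ ω, f t ω ∂P‖ ^ 2 : ℝ) : ℂ) ∂μ
      = ∫ t, ∫ ω, ((εj ω * εl ω : ℝ) : ℂ) *
          Complex.exp (Complex.I * ((t ⬝ᵥ (Zj ω - Zl ω) : ℝ) : ℂ)) ∂P ∂μ := by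
        refine integral_congr_ae (Filter.Eventually.of_forall fun t => ?_)
        dsimp only
        rw [habs, hconj t, hmul t]
    _ = ∫ ω, ∫ t, ((εj ω * εl ω : ℝ) : ℂ) *
          Complex.exp (Complex.I * ((t ⬝ᵥ (Zj ω - Zl ω) : ℝ) : ℂ)) ∂μ ∂P :=
        integral_integral_swap hHint
    _ = ∫ ω, ((εj ω * εl ω * k (Zj ω - Zl ω) : ℝ) : ℂ) ∂P := by
        refine integral_congr_ae (Filter.Eventually.of_forall fun ω => ?_)
        dsimp only
        rw [integral_const_mul, ← hk (Zj ω - Zl ω)]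
        push_cast
        ring
end

section
/- Let D_j, D_l, D_m be three mutually independent observations with the common distribution, in the partially linear model. If the p×p matrix A := E[k(Z_j − Z_l)(P̃_j − H(X_l)) P̃_lᵀ] is invertible, then θ₀ = A⁻¹ · E[k(Z_j − Z_l)(P̃_j − H(X_l)) ỹ_l] (identification of θ₀ from the Neyman-orthogonalized first-order condition). -/
open MeasureTheory ProbabilityTheory Filter Topology Complex Matrix NNReal ENNReal

/-- Coordinate of a conditional expectation of a vector-valued function. -/
lemma aux_condexp_apply {Ω : Type*} {m m0 : MeasurableSpace Ω} (hm : m ≤ m0)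
    (P : Measure Ω) [IsFiniteMeasure P] {n : ℕ} {g : Ω → Fin n → ℝ}
    (hg : Integrable g P) (r : Fin n) :
    (fun ω => (P[g|m]) ω r) =ᵐ[P] P[fun ω => g ω r|m] := by
  have hproj : ∀ (h : Ω → Fin n → ℝ), Integrable h P → Integrable (fun ω => h ω r) P := by
    intro h hh
    refine hh.norm.mono' ?_ ?_
    · exact ((ContinuousLinearMap.proj (R := ℝ) (φ := fun _ : Fin n => ℝ)
        r).continuous.comp_aestronglyMeasurable hh.1)
    · filter_upwards with ω
      simpa using norm_le_pi_norm (h ω) r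
  have hint : Integrable (fun ω => g ω r) P := hproj g hg
  symm
  refine (ae_eq_condExp_of_forall_setIntegral_eq hm hint ?_ ?_ ?_).symm
  · intro s _ _
    exact (hproj _ integrable_condExp).integrableOn
  · intro s hs _
    have h1 := (ContinuousLinearMap.proj (R := ℝ) (φ := fun _ : Fin n => ℝ) r).integral_comp_comm
      (integrable_condExp.integrableOn : IntegrableOn (P[g|m]) s P)
    have h2 := (ContinuousLinearMap.proj (R := ℝ) (φ := fun _ : Fin n => ℝ) r).integral_comp_comm
      (hg.integrableOn : IntegrableOn g s P)
    simp only [ContinuousLinearMap.proj_apply] at h1 h2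
    rw [h1, h2, setIntegral_condExp hm hg hs]
  · exact ((ContinuousLinearMap.proj (R := ℝ) (φ := fun _ : Fin n => ℝ)
      r).continuous.comp_stronglyMeasurable stronglyMeasurable_condExp).aestronglyMeasurable

/-- If `E[ε | σ(X,Z)] = 0` then `E[ψ(X,Z) ε] = 0` for bounded measurable `ψ`. -/
lemma aux_orth {Ω : Type*} [m0 : MeasurableSpace Ω] (P : Measure Ω) [IsProbabilityMeasure P]
    {α β : Type*} [MeasurableSpace α] [MeasurableSpace β]
    (X : Ω → α) (Z : Ω → β) (hX : Measurable X) (hZ : Measurable Z)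
    (ε : Ω → ℝ) (hε : Integrable ε P)
    (hcond : P[ε | MeasurableSpace.comap (fun ω => (X ω, Z ω)) inferInstance] =ᵐ[P] 0)
    (ψ : α × β → ℝ) (hψ : Measurable ψ) (C : ℝ) (hψb : ∀ v, |ψ v| ≤ C) :
    ∫ ω, ψ (X ω, Z ω) * ε ω ∂P = 0 := by
  set m : MeasurableSpace Ω := MeasurableSpace.comap (fun ω => (X ω, Z ω)) inferInstance with hmdef
  have hm : m ≤ m0 := (hX.prodMk hZ).comap_le
  have hpair : Measurable[m] (fun ω => (X ω, Z ω)) := Measurable.of_comap_le le_rfl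
  have hsm : StronglyMeasurable[m] (fun ω => ψ (X ω, Z ω)) :=
    (hψ.comp hpair).stronglyMeasurable
  have hmul := condExp_stronglyMeasurable_mul_of_bound hm hsm hε C
    (Filter.Eventually.of_forall fun ω => by
      simpa [Real.norm_eq_abs] using hψb (X ω, Z ω))
  have hfg : (fun ω => ψ (X ω, Z ω) * ε ω) = (fun ω => ψ (X ω, Z ω)) * ε := rfl
  calc ∫ ω, ψ (X ω, Z ω) * ε ω ∂P
      = ∫ ω, (P[(fun ω => ψ (X ω, Z ω)) * ε|m]) ω ∂P := by
        rw [integral_condExp hm, hfg]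
    _ = 0 := by
        have : P[(fun ω => ψ (X ω, Z ω)) * ε|m] =ᵐ[P] 0 := by
          refine hmul.trans ?_
          filter_upwards [hcond] with ω hω
          simp [Pi.mul_apply, hω]
        rw [integral_congr_ae this]
        simp

/-- Fubini-type vanishing of an integral of a function of two independent random elements,
when the inner integral vanishes for every fixed first argument. -/
lemma aux_indep_integral_zero {Ω α : Type*} [MeasurableSpace Ω] [MeasurableSpace α]
    (P : Measure Ω) [IsProbabilityMeasure P] (V W : Ω → α) (hV : Measurable V)
    (hW : Measurable W) (hVW : IndepFun V W P) (G : α × α → ℝ) (hG : Measurable G)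
    (hint : Integrable G ((P.map V).prod (P.map W)))
    (hinner : ∀ v, ∫ ω, G (v, W ω) ∂P = 0) :
    ∫ ω, G (V ω, W ω) ∂P = 0 := by
  have hmap : P.map (fun ω => (V ω, W ω)) = (P.map V).prod (P.map W) :=
    (indepFun_iff_map_prod_eq_prod_map_map hV.aemeasurable hW.aemeasurable).1 hVW
  have h1 : ∫ ω, G (V ω, W ω) ∂P = ∫ z, G z ∂(P.map (fun ω => (V ω, W ω))) :=
    (integral_map (hV.prodMk hW).aemeasurable hG.aestronglyMeasurable).symm
  rw [h1, hmap, integral_prod _ hint]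
  have h2 : ∀ v, ∫ w, G (v, w) ∂(P.map W) = 0 := by
    intro v
    have hGv : Measurable fun w => G (v, w) := hG.comp measurable_prodMk_left
    rw [integral_map hW.aemeasurable hGv.aestronglyMeasurable]
    exact hinner v
  simp [h2]

/-- Identification of `θ₀` from the Neyman-orthogonalized first-order condition: with
three mutually independent observations `D_j, D_l, D_m` from the partially linear model,
if `A := E[k(Z_j − Z_l)(P̃_j − H(X_l)) P̃_lᵀ]` is invertible then
`θ₀ = A⁻¹ · E[k(Z_j − Z_l)(P̃_j − H(X_l)) ỹ_l]`. -/
theorem drsmd_identification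
    {Ω : Type*} [MeasurableSpace Ω] (P : Measure Ω) [IsProbabilityMeasure P]
    {p qX qz : ℕ}
    (μ : Measure (Fin qz → ℝ)) [IsFiniteMeasure μ]
    (hμsymm : μ.map (fun t => -t) = μ)
    (k : (Fin qz → ℝ) → ℝ)
    (hk : ∀ u, (k u : ℂ) = ∫ t, Complex.exp (Complex.I * ((t ⬝ᵥ u : ℝ) : ℂ)) ∂μ)
    (θ₀ : Fin p → ℝ) (f : (Fin qX → ℝ) → ℝ) (hfmeas : Measurable f)
    (y : Fin 3 → Ω → ℝ) (Pv : Fin 3 → Ω → Fin p → ℝ)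
    (X : Fin 3 → Ω → Fin qX → ℝ) (Z : Fin 3 → Ω → Fin qz → ℝ)
    (ε : Fin 3 → Ω → ℝ)
    (hymeas : ∀ i, Measurable (y i)) (hPmeas : ∀ i, Measurable (Pv i))
    (hXmeas : ∀ i, Measurable (X i)) (hZmeas : ∀ i, Measurable (Z i))
    (hyL2 : ∀ i, MemLp (y i) 2 P) (hPL2 : ∀ i, MemLp (Pv i) 2 P)
    (hXL2 : ∀ i, MemLp (X i) 2 P) (hZL2 : ∀ i, MemLp (Z i) 2 P)
    (hεint : ∀ i, Integrable (ε i) P)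
    (hmodel : ∀ i ω, y i ω = Pv i ω ⬝ᵥ θ₀ + f (X i ω) + ε i ω)
    (hεcond : ∀ i, P[ε i | MeasurableSpace.comap (fun ω => (X i ω, Z i ω)) inferInstance]
        =ᵐ[P] 0)
    (hindep : iIndepFun
        (fun i ω => (y i ω, Pv i ω, X i ω, Z i ω)) P)
    (hident : ∀ i j, IdentDistrib (fun ω => (y i ω, Pv i ω, X i ω, Z i ω))
        (fun ω => (y j ω, Pv j ω, X j ω, Z j ω)) P P)
    (gy : (Fin qX → ℝ) → ℝ) (gP : (Fin qX → ℝ) → Fin p → ℝ)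
    (hgymeas : Measurable gy) (hgPmeas : Measurable gP)
    (hgy : ∀ i, (fun ω => gy (X i ω))
        =ᵐ[P] P[y i | MeasurableSpace.comap (X i) inferInstance])
    (hgP : ∀ i, (fun ω => gP (X i ω))
        =ᵐ[P] P[Pv i | MeasurableSpace.comap (X i) inferInstance])
    (ytil : Fin 3 → Ω → ℝ) (Ptil : Fin 3 → Ω → Fin p → ℝ)
    (hytil : ∀ i ω, ytil i ω = y i ω - gy (X i ω))
    (hPtil : ∀ i ω, Ptil i ω = Pv i ω - gP (X i ω))
    (a : (Fin qX → ℝ) → Fin p → ℝ) (c : (Fin qX → ℝ) → ℝ)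
    (hameas : Measurable a) (hcmeas : Measurable c)
    (ha : (fun ω => a (X 1 ω)) =ᵐ[P]
        P[(fun ω => k (Z 2 ω - Z 1 ω) • Ptil 2 ω) |
          MeasurableSpace.comap (X 1) inferInstance])
    (hc : (fun ω => c (X 1 ω)) =ᵐ[P]
        P[(fun ω => k (Z 2 ω - Z 1 ω)) | MeasurableSpace.comap (X 1) inferInstance])
    (hcne : ∀ᵐ ω ∂P, c (X 1 ω) ≠ 0)
    (H : (Fin qX → ℝ) → Fin p → ℝ) (hH : ∀ x, H x = (c x)⁻¹ • a x)
    (hHbdd : ∃ C, ∀ x, ‖H x‖ ≤ C)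
    (A : Matrix (Fin p) (Fin p) ℝ)
    (hA : A = Matrix.of fun r s =>
        ∫ ω, k (Z 0 ω - Z 1 ω) * ((Ptil 0 ω r - H (X 1 ω) r) * Ptil 1 ω s) ∂P)
    (hAinv : IsUnit A.det) :
    θ₀ = A⁻¹.mulVec fun r =>
        ∫ ω, k (Z 0 ω - Z 1 ω) * ((Ptil 0 ω r - H (X 1 ω) r) * ytil 1 ω) ∂P := by
  classical
  -- boundedness and continuity of k
  have hnorm1 : ∀ (r : ℝ), ‖Complex.exp (Complex.I * (r : ℂ))‖ = 1 := by
    intro r; rw [Complex.norm_exp]; simp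
  have hdot : ∀ (u : Fin qz → ℝ), Continuous fun t : Fin qz → ℝ => t ⬝ᵥ u := fun u =>
    continuous_finset_sum _ fun i _ => (continuous_apply i).mul continuous_const
  have hdot' : ∀ (t : Fin qz → ℝ), Continuous fun u : Fin qz → ℝ => t ⬝ᵥ u := fun t =>
    continuous_finset_sum _ fun i _ => continuous_const.mul (continuous_apply i)
  have hkcont : Continuous k := by
    have hF : Continuous fun u : Fin qz → ℝ =>
        ∫ t, Complex.exp (Complex.I * ((t ⬝ᵥ u : ℝ) : ℂ)) ∂μ := by
      apply continuous_of_dominated (bound := fun _ => (1:ℝ))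
      · intro u
        exact (Complex.continuous_exp.comp (continuous_const.mul
          (Complex.continuous_ofReal.comp (hdot u)))).aestronglyMeasurable
      · intro u; filter_upwards with t; rw [hnorm1]
      · exact integrable_const 1
      · filter_upwards with t
        exact Complex.continuous_exp.comp (continuous_const.mul
          (Complex.continuous_ofReal.comp (hdot' t)))
    have hkeq : k = fun u => (∫ t, Complex.exp (Complex.I * ((t ⬝ᵥ u : ℝ) : ℂ)) ∂μ).re := by
      funext u; rw [← hk u, Complex.ofReal_re]
    rw [hkeq]; exact Complex.continuous_re.comp hF
  have hkmeas : Measurable k := hkcont.measurable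
  set K : ℝ := (μ Set.univ).toReal with hKdef
  have hK0 : 0 ≤ K := ENNReal.toReal_nonneg
  have hKb : ∀ u, |k u| ≤ K := by
    intro u
    have habs : |k u| = ‖(k u : ℂ)‖ := by rw [Complex.norm_real, Real.norm_eq_abs]
    rw [habs, hk u]
    calc ‖∫ t, Complex.exp (Complex.I * ((t ⬝ᵥ u : ℝ) : ℂ)) ∂μ‖
        ≤ ∫ t, ‖Complex.exp (Complex.I * ((t ⬝ᵥ u : ℝ) : ℂ))‖ ∂μ :=
          norm_integral_le_integral_norm _
      _ = ∫ _t, (1:ℝ) ∂μ := by congr 1; funext t; rw [hnorm1]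
      _ = K := by simp [hKdef, Measure.real]
  -- bound for H
  obtain ⟨C, hC⟩ := hHbdd
  have hC0 : 0 ≤ C := le_trans (norm_nonneg _) (hC 0)
  have hCr : ∀ x r, |H x r| ≤ C := fun x r =>
    le_trans (by simpa [Real.norm_eq_abs] using norm_le_pi_norm (H x) r) (hC x)
  have hHmeas : Measurable H := by
    have : H = fun x => (c x)⁻¹ • a x := funext hH
    rw [this]; exact hcmeas.inv.smul hameas
  -- basic integrability
  have hPvint : ∀ i, Integrable (Pv i) P := fun i => (hPL2 i).integrable (by norm_num)
  have hyint : ∀ i, Integrable (y i) P := fun i => (hyL2 i).integrable (by norm_num)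
  have hgPint : ∀ i, Integrable (fun ω => gP (X i ω)) P := fun i =>
    integrable_condExp.congr (hgP i).symm
  have hgyint : ∀ i, Integrable (fun ω => gy (X i ω)) P := fun i =>
    integrable_condExp.congr (hgy i).symm
  have hPtil' : ∀ i, Ptil i = fun ω => Pv i ω - gP (X i ω) := fun i => funext (hPtil i)
  have hPtint : ∀ i, Integrable (Ptil i) P := fun i => by
    rw [hPtil']; exact (hPvint i).sub (hgPint i)
  have hPtmeas : ∀ i, Measurable (Ptil i) := fun i => by
    rw [hPtil']; exact (hPmeas i).sub (hgPmeas.comp (hXmeas i))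
  have hεeq : ∀ i, ε i = fun ω => y i ω - Pv i ω ⬝ᵥ θ₀ - f (X i ω) := by
    intro i; funext ω; have := hmodel i ω; linarith
  have hdotmeas : ∀ i, Measurable (fun ω => Pv i ω ⬝ᵥ θ₀) := by
    intro i
    exact Finset.measurable_sum _ fun s _ =>
      ((measurable_pi_apply s).comp (hPmeas i)).mul_const (θ₀ s)
  have hεmeas : ∀ i, Measurable (ε i) := by
    intro i; rw [hεeq i]
    exact ((hymeas i).sub (hdotmeas i)).sub (hfmeas.comp (hXmeas i))
  have hdotint : ∀ i, Integrable (fun ω => Pv i ω ⬝ᵥ θ₀) P := by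
    intro i
    refine ((hPvint i).norm.mul_const (∑ s, |θ₀ s|)).mono'
      (hdotmeas i).aestronglyMeasurable ?_
    filter_upwards with ω
    rw [Real.norm_eq_abs]
    calc |Pv i ω ⬝ᵥ θ₀| ≤ ∑ s, |Pv i ω s * θ₀ s| := Finset.abs_sum_le_sum_abs _ _
      _ ≤ ∑ s, ‖Pv i ω‖ * |θ₀ s| := by
          refine Finset.sum_le_sum fun s _ => ?_
          rw [abs_mul]
          exact mul_le_mul_of_nonneg_right
            (by simpa [Real.norm_eq_abs] using norm_le_pi_norm (Pv i ω) s) (abs_nonneg _)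
      _ = ‖Pv i ω‖ * ∑ s, |θ₀ s| := by rw [Finset.mul_sum]
  have hfXint : ∀ i, Integrable (fun ω => f (X i ω)) P := by
    intro i
    have : (fun ω => f (X i ω)) = fun ω => y i ω - Pv i ω ⬝ᵥ θ₀ - ε i ω := by
      funext ω; have := hmodel i ω; linarith
    rw [this]; exact ((hyint i).sub (hdotint i)).sub (hεint i)
  -- the conditional-expectation identity: ytil 1 = Ptil 1 ⬝ θ₀ + ε 1 a.s.
  have hmX : MeasurableSpace.comap (X 1) inferInstance ≤ ‹MeasurableSpace Ω› :=
    (hXmeas 1).comap_le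
  have hgPr : ∀ s : Fin p, (fun ω => gP (X 1 ω) s) =ᵐ[P] P[fun ω => Pv 1 ω s|MeasurableSpace.comap (X 1) inferInstance] := by
    intro s
    have h1 : (fun ω => gP (X 1 ω) s) =ᵐ[P] fun ω => (P[Pv 1|MeasurableSpace.comap (X 1) inferInstance]) ω s := by
      filter_upwards [hgP 1] with ω hω
      exact congrFun hω s
    exact h1.trans (aux_condexp_apply hmX P (hPvint 1) s)
  have hPvcoordint : ∀ s : Fin p, Integrable (fun ω => Pv 1 ω s) P := by
    intro s
    refine (hPvint 1).norm.mono'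
      (((measurable_pi_apply s).comp (hPmeas 1)).aestronglyMeasurable) ?_
    filter_upwards with ω
    simpa [Real.norm_eq_abs] using norm_le_pi_norm (Pv 1 ω) s
  have hPdot : P[fun ω => Pv 1 ω ⬝ᵥ θ₀|MeasurableSpace.comap (X 1) inferInstance] =ᵐ[P] fun ω => gP (X 1 ω) ⬝ᵥ θ₀ := by
    have hrep : (fun ω => Pv 1 ω ⬝ᵥ θ₀)
        = ∑ s : Fin p, (θ₀ s) • (fun ω => Pv 1 ω s) := by
      funext ω
      simp [dotProduct, Finset.sum_apply, mul_comm]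
    rw [hrep]
    have hsum := condExp_finsetSum
      (μ := P) (m := MeasurableSpace.comap (X 1) inferInstance) (s := (Finset.univ : Finset (Fin p)))
      (f := fun s => (θ₀ s) • (fun ω => Pv 1 ω s))
      (fun s _ => ((hPvcoordint s).smul (θ₀ s)))
    refine hsum.trans ?_
    have hterm : ∀ s : Fin p,
        P[(θ₀ s) • (fun ω => Pv 1 ω s)|MeasurableSpace.comap (X 1) inferInstance] =ᵐ[P] fun ω => θ₀ s * gP (X 1 ω) s := by
      intro s
      refine (condExp_smul (θ₀ s) (fun ω => Pv 1 ω s) _).trans ?_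
      filter_upwards [hgPr s] with ω hω
      simp [Pi.smul_apply, smul_eq_mul, ← hω]
    have hall : ∀ᵐ ω ∂P, ∀ s : Fin p,
        (P[(θ₀ s) • (fun ω => Pv 1 ω s)|MeasurableSpace.comap (X 1) inferInstance]) ω = θ₀ s * gP (X 1 ω) s :=
      (ae_all_iff).2 fun s => hterm s
    filter_upwards [hall] with ω hω
    simp only [Finset.sum_apply]
    rw [Finset.sum_congr rfl fun s _ => hω s]
    simp [dotProduct, mul_comm]
  have hfX1 : P[fun ω => f (X 1 ω)|MeasurableSpace.comap (X 1) inferInstance] =ᵐ[P] fun ω => f (X 1 ω) := by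
    have hXm : Measurable[MeasurableSpace.comap (X 1) inferInstance] (X 1) :=
      Measurable.of_comap_le le_rfl
    have hsm : StronglyMeasurable[MeasurableSpace.comap (X 1) inferInstance]
        (fun ω => f (X 1 ω)) := ((hfmeas.comp hXm)).stronglyMeasurable
    exact Filter.EventuallyEq.of_eq (condExp_of_stronglyMeasurable hmX hsm (hfXint 1))
  have hε0 : P[ε 1|MeasurableSpace.comap (X 1) inferInstance] =ᵐ[P] 0 := by
    have hle : MeasurableSpace.comap (X 1) inferInstance
        ≤ MeasurableSpace.comap (fun ω => (X 1 ω, Z 1 ω)) inferInstance := by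
      calc MeasurableSpace.comap (X 1) inferInstance
          = MeasurableSpace.comap (fun ω => (X 1 ω, Z 1 ω))
            (MeasurableSpace.comap (fun v : (Fin qX → ℝ) × (Fin qz → ℝ) => v.1) inferInstance) := by
            rw [MeasurableSpace.comap_comp]; rfl
        _ ≤ MeasurableSpace.comap (fun ω => (X 1 ω, Z 1 ω)) inferInstance :=
            MeasurableSpace.comap_mono measurable_fst.comap_le
    have hmXZ : MeasurableSpace.comap (fun ω => (X 1 ω, Z 1 ω)) inferInstance
        ≤ ‹MeasurableSpace Ω› := ((hXmeas 1).prodMk (hZmeas 1)).comap_le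
    have htower : P[P[ε 1|MeasurableSpace.comap (fun ω => (X 1 ω, Z 1 ω)) inferInstance]|MeasurableSpace.comap (X 1) inferInstance]
        =ᵐ[P] P[ε 1|MeasurableSpace.comap (X 1) inferInstance] := condExp_condExp_of_le hle hmXZ
    refine htower.symm.trans ?_
    refine (condExp_congr_ae (hεcond 1)).trans ?_
    rw [condExp_zero]
  have hgyid : (fun ω => gy (X 1 ω)) =ᵐ[P] fun ω => gP (X 1 ω) ⬝ᵥ θ₀ + f (X 1 ω) := by
    have hy1 : y 1 = (fun ω => Pv 1 ω ⬝ᵥ θ₀) + ((fun ω => f (X 1 ω)) + ε 1) := by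
      funext ω; simp [hmodel 1 ω]; ring
    have hcea : P[y 1|MeasurableSpace.comap (X 1) inferInstance] =ᵐ[P]
        P[fun ω => Pv 1 ω ⬝ᵥ θ₀|MeasurableSpace.comap (X 1) inferInstance] + P[(fun ω => f (X 1 ω)) + ε 1|MeasurableSpace.comap (X 1) inferInstance] := by
      rw [hy1]
      exact condExp_add (hdotint 1) ((hfXint 1).add (hεint 1)) _
    have hceb : P[(fun ω => f (X 1 ω)) + ε 1|MeasurableSpace.comap (X 1) inferInstance] =ᵐ[P]
        P[fun ω => f (X 1 ω)|MeasurableSpace.comap (X 1) inferInstance] + P[ε 1|MeasurableSpace.comap (X 1) inferInstance] := condExp_add (hfXint 1) (hεint 1) _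
    filter_upwards [hgy 1, hcea, hceb, hPdot, hfX1, hε0] with ω h1 h2 h3 h4 h5 h6
    rw [h1, h2]
    simp only [Pi.add_apply] at *
    rw [h3, h4, h5, h6]
    simp
  have hyt : (fun ω => ytil 1 ω) =ᵐ[P] fun ω => Ptil 1 ω ⬝ᵥ θ₀ + ε 1 ω := by
    filter_upwards [hgyid] with ω hω
    rw [hytil 1 ω, hmodel 1 ω, hω, hPtil 1 ω, sub_dotProduct]
    ring
  -- independence set-up
  set V : Fin 3 → Ω → ℝ × (Fin p → ℝ) × (Fin qX → ℝ) × (Fin qz → ℝ) :=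
    fun i ω => (y i ω, Pv i ω, X i ω, Z i ω) with hVdef
  have hVmeas : ∀ i, Measurable (V i) := fun i =>
    (hymeas i).prodMk ((hPmeas i).prodMk ((hXmeas i).prodMk (hZmeas i)))
  have hIF : IndepFun (V 0) (V 1) P := hindep.indepFun (by decide)
  set pt : (ℝ × (Fin p → ℝ) × (Fin qX → ℝ) × (Fin qz → ℝ)) → Fin p → ℝ :=
    fun v => v.2.1 - gP v.2.2.1 with hptdef
  set ef : (ℝ × (Fin p → ℝ) × (Fin qX → ℝ) × (Fin qz → ℝ)) → ℝ :=
    fun v => v.1 - v.2.1 ⬝ᵥ θ₀ - f v.2.2.1 with hefdef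
  have hptV : ∀ i ω, pt (V i ω) = Ptil i ω := fun i ω => (hPtil i ω).symm
  have hefV : ∀ i ω, ef (V i ω) = ε i ω := by
    intro i ω
    simp only [hefdef, hVdef]
    have := hmodel i ω
    linarith
  have hptmeas : Measurable pt := measurable_fst.comp measurable_snd |>.sub
    (hgPmeas.comp (measurable_fst.comp (measurable_snd.comp measurable_snd)))
  have hefmeas : Measurable ef := by
    refine (measurable_fst.sub ?_).sub
      (hfmeas.comp (measurable_fst.comp (measurable_snd.comp measurable_snd)))
    exact Finset.measurable_sum _ fun s _ => by
      fun_prop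
  have hzmeas : Measurable fun v : ℝ × (Fin p → ℝ) × (Fin qX → ℝ) × (Fin qz → ℝ) =>
      v.2.2.2 := measurable_snd.comp (measurable_snd.comp measurable_snd)
  have hxmeas : Measurable fun v : ℝ × (Fin p → ℝ) × (Fin qX → ℝ) × (Fin qz → ℝ) =>
      v.2.2.1 := measurable_fst.comp (measurable_snd.comp measurable_snd)
  -- vanishing of the error term
  have hNr : ∀ r : Fin p,
      ∫ ω, k (Z 0 ω - Z 1 ω) * ((Ptil 0 ω r - H (X 1 ω) r) * ε 1 ω) ∂P = 0 := by
    intro r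
    set G : (ℝ × (Fin p → ℝ) × (Fin qX → ℝ) × (Fin qz → ℝ)) ×
        (ℝ × (Fin p → ℝ) × (Fin qX → ℝ) × (Fin qz → ℝ)) → ℝ :=
      fun z => k (z.1.2.2.2 - z.2.2.2.2) * ((pt z.1 r - H z.2.2.2.1 r) * ef z.2) with hGdef
    have hGmeas : Measurable G := by
      refine Measurable.mul ?_ (Measurable.mul ?_ (hefmeas.comp measurable_snd))
      · exact hkmeas.comp ((hzmeas.comp measurable_fst).sub (hzmeas.comp measurable_snd))
      · exact ((measurable_pi_apply r).comp (hptmeas.comp measurable_fst)).sub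
          ((measurable_pi_apply r).comp (hHmeas.comp (hxmeas.comp measurable_snd)))
    have hres : ∫ ω, k (Z 0 ω - Z 1 ω) * ((Ptil 0 ω r - H (X 1 ω) r) * ε 1 ω) ∂P
        = ∫ ω, G (V 0 ω, V 1 ω) ∂P := by
      refine integral_congr_ae (Filter.Eventually.of_forall fun ω => ?_)
      rw [hGdef]
      dsimp only
      rw [hptV 0 ω, hefV 1 ω]
    rw [hres]
    refine aux_indep_integral_zero P (V 0) (V 1) (hVmeas 0) (hVmeas 1) hIF G hGmeas ?_ ?_
    · -- integrability over the product of laws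
      have h1 : Integrable (fun v : ℝ × (Fin p → ℝ) × (Fin qX → ℝ) × (Fin qz → ℝ) =>
          K * (‖pt v‖ + C)) (P.map (V 0)) := by
        rw [integrable_map_measure
          ((hptmeas.norm.add_const C).const_mul K).aestronglyMeasurable
          (hVmeas 0).aemeasurable]
        have : ((fun v : ℝ × (Fin p → ℝ) × (Fin qX → ℝ) × (Fin qz → ℝ) =>
            K * (‖pt v‖ + C)) ∘ (V 0)) = fun ω => K * (‖Ptil 0 ω‖ + C) := by
          funext ω; simp [Function.comp, hptV 0 ω]
        rw [this]
        exact (((hPtint 0).norm.add (integrable_const C)).const_mul K)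
      have h2 : Integrable (fun v : ℝ × (Fin p → ℝ) × (Fin qX → ℝ) × (Fin qz → ℝ) =>
          ‖ef v‖) (P.map (V 1)) := by
        rw [integrable_map_measure hefmeas.norm.aestronglyMeasurable (hVmeas 1).aemeasurable]
        have : ((fun v : ℝ × (Fin p → ℝ) × (Fin qX → ℝ) × (Fin qz → ℝ) =>
            ‖ef v‖) ∘ (V 1)) = fun ω => ‖ε 1 ω‖ := by
          funext ω; simp [Function.comp, hefV 1 ω]
        rw [this]
        exact (hεint 1).norm
      refine (h1.mul_prod h2).mono' hGmeas.aestronglyMeasurable ?_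
      filter_upwards with z
      rw [hGdef]
      dsimp only
      rw [Real.norm_eq_abs, abs_mul, abs_mul]
      have hb1 : |k (z.1.2.2.2 - z.2.2.2.2)| ≤ K := hKb _
      have hb2 : |pt z.1 r - H z.2.2.2.1 r| ≤ ‖pt z.1‖ + C := by
        refine (abs_sub _ _).trans (add_le_add ?_ (hCr _ r))
        simpa [Real.norm_eq_abs] using norm_le_pi_norm (pt z.1) r
      calc |k (z.1.2.2.2 - z.2.2.2.2)| * (|pt z.1 r - H z.2.2.2.1 r| * |ef z.2|)
          ≤ K * ((‖pt z.1‖ + C) * |ef z.2|) := by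
            refine mul_le_mul hb1 (mul_le_mul_of_nonneg_right hb2 (abs_nonneg _)) ?_ hK0
            positivity
        _ = K * (‖pt z.1‖ + C) * ‖ef z.2‖ := by rw [Real.norm_eq_abs]; ring
    · -- inner integral vanishes
      intro v
      set ψ : (Fin qX → ℝ) × (Fin qz → ℝ) → ℝ :=
        fun w => k (v.2.2.2 - w.2) * (pt v r - H w.1 r) with hψdef
      have hψmeas : Measurable ψ :=
        (hkmeas.comp (measurable_const.sub measurable_snd)).mul
          (measurable_const.sub ((measurable_pi_apply r).comp (hHmeas.comp measurable_fst)))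
      have hψb : ∀ w, |ψ w| ≤ K * (|pt v r| + C) := by
        intro w
        rw [hψdef]
        dsimp only
        rw [abs_mul]
        refine mul_le_mul (hKb _) ((abs_sub _ _).trans (add_le_add le_rfl (hCr _ r)))
          (abs_nonneg _) hK0
      have horth := aux_orth P (X 1) (Z 1) (hXmeas 1) (hZmeas 1) (ε 1) (hεint 1)
        (hεcond 1) ψ hψmeas (K * (|pt v r| + C)) hψb
      have : ∫ ω, G (v, V 1 ω) ∂P = ∫ ω, ψ (X 1 ω, Z 1 ω) * ε 1 ω ∂P := by
        refine integral_congr_ae (Filter.Eventually.of_forall fun ω => ?_)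
        rw [hGdef, hψdef]
        dsimp only
        rw [hefV 1 ω]
        ring
      rw [this, horth]
  -- integrability of the base terms on Ω
  set u0 : Ω → ℝ := fun ω => K * (‖Ptil 0 ω‖ + C) with hu0def
  have hu0int : Integrable u0 P := (((hPtint 0).norm.add (integrable_const C)).const_mul K)
  have hu0meas : Measurable u0 := (((hPtmeas 0).norm).add_const C).const_mul K
  have hu0comp : u0 = (fun v : ℝ × (Fin p → ℝ) × (Fin qX → ℝ) × (Fin qz → ℝ) =>
      K * (‖pt v‖ + C)) ∘ (V 0) := by
    funext ω; simp [hu0def, Function.comp, hptV 0 ω]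
  have hbound : ∀ r : Fin p, ∀ (φ : Ω → ℝ) ω, |φ ω| ≤ |φ ω| →
      |k (Z 0 ω - Z 1 ω) * ((Ptil 0 ω r - H (X 1 ω) r) * φ ω)| ≤ u0 ω * |φ ω| := by
    intro r φ ω _
    rw [abs_mul, abs_mul, hu0def]
    have hb2 : |Ptil 0 ω r - H (X 1 ω) r| ≤ ‖Ptil 0 ω‖ + C := by
      refine (abs_sub _ _).trans (add_le_add ?_ (hCr _ r))
      simpa [Real.norm_eq_abs] using norm_le_pi_norm (Ptil 0 ω) r
    calc |k (Z 0 ω - Z 1 ω)| * (|Ptil 0 ω r - H (X 1 ω) r| * |φ ω|)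
        ≤ K * ((‖Ptil 0 ω‖ + C) * |φ ω|) := by
          refine mul_le_mul (hKb _) (mul_le_mul_of_nonneg_right hb2 (abs_nonneg _)) ?_ hK0
          positivity
      _ = K * (‖Ptil 0 ω‖ + C) * |φ ω| := by ring
  have hbase : ∀ r s : Fin p,
      Integrable (fun ω => k (Z 0 ω - Z 1 ω) * ((Ptil 0 ω r - H (X 1 ω) r) * Ptil 1 ω s)) P := by
    intro r s
    have hu1 : Integrable (fun ω => ‖Ptil 1 ω‖) P := (hPtint 1).norm
    have hindep01 : IndepFun u0 (fun ω => ‖Ptil 1 ω‖) P := by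
      have h1 : u0 = (fun v => K * (‖pt v‖ + C)) ∘ (V 0) := hu0comp
      have h2 : (fun ω => ‖Ptil 1 ω‖) = (fun v => ‖pt v‖) ∘ (V 1) := by
        funext ω; simp [Function.comp, hptV 1 ω]
      rw [h1, h2]
      exact hIF.comp ((hptmeas.norm.add_const C).const_mul K) hptmeas.norm
    have hprod : Integrable (u0 * fun ω => ‖Ptil 1 ω‖) P :=
      hindep01.integrable_mul hu0int hu1
    refine hprod.mono' ?_ ?_
    · exact ((hkmeas.comp ((hZmeas 0).sub (hZmeas 1))).mul
        ((((measurable_pi_apply r).comp (hPtmeas 0)).sub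
          ((measurable_pi_apply r).comp (hHmeas.comp (hXmeas 1)))).mul
          ((measurable_pi_apply s).comp (hPtmeas 1)))).aestronglyMeasurable
    · filter_upwards with ω
      rw [Real.norm_eq_abs]
      have := hbound r (fun ω => Ptil 1 ω s) ω le_rfl
      refine this.trans ?_
      simp only [Pi.mul_apply]
      refine mul_le_mul_of_nonneg_left ?_ ?_
      · simpa [Real.norm_eq_abs] using norm_le_pi_norm (Ptil 1 ω) s
      · rw [hu0def]; positivity
  have hbeps : ∀ r : Fin p,
      Integrable (fun ω => k (Z 0 ω - Z 1 ω) * ((Ptil 0 ω r - H (X 1 ω) r) * ε 1 ω)) P := by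
    intro r
    have hu1 : Integrable (fun ω => |ε 1 ω|) P := by
      simpa [Real.norm_eq_abs] using (hεint 1).norm
    have hindep01 : IndepFun u0 (fun ω => |ε 1 ω|) P := by
      have h2 : (fun ω => |ε 1 ω|) = (fun v => |ef v|) ∘ (V 1) := by
        funext ω; simp [Function.comp, hefV 1 ω]
      rw [hu0comp, h2]
      exact hIF.comp ((hptmeas.norm.add_const C).const_mul K) hefmeas.abs
    have hprod : Integrable (u0 * fun ω => |ε 1 ω|) P :=
      hindep01.integrable_mul hu0int hu1
    refine hprod.mono' ?_ ?_
    · exact ((hkmeas.comp ((hZmeas 0).sub (hZmeas 1))).mul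
        ((((measurable_pi_apply r).comp (hPtmeas 0)).sub
          ((measurable_pi_apply r).comp (hHmeas.comp (hXmeas 1)))).mul (hεmeas 1))).aestronglyMeasurable
    · filter_upwards with ω
      rw [Real.norm_eq_abs]
      exact hbound r (ε 1) ω le_rfl
  -- the main identity: each coordinate of the target equals (A.mulVec θ₀) r
  have hTr : ∀ r : Fin p,
      ∫ ω, k (Z 0 ω - Z 1 ω) * ((Ptil 0 ω r - H (X 1 ω) r) * ytil 1 ω) ∂P
        = ∑ s, A r s * θ₀ s := by
    intro r
    have hsplit : ∫ ω, k (Z 0 ω - Z 1 ω) * ((Ptil 0 ω r - H (X 1 ω) r) * ytil 1 ω) ∂P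
        = ∫ ω, ((∑ s, θ₀ s * (k (Z 0 ω - Z 1 ω) * ((Ptil 0 ω r - H (X 1 ω) r) * Ptil 1 ω s)))
            + k (Z 0 ω - Z 1 ω) * ((Ptil 0 ω r - H (X 1 ω) r) * ε 1 ω)) ∂P := by
      refine integral_congr_ae ?_
      filter_upwards [hyt] with ω hω
      rw [hω]
      have hdp : Ptil 1 ω ⬝ᵥ θ₀ = ∑ s, Ptil 1 ω s * θ₀ s := rfl
      rw [hdp, mul_add, mul_add, Finset.mul_sum, Finset.mul_sum]
      congr 1
      refine Finset.sum_congr rfl fun s _ => ?_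
      ring
    rw [hsplit]
    have hsumint : Integrable (fun ω => ∑ s, θ₀ s *
        (k (Z 0 ω - Z 1 ω) * ((Ptil 0 ω r - H (X 1 ω) r) * Ptil 1 ω s))) P :=
      integrable_finset_sum _ fun s _ => (hbase r s).const_mul (θ₀ s)
    rw [integral_add hsumint (hbeps r), hNr r, add_zero,
      integral_finset_sum _ fun s _ => (hbase r s).const_mul (θ₀ s)]
    refine Finset.sum_congr rfl fun s _ => ?_
    rw [integral_const_mul]
    rw [hA]
    simp only [Matrix.of_apply]
    ring
  -- conclude
  have hAθ : (fun r => ∫ ω, k (Z 0 ω - Z 1 ω) *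
      ((Ptil 0 ω r - H (X 1 ω) r) * ytil 1 ω) ∂P) = A.mulVec θ₀ := by
    funext r
    rw [hTr r]
    simp [Matrix.mulVec, dotProduct]
  rw [hAθ, Matrix.mulVec_mulVec, Matrix.nonsing_inv_mul A hAinv, Matrix.one_mulVec]
end

section
/- Let (V, Z₁) and (ε, Z₂) be independent random elements on a probability space (Ω, 𝓕, P), with V : Ω → ℝ integrable, Z₁, Z₂ : Ω → ℝ^q, ε : Ω → ℝ integrable, and suppose E[ε | σ(Z₂)] = 0 almost surely. Then E[V · ε · k(Z₁ − Z₂)] = 0. (This is the vanishing of the term I₁ in the orthogonality analysis: a kernel-weighted cross-moment between a function of one observation and the error of an independent observation is zero under the conditional moment restriction.) -/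
open MeasureTheory ProbabilityTheory Filter Topology Complex Matrix NNReal ENNReal

/-- Vanishing of the term `I₁`: a kernel-weighted cross-moment between a function of one
observation and the error of an independent observation is zero under the conditional
moment restriction `E[ε | σ(Z₂)] = 0`. -/
theorem kernel_cross_moment_vanishes
    {Ω : Type*} [MeasurableSpace Ω] (P : Measure Ω) [IsProbabilityMeasure P]
    {q : ℕ} (μ : Measure (Fin q → ℝ)) [IsFiniteMeasure μ]
    (hμsymm : μ.map (fun t => -t) = μ)
    (k : (Fin q → ℝ) → ℝ)
    (hk : ∀ u, (k u : ℂ) = ∫ t, Complex.exp (Complex.I * ((t ⬝ᵥ u : ℝ) : ℂ)) ∂μ)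
    (V ε : Ω → ℝ) (Z₁ Z₂ : Ω → Fin q → ℝ)
    (hVmeas : Measurable V) (hεmeas : Measurable ε)
    (hZ₁meas : Measurable Z₁) (hZ₂meas : Measurable Z₂)
    (hVint : Integrable V P) (hεint : Integrable ε P)
    (hindep : IndepFun (fun ω => (V ω, Z₁ ω)) (fun ω => (ε ω, Z₂ ω)) P)
    (hcond : P[ε | MeasurableSpace.comap Z₂ inferInstance] =ᵐ[P] 0) :
    ∫ ω, V ω * ε ω * k (Z₁ ω - Z₂ ω) ∂P = 0 := by
  -- the σ-algebra generated by Z₂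
  have hm : MeasurableSpace.comap Z₂ inferInstance ≤ ‹MeasurableSpace Ω› := hZ₂meas.comap_le
  haveI : SigmaFinite (P.trim hm) := by infer_instance
  -- measurability of k
  have hFsm : StronglyMeasurable
      (fun u => ∫ t, Complex.exp (Complex.I * ((t ⬝ᵥ u : ℝ) : ℂ)) ∂μ) := by
    have hdot : Continuous (fun p : (Fin q → ℝ) × (Fin q → ℝ) => (p.2 ⬝ᵥ p.1 : ℝ)) := by
      unfold dotProduct
      exact continuous_finset_sum _ fun i _ =>
        ((continuous_apply i).comp continuous_snd).mul ((continuous_apply i).comp continuous_fst)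
    have hcont : Continuous (fun p : (Fin q → ℝ) × (Fin q → ℝ) =>
        Complex.exp (Complex.I * ((p.2 ⬝ᵥ p.1 : ℝ) : ℂ))) :=
      Complex.continuous_exp.comp (continuous_const.mul (Complex.continuous_ofReal.comp hdot))
    exact hcont.stronglyMeasurable.integral_prod_right'
  have hkmeas : Measurable k := by
    have hke : k = fun u => (∫ t, Complex.exp (Complex.I * ((t ⬝ᵥ u : ℝ) : ℂ)) ∂μ).re := by
      funext u; rw [← hk]; simp
    rw [hke]
    exact Complex.measurable_re.comp hFsm.measurable
  -- boundedness of k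
  set C : ℝ := (μ Set.univ).toReal with hC_def
  have hkbd : ∀ u, ‖k u‖ ≤ C := by
    intro u
    have h1 : ‖(k u : ℂ)‖ ≤ 1 * C := by
      rw [hk]
      apply norm_integral_le_of_norm_le_const
      filter_upwards with t
      have : Complex.exp (Complex.I * ((t ⬝ᵥ u : ℝ) : ℂ)) =
          Complex.exp (((t ⬝ᵥ u : ℝ) : ℂ) * Complex.I) := by ring_nf
      rw [this, Complex.norm_exp_ofReal_mul_I]
    simpa using h1
  -- key: for each fixed z₁, E[ε · k(z₁ - Z₂)] = 0
  have keyA : ∀ z₁ : Fin q → ℝ, ∫ ω, ε ω * k (z₁ - Z₂ ω) ∂P = 0 := by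
    intro z₁
    set h : Ω → ℝ := fun ω => k (z₁ - Z₂ ω) with hh
    have hZ₂m : Measurable[MeasurableSpace.comap Z₂ inferInstance] Z₂ := fun s hs => ⟨s, hs, rfl⟩
    have hhsm : StronglyMeasurable[MeasurableSpace.comap Z₂ inferInstance] h :=
      ((hkmeas.comp (measurable_const.sub measurable_id)).comp hZ₂m).stronglyMeasurable
    have hint : Integrable (fun ω => h ω * ε ω) P :=
      hεint.bdd_mul (hhsm.mono hm).aestronglyMeasurable (Filter.Eventually.of_forall fun ω => hkbd _)
    have h1 : P[(fun ω => h ω * ε ω)|MeasurableSpace.comap Z₂ inferInstance] =ᵐ[P]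
        h * P[ε|MeasurableSpace.comap Z₂ inferInstance] :=
      condExp_mul_of_stronglyMeasurable_left hhsm hint hεint
    have h2 : P[(fun ω => h ω * ε ω)|MeasurableSpace.comap Z₂ inferInstance] =ᵐ[P] 0 := by
      refine h1.trans ?_
      filter_upwards [hcond] with ω hω
      simp [hω]
    calc ∫ ω, ε ω * k (z₁ - Z₂ ω) ∂P = ∫ ω, h ω * ε ω ∂P := by
          simp only [hh]; congr 1; funext ω; ring
      _ = ∫ ω, (P[(fun ω => h ω * ε ω)|MeasurableSpace.comap Z₂ inferInstance]) ω ∂P :=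
            (integral_condExp hm).symm
      _ = 0 := by rw [integral_congr_ae h2]; simp
  -- independence: push forward to a product measure
  set X : Ω → ℝ × (Fin q → ℝ) := fun ω => (V ω, Z₁ ω) with hX_def
  set Y : Ω → ℝ × (Fin q → ℝ) := fun ω => (ε ω, Z₂ ω) with hY_def
  have hXmeas : Measurable X := hVmeas.prodMk hZ₁meas
  have hYmeas : Measurable Y := hεmeas.prodMk hZ₂meas
  set νX : Measure (ℝ × (Fin q → ℝ)) := P.map X with hνX_def
  set νY : Measure (ℝ × (Fin q → ℝ)) := P.map Y with hνY_def
  have hmap : P.map (fun ω => (X ω, Y ω)) = νX.prod νY :=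
    (indepFun_iff_map_prod_eq_prod_map_map hXmeas.aemeasurable hYmeas.aemeasurable).mp hindep
  haveI : IsProbabilityMeasure νX := Measure.isProbabilityMeasure_map hXmeas.aemeasurable
  haveI : IsProbabilityMeasure νY := Measure.isProbabilityMeasure_map hYmeas.aemeasurable
  set H : (ℝ × (Fin q → ℝ)) × (ℝ × (Fin q → ℝ)) → ℝ :=
    fun p => p.1.1 * p.2.1 * k (p.1.2 - p.2.2) with hH_def
  have hHmeas : Measurable H :=
    ((measurable_fst.comp measurable_fst).mul (measurable_fst.comp measurable_snd)).mul
      (hkmeas.comp ((measurable_snd.comp measurable_fst).sub (measurable_snd.comp measurable_snd)))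
  -- integrability of H on the product
  have hint1 : Integrable (fun x : ℝ × (Fin q → ℝ) => C * ‖x.1‖) νX := by
    rw [integrable_map_measure (g := fun x : ℝ × (Fin q → ℝ) => C * ‖x.1‖) (measurable_const.mul measurable_fst.norm).aestronglyMeasurable hXmeas.aemeasurable]
    exact (hVint.norm.const_mul C)
  have hint2 : Integrable (fun y : ℝ × (Fin q → ℝ) => ‖y.1‖) νY := by
    rw [integrable_map_measure measurable_fst.norm.aestronglyMeasurable hYmeas.aemeasurable]
    exact hεint.norm
  have hintH : Integrable H (νX.prod νY) := by
    refine Integrable.mono' (hint1.mul_prod hint2) hHmeas.aestronglyMeasurable ?_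
    filter_upwards with p
    have h1 : ‖H p‖ ≤ ‖p.1.1‖ * ‖p.2.1‖ * C := by
      calc ‖H p‖ = ‖p.1.1‖ * ‖p.2.1‖ * ‖k (p.1.2 - p.2.2)‖ := by
            simp [hH_def, abs_mul]
        _ ≤ ‖p.1.1‖ * ‖p.2.1‖ * C := by
            apply mul_le_mul_of_nonneg_left (hkbd _) (by positivity)
    calc ‖H p‖ ≤ ‖p.1.1‖ * ‖p.2.1‖ * C := h1
      _ = C * ‖p.1.1‖ * ‖p.2.1‖ := by ring
  -- conclude
  have hmain : ∫ ω, V ω * ε ω * k (Z₁ ω - Z₂ ω) ∂P = ∫ p, H p ∂(νX.prod νY) := by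
    rw [← hmap, integral_map (hXmeas.prodMk hYmeas).aemeasurable hHmeas.aestronglyMeasurable]
  rw [hmain, integral_prod H hintH]
  have hinner : ∀ x : ℝ × (Fin q → ℝ), ∫ y, H (x, y) ∂νY = 0 := by
    intro x
    have h1 : ∫ y, H (x, y) ∂νY = ∫ ω, H (x, Y ω) ∂P :=
      integral_map hYmeas.aemeasurable (hHmeas.comp measurable_prodMk_left).aestronglyMeasurable
    rw [h1]
    have h2 : ∀ ω, H (x, Y ω) = x.1 * (ε ω * k (x.2 - Z₂ ω)) := by
      intro ω; simp only [hH_def, hY_def]; ring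
    simp only [h2]
    rw [integral_const_mul, keyA x.2, mul_zero]
  simp [hinner]
end

section
/- Let D₁ and D₂ be two independent observations with the common distribution in the partially linear model, and let h(D₁; D₂) := k(Z₁ − Z₂) P̃₁ ε₂ + k(Z₂ − Z₁) P̃₂ ε₁ − k(Z₁ − Z₂) H(X₂) ε₂ − k(Z₂ − Z₁) H(X₁) ε₁ ∈ ℝ^p be the symmetrized U-statistic kernel. Then, almost surely, E[h(D₁; D₂) | σ(D₁)] = ε₁ · G(Z₁, X₁), where G(z, x) := E[k(Z − z)(P̃ − H(x))] ∈ ℝ^p with the expectation taken over one observation (Hoeffding projection of the D-RSMD kernel). -/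
open MeasureTheory ProbabilityTheory Filter Topology Complex Matrix NNReal ENNReal

/-- Freeze lemma: conditional expectation of `F (W ω, V ω)` given `σ(W)` for independent `W, V`. -/
theorem aux_condexp_indepFun_integral
    {Ω α β E : Type*} [MeasurableSpace Ω] [MeasurableSpace α] [MeasurableSpace β]
    [NormedAddCommGroup E] [NormedSpace ℝ E] [CompleteSpace E]
    (P : Measure Ω) [IsProbabilityMeasure P]
    {W : Ω → α} {V : Ω → β} (hW : Measurable W) (hV : Measurable V)
    (hWV : IndepFun W V P)
    {F : α × β → E} (hF : StronglyMeasurable F)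
    (hFi : Integrable (fun ω => F (W ω, V ω)) P) :
    P[(fun ω => F (W ω, V ω)) | MeasurableSpace.comap W inferInstance]
      =ᵐ[P] fun ω => ∫ ω', F (W ω, V ω') ∂P := by
  have hm : MeasurableSpace.comap W inferInstance ≤ _ := hW.comap_le
  haveI : SigmaFinite (P.trim hm) := inferInstance
  set ν := P.map V with hν
  set κ := P.map W with hκ
  haveI : IsProbabilityMeasure ν := Measure.isProbabilityMeasure_map hV.aemeasurable
  haveI : IsProbabilityMeasure κ := Measure.isProbabilityMeasure_map hW.aemeasurable
  have hmap : P.map (fun ω => (W ω, V ω)) = κ.prod ν :=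
    (indepFun_iff_map_prod_eq_prod_map_map hW.aemeasurable hV.aemeasurable).mp hWV
  have hFπ : Integrable F (κ.prod ν) := by
    rw [← hmap]
    rw [integrable_map_measure (hmap ▸ hF.aestronglyMeasurable) (hW.prodMk hV).aemeasurable]
    exact hFi
  set φ : α → E := fun w => ∫ v, F (w, v) ∂ν with hφdef
  have hφsm : StronglyMeasurable φ := hF.integral_prod_right'
  have hφint : Integrable φ κ := hFπ.integral_prod_left
  have hφWint : Integrable (fun ω => φ (W ω)) P := by
    have := (integrable_map_measure hφsm.aestronglyMeasurable hW.aemeasurable).mp hφint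
    exact this
  have hgoal : (fun ω => ∫ ω', F (W ω, V ω') ∂P) = fun ω => φ (W ω) := by
    funext ω
    rw [hφdef]
    exact (integral_map hV.aemeasurable
      ((hF.comp_measurable (measurable_const.prodMk measurable_id)).aestronglyMeasurable)).symm
  rw [hgoal]
  refine (ae_eq_condExp_of_forall_setIntegral_eq hm hFi ?_ ?_ ?_).symm
  · exact fun s _ _ => hφWint.integrableOn
  · rintro s ⟨A, hA, rfl⟩ -
    have h1 : ∫ ω in W ⁻¹' A, φ (W ω) ∂P = ∫ w in A, φ w ∂κ :=
      (setIntegral_map hA hφsm.aestronglyMeasurable hW.aemeasurable).symm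
    have h2 : ∫ w in A, φ w ∂κ = ∫ q in A ×ˢ (Set.univ : Set β), F q ∂(κ.prod ν) := by
      have hres : Integrable F ((κ.restrict A).prod (ν.restrict Set.univ)) := by
        rw [Measure.prod_restrict]
        exact hFπ.restrict
      rw [← Measure.prod_restrict, integral_prod _ hres, Measure.restrict_univ]
    have h3 : ∫ q in A ×ˢ (Set.univ : Set β), F q ∂(κ.prod ν)
        = ∫ ω in W ⁻¹' A, F (W ω, V ω) ∂P := by
      rw [← hmap, setIntegral_map (hA.prod MeasurableSet.univ)
        (hmap ▸ hF.aestronglyMeasurable) (hW.prodMk hV).aemeasurable]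
      rw [show (fun ω => (W ω, V ω)) ⁻¹' (A ×ˢ (Set.univ : Set β)) = W ⁻¹' A from by
        ext ω; simp]
    rw [h1, h2, h3]
  · exact StronglyMeasurable.aestronglyMeasurable
      (hφsm.comp_measurable (measurable_iff_comap_le.mpr le_rfl))

/-- Orthogonality: if `E[ε | σ(T)] = 0` and `φ` is bounded measurable, then
`∫ ε • φ(T) = 0`. -/
theorem aux_orth_s11 {Ω : Type*} [MeasurableSpace Ω] (P : Measure Ω) [IsProbabilityMeasure P]
    {β : Type*} [MeasurableSpace β] {p : ℕ}
    {T : Ω → β} (hT : Measurable T)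
    {ε : Ω → ℝ} (hεint : Integrable ε P)
    (hεcond : P[ε | MeasurableSpace.comap T inferInstance] =ᵐ[P] 0)
    {φ : β → Fin p → ℝ} (hφ : Measurable φ) {C : ℝ} (hφb : ∀ u, ‖φ u‖ ≤ C) :
    ∫ ω, ε ω • φ (T ω) ∂P = 0 := by
  have hm : MeasurableSpace.comap T inferInstance ≤ _ := hT.comap_le
  haveI : SigmaFinite (P.trim hm) := inferInstance
  have hint : Integrable (fun ω => ε ω • φ (T ω)) P := by
    refine Integrable.mono' (hεint.norm.const_mul C) ?_ ?_
    · exact hεint.aestronglyMeasurable.smul (hφ.comp hT).aestronglyMeasurable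
    · refine Filter.Eventually.of_forall fun ω => ?_
      rw [norm_smul]
      calc ‖ε ω‖ * ‖φ (T ω)‖ ≤ ‖ε ω‖ * C :=
            mul_le_mul_of_nonneg_left (hφb _) (norm_nonneg _)
        _ = C * ‖ε ω‖ := mul_comm _ _
  have key : ∀ j : Fin p, (∫ ω, ε ω • φ (T ω) ∂P) j = 0 := by
    intro j
    have hψmeas : Measurable fun ω => φ (T ω) j := (measurable_pi_apply j).comp (hφ.comp hT)
    have hint2 : Integrable ((fun ω => φ (T ω) j) * ε) P :=
      Integrable.bdd_mul hεint hψmeas.aestronglyMeasurable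
        (c := C) (Filter.Eventually.of_forall fun ω => by
          simpa using (norm_le_pi_norm (φ (T ω)) j).trans (hφb _))
    have h1 : (∫ ω, ε ω • φ (T ω) ∂P) j = ∫ ω, ((fun ω => φ (T ω) j) * ε) ω ∂P := by
      calc (∫ ω, ε ω • φ (T ω) ∂P) j
          = (ContinuousLinearMap.proj (R := ℝ) (φ := fun _ : Fin p => ℝ) j)
              (∫ ω, ε ω • φ (T ω) ∂P) := rfl
        _ = ∫ ω, (ContinuousLinearMap.proj (R := ℝ) (φ := fun _ : Fin p => ℝ) j)
              (ε ω • φ (T ω)) ∂P :=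
            (ContinuousLinearMap.integral_comp_comm _ hint).symm
        _ = ∫ ω, ((fun ω => φ (T ω) j) * ε) ω ∂P := by
            congr 1
            funext ω
            simp [mul_comm]
    have hψm : StronglyMeasurable[MeasurableSpace.comap T inferInstance]
        fun ω => φ (T ω) j :=
      (((measurable_pi_apply j).comp hφ).comp
        (measurable_iff_comap_le.mpr le_rfl)).stronglyMeasurable
    have hcnd : P[(fun ω => φ (T ω) j) * ε|MeasurableSpace.comap T inferInstance]
        =ᵐ[P] 0 := by
      refine (condExp_mul_of_stronglyMeasurable_left hψm hint2 hεint).trans ?_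
      filter_upwards [hεcond] with ω hω
      have h0 : (P[ε|MeasurableSpace.comap T inferInstance]) ω = 0 := by simpa using hω
      simp [h0]
    rw [h1, ← integral_condExp hm (f := (fun ω => φ (T ω) j) * ε),
      integral_congr_ae hcnd]
    simp
  funext j
  simpa using key j

section DRSMD

/-- Tuple type for one observation. -/
abbrev ObsTup (p qX qz : ℕ) : Type :=
  ℝ × (Fin p → ℝ) × (Fin qX → ℝ) × (Fin qz → ℝ)

/-- The error as a function of the observation tuple. -/
def eFun {p qX qz : ℕ} (θ₀ : Fin p → ℝ) (f : (Fin qX → ℝ) → ℝ)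
    (w : ObsTup p qX qz) : ℝ :=
  w.1 - w.2.1 ⬝ᵥ θ₀ - f w.2.2.1

/-- The centered regressor as a function of the observation tuple. -/
def ptFun {p qX qz : ℕ} (gP : (Fin qX → ℝ) → Fin p → ℝ)
    (w : ObsTup p qX qz) : Fin p → ℝ :=
  w.2.1 - gP w.2.2.1

/-- The symmetrized kernel as a function of the pair of tuples. -/
def FFun {p qX qz : ℕ} (k : (Fin qz → ℝ) → ℝ) (θ₀ : Fin p → ℝ)
    (f : (Fin qX → ℝ) → ℝ) (gP : (Fin qX → ℝ) → Fin p → ℝ)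
    (H : (Fin qX → ℝ) → Fin p → ℝ)
    (q : ObsTup p qX qz × ObsTup p qX qz) : Fin p → ℝ :=
  (k (q.1.2.2.2 - q.2.2.2.2) * eFun θ₀ f q.2) • (ptFun gP q.1 - H q.2.2.2.1)
    + (k (q.2.2.2.2 - q.1.2.2.2) * eFun θ₀ f q.1) • (ptFun gP q.2 - H q.1.2.2.1)

end DRSMD

/-- Hoeffding projection of the D-RSMD kernel: almost surely,
`E[h(D₁; D₂) | σ(D₁)] = ε₁ · G(Z₁, X₁)` where `G(z,x) = E[k(Z − z)(P̃ − H(x))]`. -/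
theorem drsmd_kernel_hoeffding_projection
    {Ω : Type*} [MeasurableSpace Ω] (P : Measure Ω) [IsProbabilityMeasure P]
    {p qX qz : ℕ}
    (μ : Measure (Fin qz → ℝ)) [IsFiniteMeasure μ]
    (hμsymm : μ.map (fun t => -t) = μ)
    (k : (Fin qz → ℝ) → ℝ)
    (hk : ∀ u, (k u : ℂ) = ∫ t, Complex.exp (Complex.I * ((t ⬝ᵥ u : ℝ) : ℂ)) ∂μ)
    (θ₀ : Fin p → ℝ) (f : (Fin qX → ℝ) → ℝ) (hfmeas : Measurable f)
    (y : Fin 2 → Ω → ℝ) (Pv : Fin 2 → Ω → Fin p → ℝ)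
    (X : Fin 2 → Ω → Fin qX → ℝ) (Z : Fin 2 → Ω → Fin qz → ℝ)
    (ε : Fin 2 → Ω → ℝ)
    (hymeas : ∀ i, Measurable (y i)) (hPmeas : ∀ i, Measurable (Pv i))
    (hXmeas : ∀ i, Measurable (X i)) (hZmeas : ∀ i, Measurable (Z i))
    (hyL2 : ∀ i, MemLp (y i) 2 P) (hPL2 : ∀ i, MemLp (Pv i) 2 P)
    (hXL2 : ∀ i, MemLp (X i) 2 P) (hZL2 : ∀ i, MemLp (Z i) 2 P)
    (hεint : ∀ i, Integrable (ε i) P)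
    (hmodel : ∀ i ω, y i ω = Pv i ω ⬝ᵥ θ₀ + f (X i ω) + ε i ω)
    (hεcond : ∀ i, P[ε i | MeasurableSpace.comap (fun ω => (X i ω, Z i ω)) inferInstance]
        =ᵐ[P] 0)
    (hindep : IndepFun (fun ω => (y 0 ω, Pv 0 ω, X 0 ω, Z 0 ω))
        (fun ω => (y 1 ω, Pv 1 ω, X 1 ω, Z 1 ω)) P)
    (hident : IdentDistrib (fun ω => (y 0 ω, Pv 0 ω, X 0 ω, Z 0 ω))
        (fun ω => (y 1 ω, Pv 1 ω, X 1 ω, Z 1 ω)) P P)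
    (gy : (Fin qX → ℝ) → ℝ) (gP : (Fin qX → ℝ) → Fin p → ℝ)
    (hgymeas : Measurable gy) (hgPmeas : Measurable gP)
    (hgy : ∀ i, (fun ω => gy (X i ω))
        =ᵐ[P] P[y i | MeasurableSpace.comap (X i) inferInstance])
    (hgP : ∀ i, (fun ω => gP (X i ω))
        =ᵐ[P] P[Pv i | MeasurableSpace.comap (X i) inferInstance])
    (ytil : Fin 2 → Ω → ℝ) (Ptil : Fin 2 → Ω → Fin p → ℝ)
    (hytil : ∀ i ω, ytil i ω = y i ω - gy (X i ω))
    (hPtil : ∀ i ω, Ptil i ω = Pv i ω - gP (X i ω))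
    (a : (Fin qX → ℝ) → Fin p → ℝ) (c : (Fin qX → ℝ) → ℝ)
    (hameas : Measurable a) (hcmeas : Measurable c)
    (ha : ∀ i j, i ≠ j → (fun ω => a (X j ω)) =ᵐ[P]
        P[(fun ω => k (Z i ω - Z j ω) • Ptil i ω) |
          MeasurableSpace.comap (X j) inferInstance])
    (hc : ∀ i j, i ≠ j → (fun ω => c (X j ω)) =ᵐ[P]
        P[(fun ω => k (Z i ω - Z j ω)) | MeasurableSpace.comap (X j) inferInstance])
    (hcne : ∀ i, ∀ᵐ ω ∂P, c (X i ω) ≠ 0)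
    (H : (Fin qX → ℝ) → Fin p → ℝ) (hH : ∀ x, H x = (c x)⁻¹ • a x)
    (hHbdd : ∃ C, ∀ x, ‖H x‖ ≤ C)
    (h : Ω → Fin p → ℝ)
    (hh : ∀ ω, h ω = (k (Z 0 ω - Z 1 ω) * ε 1 ω) • Ptil 0 ω
        + (k (Z 1 ω - Z 0 ω) * ε 0 ω) • Ptil 1 ω
        - (k (Z 0 ω - Z 1 ω) * ε 1 ω) • H (X 1 ω)
        - (k (Z 1 ω - Z 0 ω) * ε 0 ω) • H (X 0 ω))
    (G : (Fin qz → ℝ) → (Fin qX → ℝ) → Fin p → ℝ)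
    (hG : ∀ z x, G z x = ∫ ω, k (Z 1 ω - z) • (Ptil 1 ω - H x) ∂P)
 :
    P[h | MeasurableSpace.comap (fun ω => (y 0 ω, Pv 0 ω, X 0 ω, Z 0 ω)) inferInstance]
      =ᵐ[P] fun ω => ε 0 ω • G (Z 0 ω) (X 0 ω) := by
  classical
  obtain ⟨CH, hCH⟩ := hHbdd
  have hCH0 : 0 ≤ CH := le_trans (norm_nonneg _) (hCH (fun _ => 0))
  set Ck := (μ Set.univ).toReal with hCk_def
  have hCk0 : 0 ≤ Ck := ENNReal.toReal_nonneg
  -- measurability of the dot product with θ₀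
  have hdot : Measurable fun v : Fin p → ℝ => v ⬝ᵥ θ₀ := by
    simp only [dotProduct]
    exact Finset.measurable_sum _ fun i _ => (measurable_pi_apply i).mul_const _
  -- measurability and boundedness of k
  have hKsm : StronglyMeasurable fun u : Fin qz → ℝ =>
      ∫ t, Complex.exp (Complex.I * ((t ⬝ᵥ u : ℝ) : ℂ)) ∂μ := by
    apply StronglyMeasurable.integral_prod_right'
      (f := fun q : (Fin qz → ℝ) × (Fin qz → ℝ) =>
        Complex.exp (Complex.I * ((q.2 ⬝ᵥ q.1 : ℝ) : ℂ)))
    apply Continuous.stronglyMeasurable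
    have hcont : Continuous fun q : (Fin qz → ℝ) × (Fin qz → ℝ) => (q.2 ⬝ᵥ q.1 : ℝ) := by
      simp only [dotProduct]
      exact continuous_finset_sum _ fun i _ =>
        ((continuous_apply i).comp continuous_snd).mul ((continuous_apply i).comp continuous_fst)
    exact Complex.continuous_exp.comp (continuous_const.mul
      (Complex.continuous_ofReal.comp hcont))
  have hkmeas : Measurable k := by
    have hkeq : k = fun u => (∫ t, Complex.exp (Complex.I * ((t ⬝ᵥ u : ℝ) : ℂ)) ∂μ).re := by
      funext u
      rw [← hk u]
      simp
    rw [hkeq]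
    exact Complex.measurable_re.comp hKsm.measurable
  have hkb : ∀ u, |k u| ≤ Ck := by
    intro u
    have h1 : |k u| = ‖((k u : ℝ) : ℂ)‖ := by rw [Complex.norm_real, Real.norm_eq_abs]
    rw [h1, hk u]
    have h2 := norm_integral_le_of_norm_le_const (μ := μ)
      (f := fun t => Complex.exp (Complex.I * ((t ⬝ᵥ u : ℝ) : ℂ))) (C := 1)
      (Filter.Eventually.of_forall fun t => by
        simp [Complex.norm_exp_I_mul_ofReal])
    simpa [hCk_def, measureReal_def] using h2
  -- measurability of H, ε, Ptil
  have hHmeas : Measurable H := by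
    have : H = fun x => (c x)⁻¹ • a x := funext hH
    rw [this]
    exact (hcmeas.inv).smul hameas
  have hεmeas : ∀ i, Measurable (ε i) := by
    intro i
    have he : ε i = fun ω => y i ω - Pv i ω ⬝ᵥ θ₀ - f (X i ω) := by
      funext ω
      rw [hmodel i ω]
      ring
    rw [he]
    exact ((hymeas i).sub (hdot.comp (hPmeas i))).sub (hfmeas.comp (hXmeas i))
  have hgPint : ∀ i, Integrable (fun ω => gP (X i ω)) P :=
    fun i => integrable_condExp.congr (hgP i).symm
  have hPtileq : ∀ i, Ptil i = fun ω => Pv i ω - gP (X i ω) := fun i => funext (hPtil i)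
  have hPtilmeas : ∀ i, Measurable (Ptil i) := by
    intro i
    rw [hPtileq i]
    exact (hPmeas i).sub (hgPmeas.comp (hXmeas i))
  have hPtilint : ∀ i, Integrable (Ptil i) P := by
    intro i
    rw [hPtileq i]
    exact ((hPL2 i).integrable (by norm_num)).sub (hgPint i)
  -- tuple maps
  set W : Ω → ObsTup p qX qz := fun ω => (y 0 ω, Pv 0 ω, X 0 ω, Z 0 ω) with hW_def
  set V : Ω → ObsTup p qX qz := fun ω => (y 1 ω, Pv 1 ω, X 1 ω, Z 1 ω) with hV_def
  have hWmeas : Measurable W :=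
    (hymeas 0).prodMk ((hPmeas 0).prodMk ((hXmeas 0).prodMk (hZmeas 0)))
  have hVmeas : Measurable V :=
    (hymeas 1).prodMk ((hPmeas 1).prodMk ((hXmeas 1).prodMk (hZmeas 1)))
  have heW : ∀ i ω, eFun θ₀ f (y i ω, Pv i ω, X i ω, Z i ω) = ε i ω := by
    intro i ω
    simp only [eFun]
    rw [hmodel i ω]
    ring
  have hptW : ∀ i ω, ptFun gP (y i ω, Pv i ω, X i ω, Z i ω) = Ptil i ω := by
    intro i ω
    simp only [ptFun]
    rw [hPtil i ω]
  -- h as a function of the pair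
  have hF_h : h = fun ω => FFun k θ₀ f gP H (W ω, V ω) := by
    funext ω
    rw [hh ω]
    simp only [hW_def, hV_def, FFun]
    rw [heW 0 ω, heW 1 ω, hptW 0 ω, hptW 1 ω]
    simp only [smul_sub]
    abel
  -- strong measurability of FFun
  have hwy : Measurable fun w : ObsTup p qX qz => w.1 := measurable_fst
  have hwP : Measurable fun w : ObsTup p qX qz => w.2.1 := measurable_fst.comp measurable_snd
  have hwX : Measurable fun w : ObsTup p qX qz => w.2.2.1 :=
    measurable_fst.comp (measurable_snd.comp measurable_snd)
  have hwZ : Measurable fun w : ObsTup p qX qz => w.2.2.2 :=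
    measurable_snd.comp (measurable_snd.comp measurable_snd)
  have hemeas : Measurable (eFun θ₀ f (p := p) (qX := qX) (qz := qz)) :=
    (hwy.sub (hdot.comp hwP)).sub (hfmeas.comp hwX)
  have hptmeas : Measurable (ptFun gP (p := p) (qX := qX) (qz := qz)) :=
    hwP.sub (hgPmeas.comp hwX)
  have hFsm : StronglyMeasurable (FFun k θ₀ f gP H (p := p) (qX := qX) (qz := qz)) := by
    apply StronglyMeasurable.add
    · exact (((hkmeas.comp ((hwZ.comp measurable_fst).sub
        (hwZ.comp measurable_snd))).mul (hemeas.comp measurable_snd)).stronglyMeasurable).smul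
        (((hptmeas.comp measurable_fst).sub
          (hHmeas.comp (hwX.comp measurable_snd))).stronglyMeasurable)
    · exact (((hkmeas.comp ((hwZ.comp measurable_snd).sub
        (hwZ.comp measurable_fst))).mul (hemeas.comp measurable_fst)).stronglyMeasurable).smul
        (((hptmeas.comp measurable_snd).sub
          (hHmeas.comp (hwX.comp measurable_fst))).stronglyMeasurable)
  -- pointwise bound on FFun
  have hFbound : ∀ q : ObsTup p qX qz × ObsTup p qX qz,
      ‖FFun k θ₀ f gP H q‖ ≤ Ck * ((‖ptFun gP q.1‖ + CH) * |eFun θ₀ f q.2|)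
        + Ck * ((‖ptFun gP q.2‖ + CH) * |eFun θ₀ f q.1|) := by
    intro q
    have key : ∀ (u v : Fin qz → ℝ) (w₁ w₂ : ObsTup p qX qz) (x : Fin qX → ℝ),
        ‖(k (u - v) * eFun θ₀ f w₂) • (ptFun gP w₁ - H x)‖
          ≤ Ck * ((‖ptFun gP w₁‖ + CH) * |eFun θ₀ f w₂|) := by
      intro u v w₁ w₂ x
      rw [norm_smul]
      have h1 : ‖k (u - v) * eFun θ₀ f w₂‖ ≤ Ck * |eFun θ₀ f w₂| := by
        rw [Real.norm_eq_abs, abs_mul]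
        exact mul_le_mul_of_nonneg_right (hkb _) (abs_nonneg _)
      have h2 : ‖ptFun gP w₁ - H x‖ ≤ ‖ptFun gP w₁‖ + CH :=
        (norm_sub_le _ _).trans (add_le_add le_rfl (hCH _))
      calc ‖k (u - v) * eFun θ₀ f w₂‖ * ‖ptFun gP w₁ - H x‖
          ≤ (Ck * |eFun θ₀ f w₂|) * (‖ptFun gP w₁‖ + CH) :=
            mul_le_mul h1 h2 (norm_nonneg _) (by positivity)
        _ = Ck * ((‖ptFun gP w₁‖ + CH) * |eFun θ₀ f w₂|) := by ring
    exact (norm_add_le _ _).trans (add_le_add (key _ _ _ _ _) (key _ _ _ _ _))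
  -- integrability of h
  have hiW1 : Integrable (fun ω => ‖ptFun gP (W ω)‖ + CH) P := by
    have : (fun ω => ‖ptFun gP (W ω)‖ + CH) = fun ω => ‖Ptil 0 ω‖ + CH := by
      funext ω
      simp only [hW_def]
      rw [hptW 0 ω]
    rw [this]
    exact (hPtilint 0).norm.add (integrable_const CH)
  have hiV1 : Integrable (fun ω => |eFun θ₀ f (V ω)|) P := by
    have : (fun ω => |eFun θ₀ f (V ω)|) = fun ω => |ε 1 ω| := by
      funext ω
      simp only [hV_def]
      rw [heW 1 ω]
    rw [this]
    exact (hεint 1).abs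
  have hiV2 : Integrable (fun ω => ‖ptFun gP (V ω)‖ + CH) P := by
    have : (fun ω => ‖ptFun gP (V ω)‖ + CH) = fun ω => ‖Ptil 1 ω‖ + CH := by
      funext ω
      simp only [hV_def]
      rw [hptW 1 ω]
    rw [this]
    exact (hPtilint 1).norm.add (integrable_const CH)
  have hiW2 : Integrable (fun ω => |eFun θ₀ f (W ω)|) P := by
    have : (fun ω => |eFun θ₀ f (W ω)|) = fun ω => |ε 0 ω| := by
      funext ω
      simp only [hW_def]
      rw [heW 0 ω]
    rw [this]
    exact (hεint 0).abs
  have hb1 : Integrable (fun ω => (‖ptFun gP (W ω)‖ + CH) * |eFun θ₀ f (V ω)|) P := by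
    have hind : IndepFun (fun ω => ‖ptFun gP (W ω)‖ + CH)
        (fun ω => |eFun θ₀ f (V ω)|) P :=
      hindep.comp (hptmeas.norm.add measurable_const) hemeas.abs
    exact hind.integrable_mul hiW1 hiV1
  have hb2 : Integrable (fun ω => |eFun θ₀ f (W ω)| * (‖ptFun gP (V ω)‖ + CH)) P := by
    have hind : IndepFun (fun ω => |eFun θ₀ f (W ω)|)
        (fun ω => ‖ptFun gP (V ω)‖ + CH) P :=
      hindep.comp hemeas.abs (hptmeas.norm.add measurable_const)
    exact hind.integrable_mul hiW2 hiV2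
  have hhint : Integrable (fun ω => FFun k θ₀ f gP H (W ω, V ω)) P := by
    refine Integrable.mono' ((hb1.const_mul Ck).add (hb2.const_mul Ck)) ?_ ?_
    · exact (hFsm.comp_measurable (hWmeas.prodMk hVmeas)).aestronglyMeasurable
    · refine Filter.Eventually.of_forall fun ω => ?_
      refine (hFbound (W ω, V ω)).trans (le_of_eq ?_)
      simp only [Pi.add_apply]
      ring
  -- apply the freeze lemma
  have hfreeze := aux_condexp_indepFun_integral P hWmeas hVmeas hindep hFsm hhint
  rw [hF_h]
  refine hfreeze.trans (Filter.Eventually.of_forall fun ω => ?_)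
  -- compute the integral for fixed ω
  show ∫ ω', FFun k θ₀ f gP H (W ω, V ω') ∂P = ε 0 ω • G (Z 0 ω) (X 0 ω)
  have hsplit : (fun ω' => FFun k θ₀ f gP H (W ω, V ω'))
      = fun ω' => (k (Z 0 ω - Z 1 ω') * ε 1 ω') • (Ptil 0 ω - H (X 1 ω'))
          + (k (Z 1 ω' - Z 0 ω) * ε 0 ω) • (Ptil 1 ω' - H (X 0 ω)) := by
    funext ω'
    simp only [hW_def, hV_def, FFun]
    rw [heW 0 ω, heW 1 ω', hptW 0 ω, hptW 1 ω']
  have hif₁ : Integrable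
      (fun ω' => (k (Z 0 ω - Z 1 ω') * ε 1 ω') • (Ptil 0 ω - H (X 1 ω'))) P := by
    refine Integrable.mono' (((hεint 1).abs.const_mul (Ck * (‖Ptil 0 ω‖ + CH)))) ?_ ?_
    · exact (((hkmeas.comp (measurable_const.sub (hZmeas 1))).mul
        (hεmeas 1)).stronglyMeasurable.smul
        ((measurable_const.sub (hHmeas.comp (hXmeas 1))).stronglyMeasurable)).aestronglyMeasurable
    · refine Filter.Eventually.of_forall fun ω' => ?_
      rw [norm_smul, Real.norm_eq_abs, abs_mul]
      have h1 : |k (Z 0 ω - Z 1 ω')| * |ε 1 ω'| ≤ Ck * |ε 1 ω'| :=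
        mul_le_mul_of_nonneg_right (hkb _) (abs_nonneg _)
      have h2 : ‖Ptil 0 ω - H (X 1 ω')‖ ≤ ‖Ptil 0 ω‖ + CH :=
        (norm_sub_le _ _).trans (add_le_add le_rfl (hCH _))
      calc |k (Z 0 ω - Z 1 ω')| * |ε 1 ω'| * ‖Ptil 0 ω - H (X 1 ω')‖
          ≤ (Ck * |ε 1 ω'|) * (‖Ptil 0 ω‖ + CH) :=
            mul_le_mul h1 h2 (norm_nonneg _) (by positivity)
        _ = Ck * (‖Ptil 0 ω‖ + CH) * |ε 1 ω'| := by ring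
  have hif₂ : Integrable
      (fun ω' => (k (Z 1 ω' - Z 0 ω) * ε 0 ω) • (Ptil 1 ω' - H (X 0 ω))) P := by
    refine Integrable.mono'
      ((((hPtilint 1).norm.add (integrable_const CH)).const_mul (Ck * |ε 0 ω|))) ?_ ?_
    · exact (((hkmeas.comp ((hZmeas 1).sub measurable_const)).mul
        measurable_const).stronglyMeasurable.smul
        (((hPtilmeas 1).sub measurable_const).stronglyMeasurable)).aestronglyMeasurable
    · refine Filter.Eventually.of_forall fun ω' => ?_
      rw [norm_smul, Real.norm_eq_abs, abs_mul]
      have h1 : |k (Z 1 ω' - Z 0 ω)| * |ε 0 ω| ≤ Ck * |ε 0 ω| :=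
        mul_le_mul_of_nonneg_right (hkb _) (abs_nonneg _)
      have h2 : ‖Ptil 1 ω' - H (X 0 ω)‖ ≤ ‖Ptil 1 ω'‖ + CH :=
        (norm_sub_le _ _).trans (add_le_add le_rfl (hCH _))
      calc |k (Z 1 ω' - Z 0 ω)| * |ε 0 ω| * ‖Ptil 1 ω' - H (X 0 ω)‖
          ≤ (Ck * |ε 0 ω|) * (‖Ptil 1 ω'‖ + CH) :=
            mul_le_mul h1 h2 (norm_nonneg _) (by positivity)
        _ = Ck * |ε 0 ω| * (‖Ptil 1 ω'‖ + CH) := by ring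
  rw [hsplit, integral_add hif₁ hif₂]
  have h10 : ∫ ω', (k (Z 0 ω - Z 1 ω') * ε 1 ω') • (Ptil 0 ω - H (X 1 ω')) ∂P = 0 := by
    have horth := aux_orth_s11 P ((hXmeas 1).prodMk (hZmeas 1)) (hεint 1) (hεcond 1)
      (φ := fun u : (Fin qX → ℝ) × (Fin qz → ℝ) =>
        k (Z 0 ω - u.2) • (Ptil 0 ω - H u.1))
      (hφ := ((hkmeas.comp (measurable_const.sub measurable_snd)).smul
        (measurable_const.sub (hHmeas.comp measurable_fst))))
      (C := Ck * (‖Ptil 0 ω‖ + CH))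
      (hφb := fun u => by
        rw [norm_smul, Real.norm_eq_abs]
        have h2 : ‖Ptil 0 ω - H u.1‖ ≤ ‖Ptil 0 ω‖ + CH :=
          (norm_sub_le _ _).trans (add_le_add le_rfl (hCH _))
        exact mul_le_mul (hkb _) h2 (norm_nonneg _) hCk0)
    rw [← horth]
    congr 1
    funext ω'
    show (k (Z 0 ω - Z 1 ω') * ε 1 ω') • (Ptil 0 ω - H (X 1 ω'))
      = ε 1 ω' • k (Z 0 ω - Z 1 ω') • (Ptil 0 ω - H (X 1 ω'))
    rw [← mul_smul, mul_comm]
  have h2G : ∫ ω', (k (Z 1 ω' - Z 0 ω) * ε 0 ω) • (Ptil 1 ω' - H (X 0 ω)) ∂P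
      = ε 0 ω • G (Z 0 ω) (X 0 ω) := by
    have hrw : (fun ω' => (k (Z 1 ω' - Z 0 ω) * ε 0 ω) • (Ptil 1 ω' - H (X 0 ω)))
        = fun ω' => ε 0 ω • (k (Z 1 ω' - Z 0 ω) • (Ptil 1 ω' - H (X 0 ω))) := by
      funext ω'
      rw [← mul_smul, mul_comm]
    rw [hrw, integral_smul, hG]
  rw [h10, h2G, zero_add]
end

section
/- Let D₁ and D₂ be two independent observations with the common distribution in the partially linear model, with ε square-integrable. Define the ℝ^p-valued random vector h₁ := ∫_{ℝ^{q_z}} exp(−i⟨t, Z₁⟩) · ε₁ · (E[P̃₂ exp(i⟨t, Z₂⟩)] − H(X₁) · E[exp(i⟨t, Z₂⟩)]) dμ(t). Then h₁ = ε₁ · G(Z₁, X₁) almost surely (in particular h₁ is real-valued), E[h₁] = 0, and the covariance matrix of h₁ equals E[ε₁² · G(Z₁, X₁) G(Z₁, X₁)ᵀ], where G(z, x) := E[k(Z − z)(P̃ − H(x))] ∈ ℝ^p with the expectation over one observation (the variance representation used for the heteroskedasticity-robust variance estimator). -/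
open MeasureTheory ProbabilityTheory Filter Topology Complex Matrix NNReal ENNReal

/-- Variance representation of the Hoeffding projection: the complex-valued vector
`h₁ = ∫ exp(−i⟨t,Z₁⟩) ε₁ (E[P̃₂ exp(i⟨t,Z₂⟩)] − H(X₁) E[exp(i⟨t,Z₂⟩)]) dμ(t)` satisfies
`h₁ = ε₁ G(Z₁,X₁)` a.s. (in particular it is real-valued), `E[h₁] = 0`, and its covariance
matrix is `E[ε₁² G(Z₁,X₁) G(Z₁,X₁)ᵀ]`. -/
theorem drsmd_projection_variance_representation
    {Ω : Type*} [MeasurableSpace Ω] (P : Measure Ω) [IsProbabilityMeasure P]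
    {p qX qz : ℕ}
    (μ : Measure (Fin qz → ℝ)) [IsFiniteMeasure μ]
    (hμsymm : μ.map (fun t => -t) = μ)
    (k : (Fin qz → ℝ) → ℝ)
    (hk : ∀ u, (k u : ℂ) = ∫ t, Complex.exp (Complex.I * ((t ⬝ᵥ u : ℝ) : ℂ)) ∂μ)
    (θ₀ : Fin p → ℝ) (f : (Fin qX → ℝ) → ℝ) (hfmeas : Measurable f)
    (y : Fin 2 → Ω → ℝ) (Pv : Fin 2 → Ω → Fin p → ℝ)
    (X : Fin 2 → Ω → Fin qX → ℝ) (Z : Fin 2 → Ω → Fin qz → ℝ)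
    (ε : Fin 2 → Ω → ℝ)
    (hymeas : ∀ i, Measurable (y i)) (hPmeas : ∀ i, Measurable (Pv i))
    (hXmeas : ∀ i, Measurable (X i)) (hZmeas : ∀ i, Measurable (Z i))
    (hyL2 : ∀ i, MemLp (y i) 2 P) (hPL2 : ∀ i, MemLp (Pv i) 2 P)
    (hXL2 : ∀ i, MemLp (X i) 2 P) (hZL2 : ∀ i, MemLp (Z i) 2 P)
    (hεint : ∀ i, Integrable (ε i) P)
    (hmodel : ∀ i ω, y i ω = Pv i ω ⬝ᵥ θ₀ + f (X i ω) + ε i ω)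
    (hεcond : ∀ i, P[ε i | MeasurableSpace.comap (fun ω => (X i ω, Z i ω)) inferInstance]
        =ᵐ[P] 0)
    (hindep : IndepFun (fun ω => (y 0 ω, Pv 0 ω, X 0 ω, Z 0 ω))
        (fun ω => (y 1 ω, Pv 1 ω, X 1 ω, Z 1 ω)) P)
    (hident : IdentDistrib (fun ω => (y 0 ω, Pv 0 ω, X 0 ω, Z 0 ω))
        (fun ω => (y 1 ω, Pv 1 ω, X 1 ω, Z 1 ω)) P P)
    (gy : (Fin qX → ℝ) → ℝ) (gP : (Fin qX → ℝ) → Fin p → ℝ)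
    (hgymeas : Measurable gy) (hgPmeas : Measurable gP)
    (hgy : ∀ i, (fun ω => gy (X i ω))
        =ᵐ[P] P[y i | MeasurableSpace.comap (X i) inferInstance])
    (hgP : ∀ i, (fun ω => gP (X i ω))
        =ᵐ[P] P[Pv i | MeasurableSpace.comap (X i) inferInstance])
    (ytil : Fin 2 → Ω → ℝ) (Ptil : Fin 2 → Ω → Fin p → ℝ)
    (hytil : ∀ i ω, ytil i ω = y i ω - gy (X i ω))
    (hPtil : ∀ i ω, Ptil i ω = Pv i ω - gP (X i ω))
    (a : (Fin qX → ℝ) → Fin p → ℝ) (c : (Fin qX → ℝ) → ℝ)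
    (hameas : Measurable a) (hcmeas : Measurable c)
    (ha : ∀ i j, i ≠ j → (fun ω => a (X j ω)) =ᵐ[P]
        P[(fun ω => k (Z i ω - Z j ω) • Ptil i ω) |
          MeasurableSpace.comap (X j) inferInstance])
    (hc : ∀ i j, i ≠ j → (fun ω => c (X j ω)) =ᵐ[P]
        P[(fun ω => k (Z i ω - Z j ω)) | MeasurableSpace.comap (X j) inferInstance])
    (hcne : ∀ i, ∀ᵐ ω ∂P, c (X i ω) ≠ 0)
    (H : (Fin qX → ℝ) → Fin p → ℝ) (hH : ∀ x, H x = (c x)⁻¹ • a x)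
    (hHbdd : ∃ C, ∀ x, ‖H x‖ ≤ C)
    (G : (Fin qz → ℝ) → (Fin qX → ℝ) → Fin p → ℝ)
    (hG : ∀ z x, G z x = ∫ ω, k (Z 1 ω - z) • (Ptil 1 ω - H x) ∂P)
    (hεL2 : ∀ i, MemLp (ε i) 2 P)
    (h1 : Ω → Fin p → ℂ)
    (hh1 : ∀ ω i, h1 ω i =
        ∫ t, Complex.exp (-(Complex.I * ((t ⬝ᵥ Z 0 ω : ℝ) : ℂ))) * (ε 0 ω : ℂ) *
          ((∫ ω', ((Ptil 1 ω' i : ℝ) : ℂ) *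
              Complex.exp (Complex.I * ((t ⬝ᵥ Z 1 ω' : ℝ) : ℂ)) ∂P)
            - ((H (X 0 ω) i : ℝ) : ℂ) *
              (∫ ω', Complex.exp (Complex.I * ((t ⬝ᵥ Z 1 ω' : ℝ) : ℂ)) ∂P)) ∂μ)
 :
    (∀ᵐ ω ∂P, ∀ i, h1 ω i = ((ε 0 ω * G (Z 0 ω) (X 0 ω) i : ℝ) : ℂ)) ∧
    (∀ i, ∫ ω, h1 ω i ∂P = 0) ∧
    (∀ i j, ∫ ω, h1 ω i * (starRingEnd ℂ) (h1 ω j) ∂P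
        = ((∫ ω, ε 0 ω ^ 2 * (G (Z 0 ω) (X 0 ω) i * G (Z 0 ω) (X 0 ω) j) ∂P : ℝ) : ℂ)) := by
  classical
  obtain ⟨C, hC⟩ := hHbdd
  set K : ℝ := (μ Set.univ).toReal with hKdef
  have hK0 : 0 ≤ K := ENNReal.toReal_nonneg
  have hnorm1 : ∀ r : ℝ, ‖Complex.exp (Complex.I * (r : ℂ))‖ = 1 := by
    intro r
    rw [Complex.norm_exp]
    simp
  have hnorm2 : ∀ r : ℝ, ‖Complex.exp (-(Complex.I * (r : ℂ)))‖ = 1 := by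
    intro r
    rw [Complex.norm_exp]
    simp
  have hdot1 : ∀ v : Fin qz → ℝ, Measurable (fun t : Fin qz → ℝ => t ⬝ᵥ v) := by
    intro v
    show Measurable fun t : Fin qz → ℝ => ∑ i, t i * v i
    exact Finset.measurable_sum _ fun i _ => (measurable_pi_apply i).mul measurable_const
  have hdot2 : ∀ t : Fin qz → ℝ, Measurable (fun ω' : Ω => t ⬝ᵥ Z 1 ω') := by
    intro t
    show Measurable fun ω' : Ω => ∑ i, t i * Z 1 ω' i
    exact Finset.measurable_sum _ fun i _ =>
      measurable_const.mul ((measurable_pi_apply i).comp (hZmeas 1))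
  have hdotZ1 : Measurable fun q : Ω × (Fin qz → ℝ) => q.2 ⬝ᵥ Z 1 q.1 := by
    show Measurable fun q : Ω × (Fin qz → ℝ) => ∑ i, q.2 i * Z 1 q.1 i
    exact Finset.measurable_sum _ fun i _ =>
      ((measurable_pi_apply i).comp measurable_snd).mul
        ((measurable_pi_apply i).comp ((hZmeas 1).comp measurable_fst))
  have hexpm : Measurable (fun s : ℝ => Complex.exp (Complex.I * (s : ℂ))) :=
    Complex.continuous_exp.measurable.comp
      (measurable_const.mul Complex.measurable_ofReal)
  have hexpm' : Measurable (fun s : ℝ => Complex.exp (-(Complex.I * (s : ℂ)))) :=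
    Complex.continuous_exp.measurable.comp
      ((measurable_const.mul Complex.measurable_ofReal).neg)
  -- k is measurable
  have kmeas : Measurable k := by
    have hd : Measurable fun q : (Fin qz → ℝ) × (Fin qz → ℝ) => q.2 ⬝ᵥ q.1 := by
      show Measurable fun q : (Fin qz → ℝ) × (Fin qz → ℝ) => ∑ i, q.2 i * q.1 i
      exact Finset.measurable_sum _ fun i _ =>
        ((measurable_pi_apply i).comp measurable_snd).mul
          ((measurable_pi_apply i).comp measurable_fst)
    have hfsm : StronglyMeasurable (fun q : (Fin qz → ℝ) × (Fin qz → ℝ) =>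
        Complex.exp (Complex.I * ((q.2 ⬝ᵥ q.1 : ℝ) : ℂ))) :=
      (hexpm.comp hd).stronglyMeasurable
    have h1 : StronglyMeasurable fun u : Fin qz → ℝ =>
        ∫ t, Complex.exp (Complex.I * ((t ⬝ᵥ u : ℝ) : ℂ)) ∂μ :=
      hfsm.integral_prod_right'
    have h2 : k = fun u => (∫ t, Complex.exp (Complex.I * ((t ⬝ᵥ u : ℝ) : ℂ)) ∂μ).re := by
      funext u; rw [← hk u, Complex.ofReal_re]
    rw [h2]
    exact Complex.measurable_re.comp h1.measurable
  have Hmeas : Measurable H := by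
    rw [measurable_pi_iff]
    intro i
    have heq : (fun x => H x i) = fun x => (c x)⁻¹ * a x i := by
      funext x; rw [hH x]; simp
    rw [heq]
    exact hcmeas.inv.mul ((measurable_pi_apply i).comp hameas)
  have ePtil : Ptil 1 = fun ω => Pv 1 ω - gP (X 1 ω) := funext (hPtil 1)
  have Ptil1meas : Measurable (Ptil 1) := by
    rw [ePtil]; exact (hPmeas 1).sub (hgPmeas.comp (hXmeas 1))
  have Ptil1int : Integrable (Ptil 1) P := by
    rw [ePtil]
    exact ((hPL2 1).integrable one_le_two).sub (integrable_condExp.congr (hgP 1).symm)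
  have Ptil1measi : ∀ i : Fin p, Measurable fun ω => Ptil 1 ω i := fun i =>
    (measurable_pi_apply i).comp Ptil1meas
  have Ptil1inti : ∀ i : Fin p, Integrable (fun ω => Ptil 1 ω i) P := fun i =>
    (ContinuousLinearMap.proj (R := ℝ) (φ := fun _ : Fin p => ℝ) i).integrable_comp Ptil1int
  have hkb : ∀ u, |k u| ≤ K := by
    intro u
    have h1 : ‖(k u : ℂ)‖ ≤ K := by
      rw [hk u]
      refine (norm_integral_le_integral_norm _).trans ?_
      have heq : (fun t => ‖Complex.exp (Complex.I * ((t ⬝ᵥ u : ℝ) : ℂ))‖) = fun _ => (1 : ℝ) := by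
        funext t; exact hnorm1 _
      rw [heq, integral_const, smul_eq_mul, mul_one]
      exact le_rfl
    simpa using h1
  -- the key Fubini computation
  have key : ∀ (z : Fin qz → ℝ) (w : Ω → ℝ), Measurable w → Integrable w P →
      (∫ t, Complex.exp (-(Complex.I * ((t ⬝ᵥ z : ℝ) : ℂ))) *
          (∫ ω', (w ω' : ℂ) * Complex.exp (Complex.I * ((t ⬝ᵥ Z 1 ω' : ℝ) : ℂ)) ∂P) ∂μ)
        = ((∫ ω', k (Z 1 ω' - z) * w ω' ∂P : ℝ) : ℂ) := by
    intro z w wmeas wint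
    set F : Ω → (Fin qz → ℝ) → ℂ := fun ω' t =>
      Complex.exp (-(Complex.I * ((t ⬝ᵥ z : ℝ) : ℂ))) *
        ((w ω' : ℂ) * Complex.exp (Complex.I * ((t ⬝ᵥ Z 1 ω' : ℝ) : ℂ))) with hF
    have Fmeas : Measurable (Function.uncurry F) := by
      refine Measurable.mul ?_ (Measurable.mul ?_ ?_)
      · exact hexpm'.comp ((hdot1 z).comp measurable_snd)
      · exact Complex.measurable_ofReal.comp (wmeas.comp measurable_fst)
      · exact hexpm.comp hdotZ1
    have Fnorm : ∀ (ω' : Ω) (t : Fin qz → ℝ), ‖F ω' t‖ = |w ω'| := by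
      intro ω' t
      simp only [hF]
      rw [norm_mul, norm_mul, hnorm1, hnorm2, Complex.norm_real, Real.norm_eq_abs]
      ring
    have Fint : Integrable (Function.uncurry F) (P.prod μ) := by
      rw [integrable_prod_iff Fmeas.aestronglyMeasurable]
      constructor
      · refine Filter.Eventually.of_forall fun ω' => ?_
        refine Integrable.mono' (integrable_const (|w ω'|)) ?_ ?_
        · exact (Fmeas.comp (measurable_prodMk_left)).aestronglyMeasurable
        · exact Filter.Eventually.of_forall fun t => le_of_eq (Fnorm ω' t)
      · have heq : (fun ω' => ∫ t, ‖Function.uncurry F (ω', t)‖ ∂μ) = fun ω' => K * |w ω'| := by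
          funext ω'
          have h2 : (fun t => ‖Function.uncurry F (ω', t)‖) = fun _ => |w ω'| :=
            funext fun t => Fnorm ω' t
          rw [h2, integral_const, smul_eq_mul]
          rfl
        rw [heq]
        exact (wint.abs).const_mul K
    calc
      (∫ t, Complex.exp (-(Complex.I * ((t ⬝ᵥ z : ℝ) : ℂ))) *
          (∫ ω', (w ω' : ℂ) * Complex.exp (Complex.I * ((t ⬝ᵥ Z 1 ω' : ℝ) : ℂ)) ∂P) ∂μ)
          = ∫ t, ∫ ω', F ω' t ∂P ∂μ := by
            refine integral_congr_ae (Filter.Eventually.of_forall fun t => ?_)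
            beta_reduce
            simp only [hF]
            rw [integral_const_mul]
      _ = ∫ ω', ∫ t, F ω' t ∂μ ∂P := (integral_integral_swap Fint).symm
      _ = ∫ ω', ((k (Z 1 ω' - z) * w ω' : ℝ) : ℂ) ∂P := by
            refine integral_congr_ae (Filter.Eventually.of_forall fun ω' => ?_)
            have h2 : (k (Z 1 ω' - z) : ℂ)
                = ∫ t, Complex.exp (-(Complex.I * ((t ⬝ᵥ z : ℝ) : ℂ))) *
                    Complex.exp (Complex.I * ((t ⬝ᵥ Z 1 ω' : ℝ) : ℂ)) ∂μ := by
              rw [hk (Z 1 ω' - z)]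
              refine integral_congr_ae (Filter.Eventually.of_forall fun t => ?_)
              beta_reduce
              have harg : Complex.I * ((t ⬝ᵥ (Z 1 ω' - z) : ℝ) : ℂ)
                  = -(Complex.I * ((t ⬝ᵥ z : ℝ) : ℂ)) + Complex.I * ((t ⬝ᵥ Z 1 ω' : ℝ) : ℂ) := by
                rw [dotProduct_sub]
                push_cast
                ring
              rw [harg, Complex.exp_add]
            calc ∫ t, F ω' t ∂μ
                = ∫ t, (w ω' : ℂ) * (Complex.exp (-(Complex.I * ((t ⬝ᵥ z : ℝ) : ℂ))) *
                    Complex.exp (Complex.I * ((t ⬝ᵥ Z 1 ω' : ℝ) : ℂ))) ∂μ := by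
                  refine integral_congr_ae (Filter.Eventually.of_forall fun t => ?_)
                  beta_reduce
                  simp only [hF]
                  ring
              _ = (w ω' : ℂ) * ∫ t, Complex.exp (-(Complex.I * ((t ⬝ᵥ z : ℝ) : ℂ))) *
                    Complex.exp (Complex.I * ((t ⬝ᵥ Z 1 ω' : ℝ) : ℂ)) ∂μ := integral_const_mul _ _
              _ = ((k (Z 1 ω' - z) * w ω' : ℝ) : ℂ) := by
                  rw [← h2]
                  push_cast
                  ring
      _ = ((∫ ω', k (Z 1 ω' - z) * w ω' ∂P : ℝ) : ℂ) := integral_ofReal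
  -- componentwise formula for G
  have Gsmul_int : ∀ (z : Fin qz → ℝ) (x : Fin qX → ℝ),
      Integrable (fun ω' => k (Z 1 ω' - z) • (Ptil 1 ω' - H x)) P := by
    intro z x
    refine Integrable.mono' ((Ptil1int.sub (integrable_const (H x))).norm.const_mul K) ?_ ?_
    · refine Measurable.aestronglyMeasurable ?_
      rw [measurable_pi_iff]
      intro i
      simp only [Pi.smul_apply, Pi.sub_apply, smul_eq_mul]
      exact (kmeas.comp ((hZmeas 1).sub measurable_const)).mul
        ((Ptil1measi i).sub measurable_const)
    · refine Filter.Eventually.of_forall fun ω' => ?_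
      rw [norm_smul, Real.norm_eq_abs]
      exact mul_le_mul_of_nonneg_right (hkb _) (norm_nonneg _)
  have Gcomp : ∀ (z : Fin qz → ℝ) (x : Fin qX → ℝ) (i : Fin p),
      G z x i = ∫ ω', k (Z 1 ω' - z) * (Ptil 1 ω' i - H x i) ∂P := by
    intro z x i
    rw [hG z x]
    have h := (ContinuousLinearMap.integral_comp_comm
      (ContinuousLinearMap.proj (R := ℝ) (φ := fun _ : Fin p => ℝ) i) (Gsmul_int z x)).symm
    calc (∫ ω', k (Z 1 ω' - z) • (Ptil 1 ω' - H x) ∂P) i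
        = ∫ ω', (k (Z 1 ω' - z) • (Ptil 1 ω' - H x)) i ∂P := h
      _ = ∫ ω', k (Z 1 ω' - z) * (Ptil 1 ω' i - H x i) ∂P := by
          refine integral_congr_ae (Filter.Eventually.of_forall fun ω' => ?_)
          simp
  -- pointwise identity
  have key1 : ∀ (ω : Ω) (i : Fin p),
      h1 ω i = ((ε 0 ω * G (Z 0 ω) (X 0 ω) i : ℝ) : ℂ) := by
    intro ω i
    set w : Ω → ℝ := fun ω' => Ptil 1 ω' i - H (X 0 ω) i with hw
    have wmeas : Measurable w := (Ptil1measi i).sub measurable_const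
    have wint : Integrable w P := (Ptil1inti i).sub (integrable_const _)
    have hsplit : ∀ t : Fin qz → ℝ,
        ((∫ ω', ((Ptil 1 ω' i : ℝ) : ℂ) *
            Complex.exp (Complex.I * ((t ⬝ᵥ Z 1 ω' : ℝ) : ℂ)) ∂P)
          - ((H (X 0 ω) i : ℝ) : ℂ) *
            ∫ ω', Complex.exp (Complex.I * ((t ⬝ᵥ Z 1 ω' : ℝ) : ℂ)) ∂P)
        = ∫ ω', (w ω' : ℂ) * Complex.exp (Complex.I * ((t ⬝ᵥ Z 1 ω' : ℝ) : ℂ)) ∂P := by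
      intro t
      have hB : Integrable (fun ω' => Complex.exp (Complex.I * ((t ⬝ᵥ Z 1 ω' : ℝ) : ℂ))) P := by
        refine Integrable.mono' (integrable_const (1 : ℝ)) ?_ ?_
        · exact (hexpm.comp (hdot2 t)).aestronglyMeasurable
        · exact Filter.Eventually.of_forall fun ω' => le_of_eq (hnorm1 _)
      have hA : Integrable (fun ω' => ((Ptil 1 ω' i : ℝ) : ℂ) *
          Complex.exp (Complex.I * ((t ⬝ᵥ Z 1 ω' : ℝ) : ℂ))) P := by
        refine Integrable.mono' ((Ptil1inti i).abs) ?_ ?_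
        · exact ((Complex.measurable_ofReal.comp (Ptil1measi i)).mul
            (hexpm.comp (hdot2 t))).aestronglyMeasurable
        · refine Filter.Eventually.of_forall fun ω' => ?_
          rw [norm_mul, hnorm1, mul_one, Complex.norm_real, Real.norm_eq_abs]
      rw [← integral_const_mul, ← integral_sub hA (hB.const_mul _)]
      refine integral_congr_ae (Filter.Eventually.of_forall fun ω' => ?_)
      beta_reduce
      simp only [hw]
      push_cast
      ring
    rw [hh1 ω i]
    calc (∫ t, Complex.exp (-(Complex.I * ((t ⬝ᵥ Z 0 ω : ℝ) : ℂ))) * (ε 0 ω : ℂ) *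
          ((∫ ω', ((Ptil 1 ω' i : ℝ) : ℂ) *
              Complex.exp (Complex.I * ((t ⬝ᵥ Z 1 ω' : ℝ) : ℂ)) ∂P)
            - ((H (X 0 ω) i : ℝ) : ℂ) *
              (∫ ω', Complex.exp (Complex.I * ((t ⬝ᵥ Z 1 ω' : ℝ) : ℂ)) ∂P)) ∂μ)
        = ∫ t, (ε 0 ω : ℂ) * (Complex.exp (-(Complex.I * ((t ⬝ᵥ Z 0 ω : ℝ) : ℂ))) *
            (∫ ω', (w ω' : ℂ) * Complex.exp (Complex.I * ((t ⬝ᵥ Z 1 ω' : ℝ) : ℂ)) ∂P)) ∂μ := by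
          refine integral_congr_ae (Filter.Eventually.of_forall fun t => ?_)
          beta_reduce
          rw [← hsplit t]
          ring
      _ = (ε 0 ω : ℂ) * ∫ t, Complex.exp (-(Complex.I * ((t ⬝ᵥ Z 0 ω : ℝ) : ℂ))) *
            (∫ ω', (w ω' : ℂ) * Complex.exp (Complex.I * ((t ⬝ᵥ Z 1 ω' : ℝ) : ℂ)) ∂P) ∂μ :=
          integral_const_mul _ _
      _ = (ε 0 ω : ℂ) * ((∫ ω', k (Z 1 ω' - Z 0 ω) * w ω' ∂P : ℝ) : ℂ) := by
          rw [key (Z 0 ω) w wmeas wint]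
      _ = ((ε 0 ω * G (Z 0 ω) (X 0 ω) i : ℝ) : ℂ) := by
          rw [Gcomp (Z 0 ω) (X 0 ω) i]
          simp only [hw]
          push_cast
          ring
  -- measurability of G as a function of (x, z)
  have hGmeas : ∀ i : Fin p,
      Measurable fun q : (Fin qX → ℝ) × (Fin qz → ℝ) => G q.2 q.1 i := by
    intro i
    have heq : (fun q : (Fin qX → ℝ) × (Fin qz → ℝ) => G q.2 q.1 i)
        = fun q => ∫ ω', k (Z 1 ω' - q.2) * (Ptil 1 ω' i - H q.1 i) ∂P :=
      funext fun q => Gcomp q.2 q.1 i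
    rw [heq]
    have hsm : StronglyMeasurable fun q : (Fin qX → ℝ) × (Fin qz → ℝ) =>
        ∫ ω', k (Z 1 ω' - q.2) * (Ptil 1 ω' i - H q.1 i) ∂P := by
      apply MeasureTheory.StronglyMeasurable.integral_prod_right'
        (f := fun r : ((Fin qX → ℝ) × (Fin qz → ℝ)) × Ω =>
          k (Z 1 r.2 - r.1.2) * (Ptil 1 r.2 i - H r.1.1 i))
      refine Measurable.stronglyMeasurable (Measurable.mul ?_ ?_)
      · exact kmeas.comp (((hZmeas 1).comp measurable_snd).sub
          (measurable_snd.comp measurable_fst))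
      · exact ((Ptil1measi i).comp measurable_snd).sub
          (((measurable_pi_apply i).comp Hmeas).comp (measurable_fst.comp measurable_fst))
    exact hsm.measurable
  -- uniform bound on G
  have hGbdd : ∀ i : Fin p, ∃ M : ℝ, ∀ (z : Fin qz → ℝ) (x : Fin qX → ℝ), |G z x i| ≤ M := by
    intro i
    refine ⟨K * ((∫ ω', |Ptil 1 ω' i| ∂P) + C), fun z x => ?_⟩
    rw [Gcomp z x i]
    have hptw : ∀ ω' : Ω, |k (Z 1 ω' - z) * (Ptil 1 ω' i - H x i)| ≤ K * (|Ptil 1 ω' i| + C) := by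
      intro ω'
      rw [abs_mul]
      have h1 : |Ptil 1 ω' i - H x i| ≤ |Ptil 1 ω' i| + C := by
        have h2 := norm_sub_le (Ptil 1 ω' i) (H x i)
        have h3 : |H x i| ≤ ‖H x‖ := by
          rw [← Real.norm_eq_abs]; exact norm_le_pi_norm (H x) i
        simp only [Real.norm_eq_abs] at h2
        linarith [hC x]
      exact mul_le_mul (hkb _) h1 (abs_nonneg _) hK0
    have hintnorm : Integrable (fun ω' => K * (|Ptil 1 ω' i| + C)) P :=
      (((Ptil1inti i).abs).add (integrable_const C)).const_mul K
    have hintf : Integrable (fun ω' => k (Z 1 ω' - z) * (Ptil 1 ω' i - H x i)) P := by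
      refine Integrable.mono' hintnorm ?_ ?_
      · exact ((kmeas.comp ((hZmeas 1).sub measurable_const)).mul
          ((Ptil1measi i).sub measurable_const)).aestronglyMeasurable
      · exact Filter.Eventually.of_forall fun ω' => by
          rw [Real.norm_eq_abs]; exact hptw ω'
    calc |∫ ω', k (Z 1 ω' - z) * (Ptil 1 ω' i - H x i) ∂P|
        ≤ ∫ ω', |k (Z 1 ω' - z) * (Ptil 1 ω' i - H x i)| ∂P := by
          simpa [Real.norm_eq_abs, abs_mul] using
            norm_integral_le_integral_norm (μ := P)
              (fun ω' => k (Z 1 ω' - z) * (Ptil 1 ω' i - H x i))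
      _ ≤ ∫ ω', K * (|Ptil 1 ω' i| + C) ∂P := integral_mono hintf.abs hintnorm hptw
      _ = K * ((∫ ω', |Ptil 1 ω' i| ∂P) + C) := by
          rw [integral_const_mul, integral_add ((Ptil1inti i).abs) (integrable_const C),
            integral_const]
          simp
  -- E[ε₀ G] = 0 via conditional expectation
  have part2 : ∀ i : Fin p, ∫ ω, ε 0 ω * G (Z 0 ω) (X 0 ω) i ∂P = 0 := by
    intro i
    have hm : MeasurableSpace.comap (fun ω => (X 0 ω, Z 0 ω)) inferInstance ≤ _ :=
      ((hXmeas 0).prodMk (hZmeas 0)).comap_le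
    set g : Ω → ℝ := fun ω => G (Z 0 ω) (X 0 ω) i with hg
    have hgm : Measurable[MeasurableSpace.comap (fun ω => (X 0 ω, Z 0 ω)) inferInstance] g := by
      have h0 : Measurable[MeasurableSpace.comap (fun ω => (X 0 ω, Z 0 ω)) inferInstance]
          (fun ω => (X 0 ω, Z 0 ω)) := Measurable.of_comap_le le_rfl
      exact (hGmeas i).comp h0
    obtain ⟨M, hM⟩ := hGbdd i
    have hgint : Integrable (g * ε 0) P := by
      refine Integrable.bdd_mul (hεint 0) ((hgm.mono hm le_rfl).aestronglyMeasurable)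
        (c := M) (Filter.Eventually.of_forall fun ω => ?_)
      rw [Real.norm_eq_abs]; exact hM _ _
    have hmul := condExp_mul_of_stronglyMeasurable_left (μ := P)
      (m := MeasurableSpace.comap (fun ω => (X 0 ω, Z 0 ω)) inferInstance)
      hgm.stronglyMeasurable hgint (hεint 0)
    calc ∫ ω, ε 0 ω * G (Z 0 ω) (X 0 ω) i ∂P
        = ∫ ω, (g * ε 0) ω ∂P := by
          refine integral_congr_ae (Filter.Eventually.of_forall fun ω => ?_)
          simp [hg, mul_comm]
      _ = ∫ ω, (P[g * ε 0|MeasurableSpace.comap (fun ω => (X 0 ω, Z 0 ω)) inferInstance]) ω ∂P :=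
          (integral_condExp hm).symm
      _ = 0 := by
          have h2 : (g * P[ε 0|MeasurableSpace.comap (fun ω => (X 0 ω, Z 0 ω)) inferInstance])
              =ᵐ[P] 0 := by
            filter_upwards [hεcond 0] with ω hω
            simp only [Pi.mul_apply]
            rw [hω]
            simp
          rw [integral_congr_ae (hmul.trans h2)]
          simp
  refine ⟨Filter.Eventually.of_forall fun ω i => key1 ω i, fun i => ?_, fun i j => ?_⟩
  · calc ∫ ω, h1 ω i ∂P
        = ∫ ω, ((ε 0 ω * G (Z 0 ω) (X 0 ω) i : ℝ) : ℂ) ∂P :=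
          integral_congr_ae (Filter.Eventually.of_forall fun ω => key1 ω i)
      _ = ((∫ ω, ε 0 ω * G (Z 0 ω) (X 0 ω) i ∂P : ℝ) : ℂ) := integral_ofReal
      _ = 0 := by rw [part2 i]; simp
  · calc ∫ ω, h1 ω i * (starRingEnd ℂ) (h1 ω j) ∂P
        = ∫ ω, ((ε 0 ω ^ 2 * (G (Z 0 ω) (X 0 ω) i * G (Z 0 ω) (X 0 ω) j) : ℝ) : ℂ) ∂P := by
          refine integral_congr_ae (Filter.Eventually.of_forall fun ω => ?_)
          beta_reduce
          rw [key1 ω i, key1 ω j, Complex.conj_ofReal]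
          push_cast
          ring
      _ = ((∫ ω, ε 0 ω ^ 2 * (G (Z 0 ω) (X 0 ω) i * G (Z 0 ω) (X 0 ω) j) ∂P : ℝ) : ℂ) :=
          integral_ofReal
end

section
/- Let (V_j, Z_j) and (V_l, Z_l) be two independent, identically distributed random pairs with V : Ω → ℝ^p integrable (p ≥ 2) and Z : Ω → ℝ^q. Suppose there exist a measurable function φ : ℝ^q → ℝ and a fixed vector c ∈ ℝ^p such that E[V | σ(Z)] = φ(Z) · c almost surely (componentwise). Then the p×p matrix M := E[k(Z_j − Z_l) V_j V_lᵀ] is singular (not invertible). In particular, if p = 2, Z is real-valued and E[V | σ(Z)] = (π₁ Z, π₂ Z) almost surely for constants π₁, π₂, then M is singular, so the SMD moment matrix of a linear first stage with a single instrument cannot identify two parameters. -/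
open MeasureTheory ProbabilityTheory Filter Topology Complex Matrix NNReal ENNReal

/-- Conditional expectation commutes with evaluation at a coordinate for
functions valued in `Fin p → ℝ`. -/
lemma condexp_pi_apply_aux {Ω : Type*} {m m0 : MeasurableSpace Ω} (hm : m ≤ m0)
    (P : Measure Ω) [IsFiniteMeasure P] {p : ℕ} {V : Ω → Fin p → ℝ}
    (hV : Integrable V P) (i : Fin p) :
    (fun ω => (P[V|m]) ω i) =ᵐ[P] P[fun ω => V ω i|m] := by
  have hVi : Integrable (fun ω => V ω i) P :=
    (ContinuousLinearMap.proj (R := ℝ) (φ := fun _ : Fin p => ℝ) i).integrable_comp hV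
  refine ae_eq_condExp_of_forall_setIntegral_eq hm hVi ?_ ?_ ?_
  · intro s _ _
    exact ((ContinuousLinearMap.proj (R := ℝ) (φ := fun _ : Fin p => ℝ) i).integrable_comp
      integrable_condExp).integrableOn
  · intro s hs _
    have h1 := setIntegral_condExp hm hV hs
    have h2 := (ContinuousLinearMap.proj (R := ℝ) (φ := fun _ : Fin p => ℝ) i).integral_comp_comm
      ((integrable_condExp (μ := P) (f := V) (m := m)).restrict (s := s))
    have h3 := (ContinuousLinearMap.proj (R := ℝ) (φ := fun _ : Fin p => ℝ) i).integral_comp_comm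
      (hV.restrict (s := s))
    simp only [ContinuousLinearMap.proj_apply] at h2 h3
    rw [h2, h1, ← h3]
  · exact ((continuous_apply i).comp_stronglyMeasurable
      stronglyMeasurable_condExp).aestronglyMeasurable

/-- If `p ≥ 2` and the conditional mean of `V` given `Z` is proportional to a fixed
vector, `E[V | σ(Z)] = φ(Z) · c` a.s., then the SMD moment matrix
`M := E[k(Z_j − Z_l) V_j V_lᵀ]` is singular: a linear first stage with a single
instrument cannot identify two parameters. -/
theorem smd_matrix_singular_of_proportional_first_stage
    {Ω : Type*} [MeasurableSpace Ω] (P : Measure Ω) [IsProbabilityMeasure P]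
    {p q : ℕ} (hp : 2 ≤ p)
    (μ : Measure (Fin q → ℝ)) [IsFiniteMeasure μ]
    (hμsymm : μ.map (fun t => -t) = μ)
    (k : (Fin q → ℝ) → ℝ)
    (hk : ∀ u, (k u : ℂ) = ∫ t, Complex.exp (Complex.I * ((t ⬝ᵥ u : ℝ) : ℂ)) ∂μ)
    (Vj Vl : Ω → Fin p → ℝ) (Zj Zl : Ω → Fin q → ℝ)
    (hVjmeas : Measurable Vj) (hVlmeas : Measurable Vl)
    (hZjmeas : Measurable Zj) (hZlmeas : Measurable Zl)
    (hVint : Integrable Vj P)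
    (hindep : IndepFun (fun ω => (Vj ω, Zj ω)) (fun ω => (Vl ω, Zl ω)) P)
    (hident : IdentDistrib (fun ω => (Vj ω, Zj ω)) (fun ω => (Vl ω, Zl ω)) P P)
    (φ : (Fin q → ℝ) → ℝ) (hφmeas : Measurable φ) (c : Fin p → ℝ)
    (hcond : P[Vj | MeasurableSpace.comap Zj inferInstance]
        =ᵐ[P] fun ω => φ (Zj ω) • c)
    (M : Matrix (Fin p) (Fin p) ℝ)
    (hM : M = Matrix.of fun i j => ∫ ω, k (Zj ω - Zl ω) * (Vj ω i * Vl ω j) ∂P) :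
    ¬ IsUnit M := by
  classical
  have hm : MeasurableSpace.comap Zj inferInstance ≤ ‹MeasurableSpace Ω› := hZjmeas.comap_le
  set C : ℝ := (μ Set.univ).toReal with hCdef
  have hC0 : 0 ≤ C := ENNReal.toReal_nonneg
  -- measurability of k
  have hdot : Measurable fun x : (Fin q → ℝ) × (Fin q → ℝ) => (x.2 ⬝ᵥ x.1 : ℝ) := by
    simp only [dotProduct]
    exact Finset.measurable_sum _ fun i _ =>
      ((measurable_pi_apply i).comp measurable_snd).mul
        ((measurable_pi_apply i).comp measurable_fst)
  have hkc : StronglyMeasurable fun u : Fin q → ℝ =>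
      ∫ t, Complex.exp (Complex.I * ((t ⬝ᵥ u : ℝ) : ℂ)) ∂μ := by
    apply MeasureTheory.StronglyMeasurable.integral_prod_right'
      (f := fun x : (Fin q → ℝ) × (Fin q → ℝ) =>
        Complex.exp (Complex.I * ((x.2 ⬝ᵥ x.1 : ℝ) : ℂ)))
    exact (Complex.measurable_exp.comp
      (measurable_const.mul (Complex.measurable_ofReal.comp hdot))).stronglyMeasurable
  have hkm : Measurable k := by
    have hkeq : k = fun u => (∫ t, Complex.exp (Complex.I * ((t ⬝ᵥ u : ℝ) : ℂ)) ∂μ).re := by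
      funext u; rw [← hk u]; simp
    rw [hkeq]
    exact Complex.measurable_re.comp hkc.measurable
  -- bound on k
  have hkb : ∀ u, |k u| ≤ C := by
    intro u
    have h1 : ‖(k u : ℂ)‖ ≤ C := by
      rw [hk u]
      refine le_trans (norm_integral_le_integral_norm _) ?_
      have : ∀ t : Fin q → ℝ, ‖Complex.exp (Complex.I * ((t ⬝ᵥ u : ℝ) : ℂ))‖ = 1 := by
        intro t
        simp [Complex.norm_exp, Complex.mul_re]
      rw [integral_congr_ae (Filter.Eventually.of_forall this)]
      simp [hCdef, measureReal_def]
    rwa [Complex.norm_real, Real.norm_eq_abs] at h1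
  -- component integrability
  have hVjint_i : ∀ i, Integrable (fun ω => Vj ω i) P := fun i =>
    (ContinuousLinearMap.proj (R := ℝ) (φ := fun _ : Fin p => ℝ) i).integrable_comp hVint
  -- componentwise conditional expectation
  have hcond_i : ∀ i, P[fun ω => Vj ω i|MeasurableSpace.comap Zj inferInstance] =ᵐ[P] fun ω => φ (Zj ω) * c i := by
    intro i
    refine (condexp_pi_apply_aux hm P hVint i).symm.trans ?_
    filter_upwards [hcond] with ω hω
    rw [hω]
    simp [smul_eq_mul]
  -- the key pull-out identity
  set g : (Fin q → ℝ) → ℝ := fun z' => ∫ ω, k (Zj ω - z') * φ (Zj ω) ∂P with hgdef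
  have key : ∀ (z' : Fin q → ℝ) (i : Fin p),
      ∫ ω, k (Zj ω - z') * Vj ω i ∂P = g z' * c i := by
    intro z' i
    set h : Ω → ℝ := fun ω => k (Zj ω - z') with hh
    have hZm : Measurable[MeasurableSpace.comap Zj inferInstance] Zj := measurable_iff_comap_le.mpr le_rfl
    have hhm : StronglyMeasurable[MeasurableSpace.comap Zj inferInstance] h :=
      ((hkm.comp (measurable_id.sub measurable_const)).comp hZm).stronglyMeasurable
    have hhmeas : AEStronglyMeasurable h P :=
      (hkm.comp (hZjmeas.sub measurable_const)).aestronglyMeasurable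
    have hbdd : ∃ D, ∀ ω, ‖h ω‖ ≤ D := ⟨C, fun ω => by simpa using hkb (Zj ω - z')⟩
    have hint_hg : Integrable (h * fun ω => Vj ω i) P := by
      have := (hVjint_i i).bdd_mul hhmeas (Filter.Eventually.of_forall hbdd.choose_spec)
      exact this
    have e2 := condExp_mul_of_stronglyMeasurable_left hhm hint_hg (hVjint_i i)
    calc ∫ ω, k (Zj ω - z') * Vj ω i ∂P
        = ∫ ω, (P[h * fun ω => Vj ω i|MeasurableSpace.comap Zj inferInstance]) ω ∂P := (integral_condExp (f := h * fun ω => Vj ω i) hm).symm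
      _ = ∫ ω, h ω * (P[fun ω => Vj ω i|MeasurableSpace.comap Zj inferInstance]) ω ∂P := by
          refine integral_congr_ae ?_
          filter_upwards [e2] with ω hω
          simpa using hω
      _ = ∫ ω, (h ω * φ (Zj ω)) * c i ∂P := by
          refine integral_congr_ae ?_
          filter_upwards [hcond_i i] with ω hω
          rw [hω]; ring
      _ = (∫ ω, h ω * φ (Zj ω) ∂P) * c i := integral_mul_const _ _
      _ = g z' * c i := rfl
  -- product structure from independence
  set X : Ω → (Fin p → ℝ) × (Fin q → ℝ) := fun ω => (Vj ω, Zj ω) with hXdef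
  set Y : Ω → (Fin p → ℝ) × (Fin q → ℝ) := fun ω => (Vl ω, Zl ω) with hYdef
  have hXmeas : Measurable X := hVjmeas.prodMk hZjmeas
  have hYmeas : Measurable Y := hVlmeas.prodMk hZlmeas
  set ν : Measure ((Fin p → ℝ) × (Fin q → ℝ)) := P.map X with hνdef
  haveI : IsProbabilityMeasure ν := Measure.isProbabilityMeasure_map hXmeas.aemeasurable
  have hmapY : P.map Y = ν := hident.map_eq.symm
  have hprod : P.map (fun ω => (X ω, Y ω)) = ν.prod ν := by
    rw [(indepFun_iff_map_prod_eq_prod_map_map hXmeas.aemeasurable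
      hYmeas.aemeasurable).mp hindep, hmapY]
  -- integrability of coordinates w.r.t. ν
  have hcoord : ∀ (j : Fin p), Integrable (fun y : (Fin p → ℝ) × (Fin q → ℝ) => y.1 j) ν := by
    intro j
    rw [hνdef]
    exact (integrable_map_measure (f := X)
      (g := fun y : (Fin p → ℝ) × (Fin q → ℝ) => y.1 j)
      (Measurable.aestronglyMeasurable (by fun_prop)) hXmeas.aemeasurable).mpr (hVjint_i j)
  -- main computation of M i j
  have hMij : ∀ i j, M i j = (∫ y, g y.2 * y.1 j ∂ν) * c i := by
    intro i j
    set F : ((Fin p → ℝ) × (Fin q → ℝ)) × ((Fin p → ℝ) × (Fin q → ℝ)) → ℝ :=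
      fun w => k (w.1.2 - w.2.2) * (w.1.1 i * w.2.1 j) with hFdef
    have hFmeas : Measurable F :=
      (hkm.comp (measurable_fst.snd.sub measurable_snd.snd)).mul
        (((measurable_pi_apply i).comp measurable_fst.fst).mul
          ((measurable_pi_apply j).comp measurable_snd.fst))
    have hFint : Integrable F (ν.prod ν) := by
      have hG : Integrable
          (fun w : ((Fin p → ℝ) × (Fin q → ℝ)) × ((Fin p → ℝ) × (Fin q → ℝ)) =>
            (C * |w.1.1 i|) * |w.2.1 j|) (ν.prod ν) :=
        ((hcoord i).abs.const_mul C).mul_prod (hcoord j).abs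
      refine hG.mono' hFmeas.aestronglyMeasurable ?_
      refine Filter.Eventually.of_forall fun w => ?_
      have h1 := hkb (w.1.2 - w.2.2)
      have h2 : |F w| = |k (w.1.2 - w.2.2)| * (|w.1.1 i| * |w.2.1 j|) := by
        rw [hFdef]; simp [abs_mul]
      rw [Real.norm_eq_abs, h2, ← mul_assoc]
      exact mul_le_mul_of_nonneg_right
        (mul_le_mul_of_nonneg_right h1 (abs_nonneg _)) (abs_nonneg _)
    have step1 : M i j = ∫ w, F w ∂(ν.prod ν) := by
      rw [hM]
      rw [← hprod, integral_map (hXmeas.prodMk hYmeas).aemeasurable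
        (by rw [hprod]; exact hFmeas.aestronglyMeasurable)]
      rfl
    have step2 : ∫ w, F w ∂(ν.prod ν) = ∫ y, ∫ x, F (x, y) ∂ν ∂ν :=
      integral_prod_symm F hFint
    have inner_eq : ∀ y : (Fin p → ℝ) × (Fin q → ℝ),
        ∫ x, F (x, y) ∂ν = (g y.2 * c i) * y.1 j := by
      intro y
      have e1 : ∫ x, F (x, y) ∂ν
          = (∫ x : (Fin p → ℝ) × (Fin q → ℝ), k (x.2 - y.2) * x.1 i ∂ν) * y.1 j := by
        rw [← integral_mul_const]
        refine integral_congr_ae (Filter.Eventually.of_forall fun x => ?_)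
        rw [hFdef]; ring
      rw [e1]
      have e2 : ∫ x : (Fin p → ℝ) × (Fin q → ℝ), k (x.2 - y.2) * x.1 i ∂ν
          = ∫ ω, k (Zj ω - y.2) * Vj ω i ∂P := by
        have hmf : Measurable fun x : (Fin p → ℝ) × (Fin q → ℝ) => k (x.2 - y.2) * x.1 i :=
          (hkm.comp (measurable_snd.sub measurable_const)).mul
            ((measurable_pi_apply i).comp measurable_fst)
        rw [hνdef, integral_map hXmeas.aemeasurable hmf.aestronglyMeasurable]
      rw [e2, key y.2 i]
    calc M i j = ∫ y, ∫ x, F (x, y) ∂ν ∂ν := by rw [step1, step2]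
      _ = ∫ y, (g y.2 * y.1 j) * c i ∂ν := by
          refine integral_congr_ae (Filter.Eventually.of_forall fun y => ?_)
          show ∫ x, F (x, y) ∂ν = (g y.2 * y.1 j) * c i
          rw [inner_eq y]; ring
      _ = (∫ y, g y.2 * y.1 j ∂ν) * c i := integral_mul_const _ _
  -- M is a rank-one matrix
  set w : Fin p → ℝ := fun j => ∫ y, g y.2 * y.1 j ∂ν with hwdef
  have hMvec : M = vecMulVec c w := by
    ext i j
    rw [hMij i j, vecMulVec_apply, mul_comm]
  intro hunit
  have hrank := Matrix.rank_of_isUnit M hunit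
  have hle : M.rank ≤ 1 := by
    rw [hMvec, vecMulVec_eq (Fin 1)]
    refine le_trans (Matrix.rank_mul_le_left _ _) ?_
    exact le_trans (Matrix.rank_le_card_width (Matrix.replicateCol (Fin 1) c)) (by simp)
  rw [hrank] at hle
  simp only [Fintype.card_fin] at hle
  omega
end

section
/- Let (U, Z_j) and (V, Z_l) be independent random pairs on a probability space (Ω, 𝓕, P), where U, V : Ω → ℝ are integrable and Z_j, Z_l take values in {0,1} with P(Z_j = 1) = P(Z_l = 1) = b for some b ∈ (0,1). Fix a ∈ ℝ and define the weight k̃(z, z′) := 1 if z = z′ and k̃(z, z′) := a if z ≠ z′. Write u₁ := E[U | Z_j = 1], u₀ := E[U | Z_j = 0], v₁ := E[V | Z_l = 1], v₀ := E[V | Z_l = 0] (conditional expectations given the events). If E[V] = 0, then E[k̃(Z_j, Z_l) · U · V] = (1 − a)(u₁ v₁ b² + u₀ v₀ (1 − b)²). -/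
open MeasureTheory ProbabilityTheory Filter Topology Complex Matrix NNReal ENNReal

/-- Kernel-weighted cross moment with a binary instrument: for independent pairs
`(U, Z_j)` and `(V, Z_l)` with `Z` valued in `{0,1}`, `P(Z=1) = b`, weight
`k̃(z,z') = 1` if `z = z'` and `a` otherwise, and `E[V] = 0`:
`E[k̃(Z_j,Z_l) U V] = (1−a)(u₁v₁b² + u₀v₀(1−b)²)`, where `u_z := E[U | Z_j = z]` etc. -/
theorem binary_instrument_kernel_moment
    {Ω : Type*} [MeasurableSpace Ω] (P : Measure Ω) [IsProbabilityMeasure P]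
    (U V : Ω → ℝ) (Zj Zl : Ω → ℝ)
    (hUmeas : Measurable U) (hVmeas : Measurable V)
    (hZjmeas : Measurable Zj) (hZlmeas : Measurable Zl)
    (hUint : Integrable U P) (hVint : Integrable V P)
    (hZjval : ∀ ω, Zj ω = 0 ∨ Zj ω = 1) (hZlval : ∀ ω, Zl ω = 0 ∨ Zl ω = 1)
    (b : ℝ) (hb0 : 0 < b) (hb1 : b < 1)
    (hbj : P {ω | Zj ω = 1} = ENNReal.ofReal b)
    (hbl : P {ω | Zl ω = 1} = ENNReal.ofReal b)
    (hindep : IndepFun (fun ω => (U ω, Zj ω)) (fun ω => (V ω, Zl ω)) P)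
    (a : ℝ)
    (hVmean : ∫ ω, V ω ∂P = 0)
    (u₁ u₀ v₁ v₀ : ℝ)
    (hu₁ : u₁ = (∫ ω in {ω | Zj ω = 1}, U ω ∂P) / (P {ω | Zj ω = 1}).toReal)
    (hu₀ : u₀ = (∫ ω in {ω | Zj ω = 0}, U ω ∂P) / (P {ω | Zj ω = 0}).toReal)
    (hv₁ : v₁ = (∫ ω in {ω | Zl ω = 1}, V ω ∂P) / (P {ω | Zl ω = 1}).toReal)
    (hv₀ : v₀ = (∫ ω in {ω | Zl ω = 0}, V ω ∂P) / (P {ω | Zl ω = 0}).toReal) :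
    ∫ ω, (if Zj ω = Zl ω then (1 : ℝ) else a) * U ω * V ω ∂P
      = (1 - a) * (u₁ * v₁ * b ^ 2 + u₀ * v₀ * (1 - b) ^ 2) := by
  -- abbreviations
  set A := {ω | Zj ω = 1} with hA
  set B := {ω | Zl ω = 1} with hB
  have hAmeas : MeasurableSet A := hZjmeas (measurableSet_singleton 1)
  have hBmeas : MeasurableSet B := hZlmeas (measurableSet_singleton 1)
  have hAc : {ω | Zj ω = 0} = Aᶜ := by
    ext ω
    rcases hZjval ω with h | h <;> simp [A, h]
  have hBc : {ω | Zl ω = 0} = Bᶜ := by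
    ext ω
    rcases hZlval ω with h | h <;> simp [B, h]
  have hPA : (P A).toReal = b := by rw [hbj, ENNReal.toReal_ofReal hb0.le]
  have hPB : (P B).toReal = b := by rw [hbl, ENNReal.toReal_ofReal hb0.le]
  have hPAc : (P Aᶜ).toReal = 1 - b := by
    rw [prob_compl_eq_one_sub hAmeas, hbj,
      ENNReal.toReal_sub_of_le (by simpa using ENNReal.ofReal_le_one.2 hb1.le) one_ne_top]
    simp [ENNReal.toReal_ofReal hb0.le]
  have hPBc : (P Bᶜ).toReal = 1 - b := by
    rw [prob_compl_eq_one_sub hBmeas, hbl,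
      ENNReal.toReal_sub_of_le (by simpa using ENNReal.ofReal_le_one.2 hb1.le) one_ne_top]
    simp [ENNReal.toReal_ofReal hb0.le]
  -- integrability of products with Z's
  have hZjb : ∀ᵐ ω ∂P, ‖Zj ω‖ ≤ 1 := by
    filter_upwards with ω; rcases hZjval ω with h | h <;> simp [h]
  have hZlb : ∀ᵐ ω ∂P, ‖Zl ω‖ ≤ 1 := by
    filter_upwards with ω; rcases hZlval ω with h | h <;> simp [h]
  have hUZj : Integrable (fun ω => Zj ω * U ω) P :=
    hUint.bdd_mul hZjmeas.aestronglyMeasurable hZjb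
  have hVZl : Integrable (fun ω => Zl ω * V ω) P :=
    hVint.bdd_mul hZlmeas.aestronglyMeasurable hZlb
  have hUZj' : Integrable (fun ω => (1 - Zj ω) * U ω) P := by
    have := hUint.sub hUZj
    simpa [sub_mul, one_mul, Pi.sub_def] using this
  have hVZl' : Integrable (fun ω => (1 - Zl ω) * V ω) P := by
    have := hVint.sub hVZl
    simpa [sub_mul, one_mul, Pi.sub_def] using this
  -- independence consequences
  have hiUV : IndepFun U V P := hindep.comp measurable_fst measurable_fst
  have hiZU_ZV : IndepFun (fun ω => Zj ω * U ω) (fun ω => Zl ω * V ω) P :=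
    hindep.comp (measurable_snd.mul measurable_fst) (measurable_snd.mul measurable_fst)
  have hiZU_ZV' : IndepFun (fun ω => (1 - Zj ω) * U ω) (fun ω => (1 - Zl ω) * V ω) P :=
    hindep.comp ((measurable_const.sub measurable_snd).mul measurable_fst)
      ((measurable_const.sub measurable_snd).mul measurable_fst)
  -- identify the integrals of Z·U etc with set integrals
  have hEUZj : ∫ ω, Zj ω * U ω ∂P = u₁ * b := by
    have : (fun ω => Zj ω * U ω) = A.indicator U := by
      ext ω; rcases hZjval ω with h | h <;> simp [A, Set.indicator, h]
    rw [this, integral_indicator hAmeas, hu₁, hPA]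
    field_simp
  have hEVZl : ∫ ω, Zl ω * V ω ∂P = v₁ * b := by
    have : (fun ω => Zl ω * V ω) = B.indicator V := by
      ext ω; rcases hZlval ω with h | h <;> simp [B, Set.indicator, h]
    rw [this, integral_indicator hBmeas, hv₁, hPB]
    field_simp
  have hEUZj' : ∫ ω, (1 - Zj ω) * U ω ∂P = u₀ * (1 - b) := by
    have : (fun ω => (1 - Zj ω) * U ω) = Aᶜ.indicator U := by
      ext ω; rcases hZjval ω with h | h <;> simp [A, Set.indicator, h]
    rw [this, integral_indicator hAmeas.compl, hu₀, hAc, hPAc]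
    have : (1 : ℝ) - b ≠ 0 := by linarith
    field_simp
  have hEVZl' : ∫ ω, (1 - Zl ω) * V ω ∂P = v₀ * (1 - b) := by
    have : (fun ω => (1 - Zl ω) * V ω) = Bᶜ.indicator V := by
      ext ω; rcases hZlval ω with h | h <;> simp [B, Set.indicator, h]
    rw [this, integral_indicator hBmeas.compl, hv₀, hBc, hPBc]
    have : (1 : ℝ) - b ≠ 0 := by linarith
    field_simp
  -- pointwise decomposition of the integrand
  have hpt : ∀ ω, (if Zj ω = Zl ω then (1 : ℝ) else a) * U ω * V ω
      = a * (U ω * V ω)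
        + (1 - a) * ((Zj ω * U ω) * (Zl ω * V ω)
          + ((1 - Zj ω) * U ω) * ((1 - Zl ω) * V ω)) := by
    intro ω
    rcases hZjval ω with h1 | h1 <;> rcases hZlval ω with h2 | h2 <;>
      simp [h1, h2] <;> ring
  -- integrability of the pieces
  have hI1 : Integrable (fun ω => a * (U ω * V ω)) P :=
    ((hiUV.integrable_mul hUint hVint)).const_mul a
  have hI2 : Integrable (fun ω => (Zj ω * U ω) * (Zl ω * V ω)) P :=
    hiZU_ZV.integrable_mul hUZj hVZl
  have hI3 : Integrable (fun ω => ((1 - Zj ω) * U ω) * ((1 - Zl ω) * V ω)) P :=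
    hiZU_ZV'.integrable_mul hUZj' hVZl'
  calc ∫ ω, (if Zj ω = Zl ω then (1 : ℝ) else a) * U ω * V ω ∂P
      = ∫ ω, (a * (U ω * V ω)
        + (1 - a) * ((Zj ω * U ω) * (Zl ω * V ω)
          + ((1 - Zj ω) * U ω) * ((1 - Zl ω) * V ω))) ∂P := by
        exact integral_congr_ae (Filter.Eventually.of_forall hpt)
    _ = a * ∫ ω, U ω * V ω ∂P
        + (1 - a) * ((∫ ω, (Zj ω * U ω) * (Zl ω * V ω) ∂P)
          + ∫ ω, ((1 - Zj ω) * U ω) * ((1 - Zl ω) * V ω) ∂P) := by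
        have hI23 : Integrable (fun ω => (1 - a) * ((Zj ω * U ω) * (Zl ω * V ω)
            + ((1 - Zj ω) * U ω) * ((1 - Zl ω) * V ω))) P := (hI2.add hI3).const_mul _
        rw [integral_add hI1 hI23, integral_const_mul, integral_const_mul,
          integral_add hI2 hI3]
    _ = (1 - a) * (u₁ * v₁ * b ^ 2 + u₀ * v₀ * (1 - b) ^ 2) := by
        rw [hiUV.integral_fun_mul_eq_mul_integral hUint.1 hVint.1,
          hiZU_ZV.integral_fun_mul_eq_mul_integral hUZj.1 hVZl.1,
          hiZU_ZV'.integral_fun_mul_eq_mul_integral hUZj'.1 hVZl'.1,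
          hVmean, hEUZj, hEVZl, hEUZj', hEVZl']
        ring
end

section
/- Let (W̃_j, X_j, Z_j) and (W̃_l, X_l, Z_l) be two independent, identically distributed random tuples with W̃ : Ω → ℝ and W̃·X : Ω → ℝ integrable, X real-valued, Z taking values in {0,1} with P(Z = 1) = b ∈ (0,1), and suppose E[W̃ | σ(X)] = 0 almost surely. Fix a ∈ ℝ and define k̃(z, z′) := 1 if z = z′ and a otherwise. Set θ₁ := E[W̃ | Z = 1], θ₂ := E[W̃ | Z = 0], θ₃ := E[W̃ X | Z = 1], θ₄ := E[W̃ X | Z = 0], and P̃ := (W̃, W̃ X) ∈ ℝ². Then E[k̃(Z_j, Z_l) P̃_j P̃_lᵀ] = (1 − a) · [[θ₁² b² + θ₂² (1−b)², θ₁θ₃ b² + θ₂θ₄ (1−b)²], [θ₁θ₃ b² + θ₂θ₄ (1−b)², θ₃² b² + θ₄² (1−b)²]]. -/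
open MeasureTheory ProbabilityTheory Filter Topology Complex Matrix NNReal ENNReal

lemma aux_mul_indicator {Ω : Type*} (Z h : Ω → ℝ) (hZ : ∀ ω, Z ω = 0 ∨ Z ω = 1) :
    (fun ω => Z ω * h ω) = Set.indicator {ω | Z ω = 1} h := by
  funext ω
  rcases hZ ω with h | h <;>
    simp [Set.indicator_apply, h, Set.mem_setOf_eq]

lemma aux_one_sub_mul_indicator {Ω : Type*} (Z h : Ω → ℝ) (hZ : ∀ ω, Z ω = 0 ∨ Z ω = 1) :
    (fun ω => (1 - Z ω) * h ω) = Set.indicator {ω | Z ω = 0} h := by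
  funext ω
  rcases hZ ω with h | h <;>
    simp [Set.indicator_apply, h, Set.mem_setOf_eq]

lemma aux_key_entry {Ω : Type*} [MeasurableSpace Ω] (P : Measure Ω) [IsProbabilityMeasure P]
    (f g Zj Zl : Ω → ℝ) (a : ℝ)
    (hfm : Measurable f) (hgm : Measurable g)
    (hZjm : Measurable Zj) (hZlm : Measurable Zl)
    (hifg : IndepFun f g P)
    (hizz : IndepFun (fun ω => Zj ω * f ω) (fun ω => Zl ω * g ω) P)
    (hicc : IndepFun (fun ω => (1 - Zj ω) * f ω) (fun ω => (1 - Zl ω) * g ω) P)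
    (hf : Integrable f P) (hg : Integrable g P)
    (hZj : ∀ ω, Zj ω = 0 ∨ Zj ω = 1) (hZl : ∀ ω, Zl ω = 0 ∨ Zl ω = 1)
    (hEf : ∫ ω, f ω ∂P = 0) :
    ∫ ω, (if Zj ω = Zl ω then (1:ℝ) else a) * (f ω * g ω) ∂P
      = (1 - a) * ((∫ ω, Zj ω * f ω ∂P) * (∫ ω, Zl ω * g ω ∂P)
          + (∫ ω, (1 - Zj ω) * f ω ∂P) * (∫ ω, (1 - Zl ω) * g ω ∂P)) := by
  have hZjf : Integrable (fun ω => Zj ω * f ω) P := by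
    refine Integrable.bdd_mul (c := 1) hf hZjm.aestronglyMeasurable (Eventually.of_forall fun ω => ?_)
    rcases hZj ω with h | h <;> simp [h]
  have hZlg : Integrable (fun ω => Zl ω * g ω) P := by
    refine Integrable.bdd_mul (c := 1) hg hZlm.aestronglyMeasurable (Eventually.of_forall fun ω => ?_)
    rcases hZl ω with h | h <;> simp [h]
  have hcjf : Integrable (fun ω => (1 - Zj ω) * f ω) P := by
    refine Integrable.bdd_mul (c := 1) hf ((measurable_const.sub hZjm).aestronglyMeasurable) (Eventually.of_forall fun ω => ?_)
    rcases hZj ω with h | h <;> simp [h]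
  have hclg : Integrable (fun ω => (1 - Zl ω) * g ω) P := by
    refine Integrable.bdd_mul (c := 1) hg ((measurable_const.sub hZlm).aestronglyMeasurable) (Eventually.of_forall fun ω => ?_)
    rcases hZl ω with h | h <;> simp [h]
  have hfg : Integrable (fun ω => f ω * g ω) P := hifg.integrable_mul hf hg
  have hzz : Integrable (fun ω => (Zj ω * f ω) * (Zl ω * g ω)) P := hizz.integrable_mul hZjf hZlg
  have hcc : Integrable (fun ω => ((1 - Zj ω) * f ω) * ((1 - Zl ω) * g ω)) P :=
    hicc.integrable_mul hcjf hclg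
  have hpt : ∀ ω, (if Zj ω = Zl ω then (1:ℝ) else a) * (f ω * g ω)
      = a * (f ω * g ω)
        + (1 - a) * ((Zj ω * f ω) * (Zl ω * g ω) + ((1 - Zj ω) * f ω) * ((1 - Zl ω) * g ω)) := by
    intro ω
    rcases hZj ω with h1 | h1 <;> rcases hZl ω with h2 | h2 <;>
      simp [h1, h2] <;> ring
  calc ∫ ω, (if Zj ω = Zl ω then (1:ℝ) else a) * (f ω * g ω) ∂P
      = ∫ ω, (a * (f ω * g ω)
          + (1 - a) * ((Zj ω * f ω) * (Zl ω * g ω)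
            + ((1 - Zj ω) * f ω) * ((1 - Zl ω) * g ω))) ∂P := by
        exact integral_congr_ae (Eventually.of_forall fun ω => hpt ω)
    _ = a * ∫ ω, f ω * g ω ∂P
        + (1 - a) * ((∫ ω, (Zj ω * f ω) * (Zl ω * g ω) ∂P)
          + ∫ ω, ((1 - Zj ω) * f ω) * ((1 - Zl ω) * g ω) ∂P) := by
        have h1 : Integrable (fun ω => a * (f ω * g ω)) P := hfg.const_mul a
        have h3 : Integrable (fun ω => (Zj ω * f ω) * (Zl ω * g ω)
            + ((1 - Zj ω) * f ω) * ((1 - Zl ω) * g ω)) P := hzz.add hcc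
        have h2 : Integrable (fun ω => (1 - a) * ((Zj ω * f ω) * (Zl ω * g ω)
            + ((1 - Zj ω) * f ω) * ((1 - Zl ω) * g ω))) P := h3.const_mul (1 - a)
        rw [integral_add h1 h2, integral_const_mul, integral_const_mul, integral_add hzz hcc]
    _ = _ := by
        rw [hifg.integral_fun_mul_eq_mul_integral hfm.aestronglyMeasurable hgm.aestronglyMeasurable,
          hizz.integral_fun_mul_eq_mul_integral (hZjm.mul hfm).aestronglyMeasurable (hZlm.mul hgm).aestronglyMeasurable,
          hicc.integral_fun_mul_eq_mul_integral ((measurable_const.sub hZjm).mul hfm).aestronglyMeasurable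
            ((measurable_const.sub hZlm).mul hgm).aestronglyMeasurable,
          hEf]
        ring

lemma aux_entry {Ω : Type*} [MeasurableSpace Ω] (P : Measure Ω) [IsProbabilityMeasure P]
    (Wj Wl Xj Xl Zj Zl : Ω → ℝ)
    (hWjmeas : Measurable Wj) (hWlmeas : Measurable Wl)
    (hXjmeas : Measurable Xj) (hXlmeas : Measurable Xl)
    (hZjmeas : Measurable Zj) (hZlmeas : Measurable Zl)
    (hZjval : ∀ ω, Zj ω = 0 ∨ Zj ω = 1) (hZlval : ∀ ω, Zl ω = 0 ∨ Zl ω = 1)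
    (hindep : IndepFun (fun ω => (Wj ω, Xj ω, Zj ω)) (fun ω => (Wl ω, Xl ω, Zl ω)) P)
    (hident : IdentDistrib (fun ω => (Wj ω, Xj ω, Zj ω)) (fun ω => (Wl ω, Xl ω, Zl ω)) P P)
    (a : ℝ) (F G : ℝ × ℝ × ℝ → ℝ) (hF : Measurable F) (hG : Measurable G)
    (hFint : Integrable (fun ω => F (Wj ω, Xj ω, Zj ω)) P)
    (hGint : Integrable (fun ω => G (Wj ω, Xj ω, Zj ω)) P)
    (hEF : ∫ ω, F (Wj ω, Xj ω, Zj ω) ∂P = 0) :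
    ∫ ω, (if Zj ω = Zl ω then (1:ℝ) else a) * (F (Wj ω, Xj ω, Zj ω) * G (Wl ω, Xl ω, Zl ω)) ∂P
      = (1 - a) * ((∫ ω, Zj ω * F (Wj ω, Xj ω, Zj ω) ∂P) * (∫ ω, Zj ω * G (Wj ω, Xj ω, Zj ω) ∂P)
          + (∫ ω, (1 - Zj ω) * F (Wj ω, Xj ω, Zj ω) ∂P)
            * (∫ ω, (1 - Zj ω) * G (Wj ω, Xj ω, Zj ω) ∂P)) := by
  have hTj : Measurable (fun ω => (Wj ω, Xj ω, Zj ω)) :=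
    hWjmeas.prodMk (hXjmeas.prodMk hZjmeas)
  have hTl : Measurable (fun ω => (Wl ω, Xl ω, Zl ω)) :=
    hWlmeas.prodMk (hXlmeas.prodMk hZlmeas)
  have hzF : Measurable (fun p : ℝ × ℝ × ℝ => p.2.2 * F p) :=
    (measurable_snd.comp measurable_snd).mul hF
  have hzG : Measurable (fun p : ℝ × ℝ × ℝ => p.2.2 * G p) :=
    (measurable_snd.comp measurable_snd).mul hG
  have hcF : Measurable (fun p : ℝ × ℝ × ℝ => (1 - p.2.2) * F p) :=
    (measurable_const.sub (measurable_snd.comp measurable_snd)).mul hF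
  have hcG : Measurable (fun p : ℝ × ℝ × ℝ => (1 - p.2.2) * G p) :=
    (measurable_const.sub (measurable_snd.comp measurable_snd)).mul hG
  have hGlint : Integrable (fun ω => G (Wl ω, Xl ω, Zl ω)) P :=
    ((hident.comp hG).integrable_iff).mp hGint
  have hifg : IndepFun (fun ω => F (Wj ω, Xj ω, Zj ω)) (fun ω => G (Wl ω, Xl ω, Zl ω)) P :=
    hindep.comp hF hG
  have hizz : IndepFun (fun ω => Zj ω * F (Wj ω, Xj ω, Zj ω))
      (fun ω => Zl ω * G (Wl ω, Xl ω, Zl ω)) P := hindep.comp hzF hzG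
  have hicc : IndepFun (fun ω => (1 - Zj ω) * F (Wj ω, Xj ω, Zj ω))
      (fun ω => (1 - Zl ω) * G (Wl ω, Xl ω, Zl ω)) P := hindep.comp hcF hcG
  have key := aux_key_entry P (fun ω => F (Wj ω, Xj ω, Zj ω)) (fun ω => G (Wl ω, Xl ω, Zl ω))
    Zj Zl a (hF.comp hTj) (hG.comp hTl) hZjmeas hZlmeas hifg hizz hicc hFint hGlint
    hZjval hZlval hEF
  have h1 := (hident.comp hzG).integral_eq
  have h2 := (hident.comp hcG).integral_eq
  simp only [Function.comp] at h1 h2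
  rw [key, ← h1, ← h2]
/-- Explicit form of the SMD moment matrix with a binary instrument:
for iid tuples `(W̃_j, X_j, Z_j)` and `(W̃_l, X_l, Z_l)` with `E[W̃ | σ(X)] = 0` a.s.,
`Z ∈ {0,1}`, `P(Z=1) = b`, weight `k̃(z,z') = 1` if `z = z'` and `a` otherwise, and
`P̃ := (W̃, W̃X)`, the matrix `E[k̃(Z_j,Z_l) P̃_j P̃_lᵀ]` equals
`(1−a) · [[θ₁²b² + θ₂²(1−b)², θ₁θ₃b² + θ₂θ₄(1−b)²], [θ₁θ₃b² + θ₂θ₄(1−b)², θ₃²b² + θ₄²(1−b)²]]`. -/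
theorem binary_instrument_smd_matrix
    {Ω : Type*} [MeasurableSpace Ω] (P : Measure Ω) [IsProbabilityMeasure P]
    (Wj Wl : Ω → ℝ) (Xj Xl : Ω → ℝ) (Zj Zl : Ω → ℝ)
    (hWjmeas : Measurable Wj) (hWlmeas : Measurable Wl)
    (hXjmeas : Measurable Xj) (hXlmeas : Measurable Xl)
    (hZjmeas : Measurable Zj) (hZlmeas : Measurable Zl)
    (hWint : Integrable Wj P) (hWXint : Integrable (fun ω => Wj ω * Xj ω) P)
    (hZjval : ∀ ω, Zj ω = 0 ∨ Zj ω = 1) (hZlval : ∀ ω, Zl ω = 0 ∨ Zl ω = 1)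
    (b : ℝ) (hb0 : 0 < b) (hb1 : b < 1)
    (hbj : P {ω | Zj ω = 1} = ENNReal.ofReal b)
    (hindep : IndepFun (fun ω => (Wj ω, Xj ω, Zj ω)) (fun ω => (Wl ω, Xl ω, Zl ω)) P)
    (hident : IdentDistrib (fun ω => (Wj ω, Xj ω, Zj ω)) (fun ω => (Wl ω, Xl ω, Zl ω)) P P)
    (hcond : P[Wj | MeasurableSpace.comap Xj inferInstance] =ᵐ[P] 0)
    (a : ℝ)
    (θ₁ θ₂ θ₃ θ₄ : ℝ)
    (hθ₁ : θ₁ = (∫ ω in {ω | Zj ω = 1}, Wj ω ∂P) / (P {ω | Zj ω = 1}).toReal)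
    (hθ₂ : θ₂ = (∫ ω in {ω | Zj ω = 0}, Wj ω ∂P) / (P {ω | Zj ω = 0}).toReal)
    (hθ₃ : θ₃ = (∫ ω in {ω | Zj ω = 1}, Wj ω * Xj ω ∂P) / (P {ω | Zj ω = 1}).toReal)
    (hθ₄ : θ₄ = (∫ ω in {ω | Zj ω = 0}, Wj ω * Xj ω ∂P) / (P {ω | Zj ω = 0}).toReal)
    (Ptildej Ptildel : Ω → Fin 2 → ℝ)
    (hPtildej : ∀ ω, Ptildej ω = ![Wj ω, Wj ω * Xj ω])
    (hPtildel : ∀ ω, Ptildel ω = ![Wl ω, Wl ω * Xl ω]) :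
    (Matrix.of fun i j =>
        ∫ ω, (if Zj ω = Zl ω then (1 : ℝ) else a) * (Ptildej ω i * Ptildel ω j) ∂P)
      = (1 - a) •
        !![θ₁ ^ 2 * b ^ 2 + θ₂ ^ 2 * (1 - b) ^ 2, θ₁ * θ₃ * b ^ 2 + θ₂ * θ₄ * (1 - b) ^ 2;
           θ₁ * θ₃ * b ^ 2 + θ₂ * θ₄ * (1 - b) ^ 2, θ₃ ^ 2 * b ^ 2 + θ₄ ^ 2 * (1 - b) ^ 2] := by
  -- conditional expectation facts
  have hm : MeasurableSpace.comap Xj inferInstance ≤ ‹MeasurableSpace Ω› := hXjmeas.comap_le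
  haveI : IsFiniteMeasure (P.trim hm) := by
    constructor
    rw [trim_measurableSet_eq hm MeasurableSet.univ]
    exact measure_lt_top P _
  have hEW : ∫ ω, Wj ω ∂P = 0 := by
    have h1 : ∫ ω, (P[Wj | MeasurableSpace.comap Xj inferInstance]) ω ∂P = ∫ ω, Wj ω ∂P :=
      integral_condExp hm
    rw [← h1, integral_congr_ae hcond]
    simp
  have hXm : Measurable[MeasurableSpace.comap Xj inferInstance] Xj :=
    Measurable.of_comap_le le_rfl
  have hXWint : Integrable (Xj * Wj) P := by
    have : Integrable (fun ω => Xj ω * Wj ω) P := by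
      simpa [mul_comm] using hWXint
    exact this
  have hEWX : ∫ ω, Wj ω * Xj ω ∂P = 0 := by
    have hmul := condExp_mul_of_stronglyMeasurable_left (μ := P) hXm.stronglyMeasurable hXWint hWint
    have h0 : P[Xj * Wj | MeasurableSpace.comap Xj inferInstance] =ᵐ[P] 0 := by
      refine hmul.trans ?_
      filter_upwards [hcond] with ω h
      simp only [Pi.mul_apply, Pi.zero_apply] at h ⊢
      rw [h, mul_zero]
    have h1 : ∫ ω, (P[Xj * Wj | MeasurableSpace.comap Xj inferInstance]) ω ∂P
        = ∫ ω, (Xj * Wj) ω ∂P := integral_condExp hm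
    have hI : ∫ ω, (Xj * Wj) ω ∂P = 0 := by
      rw [← h1, integral_congr_ae h0]
      simp
    have hI' : ∫ ω, Xj ω * Wj ω ∂P = 0 := hI
    rw [show (fun ω => Wj ω * Xj ω) = fun ω => Xj ω * Wj ω from funext fun ω => mul_comm _ _]
    exact hI'
  -- measure facts
  have hset1 : MeasurableSet {ω | Zj ω = 1} := hZjmeas (measurableSet_singleton 1)
  have hPb1 : (P {ω | Zj ω = 1}).toReal = b := by
    rw [hbj]; exact ENNReal.toReal_ofReal hb0.le
  have hcompl : {ω | Zj ω = 0} = {ω | Zj ω = 1}ᶜ := by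
    ext ω; rcases hZjval ω with h | h <;> simp [h]
  have hPb0 : (P {ω | Zj ω = 0}).toReal = 1 - b := by
    rw [hcompl, measure_compl hset1 (measure_ne_top _ _), measure_univ, hbj,
      ENNReal.toReal_sub_of_le (by exact_mod_cast ENNReal.ofReal_le_one.mpr hb1.le)
        ENNReal.one_ne_top]
    simp [ENNReal.toReal_ofReal hb0.le]
  have hbne : b ≠ 0 := hb0.ne'
  have h1bne : (1 : ℝ) - b ≠ 0 := sub_ne_zero.mpr hb1.ne'
  -- base integrals
  have hset0 : MeasurableSet {ω | Zj ω = 0} := by rw [hcompl]; exact hset1.compl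
  have IW1 : ∫ ω, Zj ω * Wj ω ∂P = θ₁ * b := by
    have e1 : ∫ ω, Zj ω * Wj ω ∂P = ∫ ω, Set.indicator {ω | Zj ω = 1} Wj ω ∂P := by
      congr 1
      exact aux_mul_indicator Zj Wj hZjval
    rw [e1, integral_indicator hset1, hθ₁, hPb1]
    field_simp
  have IW0 : ∫ ω, (1 - Zj ω) * Wj ω ∂P = θ₂ * (1 - b) := by
    have e1 : ∫ ω, (1 - Zj ω) * Wj ω ∂P = ∫ ω, Set.indicator {ω | Zj ω = 0} Wj ω ∂P := by
      congr 1
      exact aux_one_sub_mul_indicator Zj Wj hZjval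
    rw [e1, integral_indicator hset0, hθ₂, hPb0]
    field_simp
  have IX1 : ∫ ω, Zj ω * (Wj ω * Xj ω) ∂P = θ₃ * b := by
    have e1 : ∫ ω, Zj ω * (Wj ω * Xj ω) ∂P
        = ∫ ω, Set.indicator {ω | Zj ω = 1} (fun ω => Wj ω * Xj ω) ω ∂P := by
      congr 1
      exact aux_mul_indicator Zj _ hZjval
    rw [e1, integral_indicator hset1, hθ₃, hPb1]
    field_simp
  have IX0 : ∫ ω, (1 - Zj ω) * (Wj ω * Xj ω) ∂P = θ₄ * (1 - b) := by
    have e1 : ∫ ω, (1 - Zj ω) * (Wj ω * Xj ω) ∂P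
        = ∫ ω, Set.indicator {ω | Zj ω = 0} (fun ω => Wj ω * Xj ω) ω ∂P := by
      congr 1
      exact aux_one_sub_mul_indicator Zj _ hZjval
    rw [e1, integral_indicator hset0, hθ₄, hPb0]
    field_simp
  -- entries
  have hF0 : Measurable (fun p : ℝ × ℝ × ℝ => p.1) := measurable_fst
  have hF1 : Measurable (fun p : ℝ × ℝ × ℝ => p.1 * p.2.1) :=
    measurable_fst.mul (measurable_fst.comp measurable_snd)
  have E00 : ∫ ω, (if Zj ω = Zl ω then (1:ℝ) else a) * (Wj ω * Wl ω) ∂P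
      = (1 - a) * ((θ₁ * b) * (θ₁ * b) + (θ₂ * (1 - b)) * (θ₂ * (1 - b))) := by
    have h := aux_entry P Wj Wl Xj Xl Zj Zl hWjmeas hWlmeas hXjmeas hXlmeas hZjmeas hZlmeas
      hZjval hZlval hindep hident a (fun p => p.1) (fun p => p.1) hF0 hF0 hWint hWint hEW
    simpa only [IW1, IW0] using h
  have E01 : ∫ ω, (if Zj ω = Zl ω then (1:ℝ) else a) * (Wj ω * (Wl ω * Xl ω)) ∂P
      = (1 - a) * ((θ₁ * b) * (θ₃ * b) + (θ₂ * (1 - b)) * (θ₄ * (1 - b))) := by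
    have h := aux_entry P Wj Wl Xj Xl Zj Zl hWjmeas hWlmeas hXjmeas hXlmeas hZjmeas hZlmeas
      hZjval hZlval hindep hident a (fun p => p.1) (fun p => p.1 * p.2.1) hF0 hF1 hWint hWXint hEW
    simpa only [IW1, IW0, IX1, IX0] using h
  have E10 : ∫ ω, (if Zj ω = Zl ω then (1:ℝ) else a) * ((Wj ω * Xj ω) * Wl ω) ∂P
      = (1 - a) * ((θ₃ * b) * (θ₁ * b) + (θ₄ * (1 - b)) * (θ₂ * (1 - b))) := by
    have h := aux_entry P Wj Wl Xj Xl Zj Zl hWjmeas hWlmeas hXjmeas hXlmeas hZjmeas hZlmeas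
      hZjval hZlval hindep hident a (fun p => p.1 * p.2.1) (fun p => p.1) hF1 hF0 hWXint hWint hEWX
    simpa only [IW1, IW0, IX1, IX0] using h
  have E11 : ∫ ω, (if Zj ω = Zl ω then (1:ℝ) else a) * ((Wj ω * Xj ω) * (Wl ω * Xl ω)) ∂P
      = (1 - a) * ((θ₃ * b) * (θ₃ * b) + (θ₄ * (1 - b)) * (θ₄ * (1 - b))) := by
    have h := aux_entry P Wj Wl Xj Xl Zj Zl hWjmeas hWlmeas hXjmeas hXlmeas hZjmeas hZlmeas
      hZjval hZlval hindep hident a (fun p => p.1 * p.2.1) (fun p => p.1 * p.2.1) hF1 hF1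
      hWXint hWXint hEWX
    simpa only [IW1, IW0, IX1, IX0] using h
  -- assemble the matrix
  ext i j
  fin_cases i <;> fin_cases j <;>
    simp only [Matrix.of_apply, Matrix.smul_apply, smul_eq_mul, hPtildej, hPtildel,
      Matrix.cons_val', Matrix.cons_val_zero, Matrix.cons_val_one, Matrix.head_cons,
      Matrix.empty_val', Matrix.cons_val_fin_one, Matrix.head_fin_const, Fin.isValue,
      Fin.mk_zero, Fin.mk_one]
  · rw [E00]; ring
  · rw [E01]; ring
  · rw [E10]; ring
  · rw [E11]; ring
end

section
/- In the partially linear model with two independent observations D_j, D_l with the common distribution, define M_∞(θ) := E[(ỹ_j − ⟨P̃_j, θ⟩)(ỹ_l − ⟨P̃_l, θ⟩) k(Z_j − Z_l)] for θ ∈ ℝ^p. Then for every θ ∈ ℝ^p, M_∞(θ) = M_∞(θ₀) + ∫_{ℝ^{q_z}} |E[⟨θ − θ₀, P̃⟩ · exp(i⟨t, Z⟩)]|² dμ(t); in particular M_∞(θ) ≥ M_∞(θ₀) for all θ. -/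
open MeasureTheory ProbabilityTheory Filter Topology Complex Matrix NNReal ENNReal

section Helpers

variable {α : Type*} {mα : MeasurableSpace α} {μ : Measure α}

lemma integrable_complex_ofReal {f : α → ℝ} (hf : Integrable f μ) :
    Integrable (fun x => ((f x : ℝ) : ℂ)) μ := hf.ofReal

lemma measurable_dotProduct_right' {n : ℕ} {F : α → Fin n → ℝ} (hF : Measurable F)
    (c : Fin n → ℝ) : Measurable fun ω => F ω ⬝ᵥ c := by
  simp only [dotProduct]
  exact Finset.measurable_sum _ fun j _ => ((measurable_pi_apply j).comp hF).mul_const _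

lemma measurable_dotProduct_left' {n : ℕ} {F : α → Fin n → ℝ} (hF : Measurable F)
    (c : Fin n → ℝ) : Measurable fun ω => c ⬝ᵥ F ω := by
  simp only [dotProduct]
  exact Finset.measurable_sum _ fun j _ => ((measurable_pi_apply j).comp hF).const_mul _

lemma abs_dotProduct_le' {n : ℕ} (v c : Fin n → ℝ) :
    |v ⬝ᵥ c| ≤ (∑ j, |c j|) * ‖v‖ := by
  calc |v ⬝ᵥ c| ≤ ∑ j, |v j * c j| := Finset.abs_sum_le_sum_abs _ _
    _ ≤ ∑ j, |c j| * ‖v‖ := by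
        refine Finset.sum_le_sum fun j _ => ?_
        rw [abs_mul, mul_comm]
        exact mul_le_mul_of_nonneg_left (by simpa [Real.norm_eq_abs] using norm_le_pi_norm v j)
          (abs_nonneg _)
    _ = (∑ j, |c j|) * ‖v‖ := by rw [Finset.sum_mul]

lemma integrable_dotProduct_right' {n : ℕ} {F : α → Fin n → ℝ} (hFm : Measurable F)
    (hF : Integrable F μ) (c : Fin n → ℝ) : Integrable (fun ω => F ω ⬝ᵥ c) μ := by
  refine (hF.norm.const_mul (∑ j, |c j|)).mono'
    ((measurable_dotProduct_right' hFm c).aestronglyMeasurable) ?_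
  exact ae_of_all _ fun ω => by simpa [Real.norm_eq_abs] using abs_dotProduct_le' (F ω) c

lemma MeasureTheory.Integrable.mul_bddone {E : Type*} [NormedDivisionRing E] {f : α → E} (hf : Integrable f μ)
    {g : α → E} (hg : AEStronglyMeasurable g μ) (hb : ∀ x, ‖g x‖ ≤ 1) :
    Integrable (fun x => f x * g x) μ := by
  refine hf.norm.mono' (hf.aestronglyMeasurable.mul hg) (ae_of_all _ fun x => ?_)
  rw [norm_mul]
  exact mul_le_of_le_one_right (norm_nonneg _) (hb x)

lemma ProbabilityTheory.IndepFun.integral_mul_complex {Ω : Type*} {mΩ : MeasurableSpace Ω} {P : Measure Ω}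
    {X Y : Ω → ℂ} (h : IndepFun X Y P) (hX : Integrable X P) (hY : Integrable Y P) :
    ∫ ω, X ω * Y ω ∂P = (∫ ω, X ω ∂P) * ∫ ω, Y ω ∂P := by
  have h1 : IndepFun (fun ω => (X ω).re) (fun ω => (Y ω).re) P :=
    h.comp Complex.measurable_re Complex.measurable_re
  have h2 : IndepFun (fun ω => (X ω).re) (fun ω => (Y ω).im) P :=
    h.comp Complex.measurable_re Complex.measurable_im
  have h3 : IndepFun (fun ω => (X ω).im) (fun ω => (Y ω).re) P :=
    h.comp Complex.measurable_im Complex.measurable_re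
  have h4 : IndepFun (fun ω => (X ω).im) (fun ω => (Y ω).im) P :=
    h.comp Complex.measurable_im Complex.measurable_im
  have hXre : Integrable (fun ω => (X ω).re) P := hX.re
  have hXim : Integrable (fun ω => (X ω).im) P := hX.im
  have hYre : Integrable (fun ω => (Y ω).re) P := hY.re
  have hYim : Integrable (fun ω => (Y ω).im) P := hY.im
  have i1 : Integrable (fun ω => (X ω).re * (Y ω).re) P := h1.integrable_mul hXre hYre
  have i2 : Integrable (fun ω => (X ω).re * (Y ω).im) P := h2.integrable_mul hXre hYim
  have i3 : Integrable (fun ω => (X ω).im * (Y ω).re) P := h3.integrable_mul hXim hYre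
  have i4 : Integrable (fun ω => (X ω).im * (Y ω).im) P := h4.integrable_mul hXim hYim
  have key : ∀ (u v : Ω → ℝ), Integrable u P → Integrable v P →
      (∫ ω, ((u ω : ℂ) + (v ω : ℂ) * Complex.I) ∂P)
        = ((∫ ω, u ω ∂P : ℝ) : ℂ) + ((∫ ω, v ω ∂P : ℝ) : ℂ) * Complex.I := by
    intro u v hu hv
    rw [integral_add (integrable_complex_ofReal hu) ((integrable_complex_ofReal hv).mul_const Complex.I),
      integral_mul_const, integral_complex_ofReal, integral_complex_ofReal]
  have hXeq : X = fun ω => ((X ω).re : ℂ) + ((X ω).im : ℂ) * Complex.I :=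
    funext fun ω => (Complex.re_add_im (X ω)).symm
  have hYeq : Y = fun ω => ((Y ω).re : ℂ) + ((Y ω).im : ℂ) * Complex.I :=
    funext fun ω => (Complex.re_add_im (Y ω)).symm
  have hprod : ∀ ω, X ω * Y ω =
      (((X ω).re * (Y ω).re - (X ω).im * (Y ω).im : ℝ) : ℂ)
        + (((X ω).re * (Y ω).im + (X ω).im * (Y ω).re : ℝ) : ℂ) * Complex.I := by
    intro ω
    rw [Complex.ext_iff]
    constructor <;> simp [Complex.mul_re, Complex.mul_im] <;> ring
  calc ∫ ω, X ω * Y ω ∂P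
      = ∫ ω, ((((X ω).re * (Y ω).re - (X ω).im * (Y ω).im : ℝ) : ℂ)
          + (((X ω).re * (Y ω).im + (X ω).im * (Y ω).re : ℝ) : ℂ) * Complex.I) ∂P := by
        simp only [hprod]
    _ = ((∫ ω, ((X ω).re * (Y ω).re - (X ω).im * (Y ω).im) ∂P : ℝ) : ℂ)
          + ((∫ ω, ((X ω).re * (Y ω).im + (X ω).im * (Y ω).re) ∂P : ℝ) : ℂ) * Complex.I :=
        key _ _ (i1.sub i4) (i2.add i3)
    _ = (∫ ω, X ω ∂P) * ∫ ω, Y ω ∂P := by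
        have e1 : ∫ ω, (X ω).re * (Y ω).re ∂P = (∫ ω, (X ω).re ∂P) * ∫ ω, (Y ω).re ∂P :=
          h1.integral_fun_mul_eq_mul_integral hXre.aestronglyMeasurable hYre.aestronglyMeasurable
        have e2 : ∫ ω, (X ω).re * (Y ω).im ∂P = (∫ ω, (X ω).re ∂P) * ∫ ω, (Y ω).im ∂P :=
          h2.integral_fun_mul_eq_mul_integral hXre.aestronglyMeasurable hYim.aestronglyMeasurable
        have e3 : ∫ ω, (X ω).im * (Y ω).re ∂P = (∫ ω, (X ω).im ∂P) * ∫ ω, (Y ω).re ∂P :=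
          h3.integral_fun_mul_eq_mul_integral hXim.aestronglyMeasurable hYre.aestronglyMeasurable
        have e4 : ∫ ω, (X ω).im * (Y ω).im ∂P = (∫ ω, (X ω).im ∂P) * ∫ ω, (Y ω).im ∂P :=
          h4.integral_fun_mul_eq_mul_integral hXim.aestronglyMeasurable hYim.aestronglyMeasurable
        rw [integral_sub i1 i4, integral_add i2 i3, e1, e2, e3, e4]
        conv_rhs => rw [hXeq, hYeq]
        rw [key _ _ hXre hXim, key _ _ hYre hYim]
        rw [Complex.ext_iff]
        constructor <;> simp [Complex.mul_re, Complex.mul_im] <;> ring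

noncomputable def dotCLM {n : ℕ} (c : Fin n → ℝ) : (Fin n → ℝ) →L[ℝ] ℝ :=
  LinearMap.toContinuousLinearMap
    { toFun := fun v => v ⬝ᵥ c
      map_add' := fun a b => add_dotProduct a b c
      map_smul' := fun r a => by simp [smul_dotProduct] }

@[simp] lemma dotCLM_apply {n : ℕ} (c v : Fin n → ℝ) : dotCLM c v = v ⬝ᵥ c := rfl

lemma condExp_clm {α E F : Type*} {m m0 : MeasurableSpace α} {μ : Measure α}
    [NormedAddCommGroup E] [NormedSpace ℝ E] [CompleteSpace E]
    [NormedAddCommGroup F] [NormedSpace ℝ F] [CompleteSpace F]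
    (hm : m ≤ m0) [SigmaFinite (μ.trim hm)] (T : E →L[ℝ] F) {g : α → E}
    (hg : Integrable g μ) :
    μ[fun ω => T (g ω)|m] =ᵐ[μ] fun ω => T ((μ[g|m]) ω) := by
  refine (ae_eq_condExp_of_forall_setIntegral_eq hm (T.integrable_comp hg) ?_ ?_ ?_).symm
  · exact fun s _ _ => (T.integrable_comp integrable_condExp).integrableOn
  · intro s hs hμs
    rw [T.integral_comp_comm integrable_condExp.integrableOn,
      T.integral_comp_comm hg.integrableOn, setIntegral_condExp hm hg hs]
  · exact (T.continuous.comp_stronglyMeasurable stronglyMeasurable_condExp).aestronglyMeasurable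

end Helpers

/-- Decomposition of the SMD population objective: for every `θ`,
`M_∞(θ) = M_∞(θ₀) + ∫ |E[⟨θ − θ₀, P̃⟩ exp(i⟨t,Z⟩)]|² dμ(t)`;
in particular `M_∞(θ) ≥ M_∞(θ₀)`. -/
theorem smd_objective_decomposition
    {Ω : Type*} [MeasurableSpace Ω] (P : Measure Ω) [IsProbabilityMeasure P]
    {p qX qz : ℕ}
    (μ : Measure (Fin qz → ℝ)) [IsFiniteMeasure μ]
    (hμsymm : μ.map (fun t => -t) = μ)
    (k : (Fin qz → ℝ) → ℝ)
    (hk : ∀ u, (k u : ℂ) = ∫ t, Complex.exp (Complex.I * ((t ⬝ᵥ u : ℝ) : ℂ)) ∂μ)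
    (θ₀ : Fin p → ℝ) (f : (Fin qX → ℝ) → ℝ) (hfmeas : Measurable f)
    (y : Fin 2 → Ω → ℝ) (Pv : Fin 2 → Ω → Fin p → ℝ)
    (X : Fin 2 → Ω → Fin qX → ℝ) (Z : Fin 2 → Ω → Fin qz → ℝ)
    (ε : Fin 2 → Ω → ℝ)
    (hymeas : ∀ i, Measurable (y i)) (hPmeas : ∀ i, Measurable (Pv i))
    (hXmeas : ∀ i, Measurable (X i)) (hZmeas : ∀ i, Measurable (Z i))
    (hyL2 : ∀ i, MemLp (y i) 2 P) (hPL2 : ∀ i, MemLp (Pv i) 2 P)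
    (hXL2 : ∀ i, MemLp (X i) 2 P) (hZL2 : ∀ i, MemLp (Z i) 2 P)
    (hεint : ∀ i, Integrable (ε i) P)
    (hmodel : ∀ i ω, y i ω = Pv i ω ⬝ᵥ θ₀ + f (X i ω) + ε i ω)
    (hεcond : ∀ i, P[ε i | MeasurableSpace.comap (fun ω => (X i ω, Z i ω)) inferInstance]
        =ᵐ[P] 0)
    (hindep : IndepFun (fun ω => (y 0 ω, Pv 0 ω, X 0 ω, Z 0 ω))
        (fun ω => (y 1 ω, Pv 1 ω, X 1 ω, Z 1 ω)) P)
    (hident : IdentDistrib (fun ω => (y 0 ω, Pv 0 ω, X 0 ω, Z 0 ω))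
        (fun ω => (y 1 ω, Pv 1 ω, X 1 ω, Z 1 ω)) P P)
    (gy : (Fin qX → ℝ) → ℝ) (gP : (Fin qX → ℝ) → Fin p → ℝ)
    (hgymeas : Measurable gy) (hgPmeas : Measurable gP)
    (hgy : ∀ i, (fun ω => gy (X i ω))
        =ᵐ[P] P[y i | MeasurableSpace.comap (X i) inferInstance])
    (hgP : ∀ i, (fun ω => gP (X i ω))
        =ᵐ[P] P[Pv i | MeasurableSpace.comap (X i) inferInstance])
    (ytil : Fin 2 → Ω → ℝ) (Ptil : Fin 2 → Ω → Fin p → ℝ)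
    (hytil : ∀ i ω, ytil i ω = y i ω - gy (X i ω))
    (hPtil : ∀ i ω, Ptil i ω = Pv i ω - gP (X i ω))
    (Minf : (Fin p → ℝ) → ℝ)
    (hMinf : ∀ θ, Minf θ = ∫ ω, (ytil 0 ω - Ptil 0 ω ⬝ᵥ θ) * (ytil 1 ω - Ptil 1 ω ⬝ᵥ θ)
        * k (Z 0 ω - Z 1 ω) ∂P) :
    ∀ θ : Fin p → ℝ,
      Minf θ = Minf θ₀ +
        ∫ t, (‖∫ ω, (((θ - θ₀) ⬝ᵥ Ptil 0 ω : ℝ) : ℂ) *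
            Complex.exp (Complex.I * ((t ⬝ᵥ Z 0 ω : ℝ) : ℂ)) ∂P‖) ^ 2 ∂μ ∧
      Minf θ₀ ≤ Minf θ := by
  classical
  -- basic measurability
  have hPtilmeas : ∀ i, Measurable (Ptil i) := fun i => by
    have h : Ptil i = fun ω => Pv i ω - gP (X i ω) := funext fun ω => hPtil i ω
    rw [h]; exact (hPmeas i).sub (hgPmeas.comp (hXmeas i))
  have hytilmeas : ∀ i, Measurable (ytil i) := fun i => by
    have h : ytil i = fun ω => y i ω - gy (X i ω) := funext fun ω => hytil i ω
    rw [h]; exact (hymeas i).sub (hgymeas.comp (hXmeas i))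
  have hmX : ∀ i, MeasurableSpace.comap (X i) inferInstance
      ≤ (inferInstance : MeasurableSpace Ω) := fun i => (hXmeas i).comap_le
  have hmXZ : ∀ i, MeasurableSpace.comap (fun ω => (X i ω, Z i ω)) inferInstance
      ≤ (inferInstance : MeasurableSpace Ω) := fun i => ((hXmeas i).prodMk (hZmeas i)).comap_le
  have hle : ∀ i, MeasurableSpace.comap (X i) inferInstance
      ≤ MeasurableSpace.comap (fun ω => (X i ω, Z i ω)) inferInstance := by
    intro i
    have h1 : MeasurableSpace.comap (fun ω => (X i ω, Z i ω))
        (MeasurableSpace.comap Prod.fst inferInstance)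
        = MeasurableSpace.comap (X i) inferInstance := by
      rw [MeasurableSpace.comap_comp]; rfl
    rw [← h1]
    exact MeasurableSpace.comap_mono le_sup_left
  -- integrability of basic objects
  have hyint : ∀ i, Integrable (y i) P := fun i => (hyL2 i).integrable one_le_two
  have hPint : ∀ i, Integrable (Pv i) P := fun i => (hPL2 i).integrable one_le_two
  have hPdot : ∀ i c, Integrable (fun ω => Pv i ω ⬝ᵥ c) P :=
    fun i c => integrable_dotProduct_right' (hPmeas i) (hPint i) c
  have hfX : ∀ i, Integrable (fun ω => f (X i ω)) P := by
    intro i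
    have h : (fun ω => f (X i ω)) = fun ω => y i ω - Pv i ω ⬝ᵥ θ₀ - ε i ω :=
      funext fun ω => by rw [hmodel i ω]; ring
    rw [h]
    exact ((hyint i).sub (hPdot i θ₀)).sub (hεint i)
  have hytilint : ∀ i, Integrable (ytil i) P := by
    intro i
    refine Integrable.congr ((hyint i).sub (integrable_condExp
      (f := y i) (m := MeasurableSpace.comap (X i) inferInstance))) ?_
    filter_upwards [hgy i] with ω hω
    simp only [Pi.sub_apply]
    rw [hytil i ω, hω]
  have hPtilint : ∀ i, Integrable (Ptil i) P := by
    intro i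
    refine Integrable.congr ((hPint i).sub (integrable_condExp
      (f := Pv i) (m := MeasurableSpace.comap (X i) inferInstance))) ?_
    filter_upwards [hgP i] with ω hω
    simp only [Pi.sub_apply]
    rw [hPtil i ω, hω]
  have hPtildot : ∀ i c, Integrable (fun ω => Ptil i ω ⬝ᵥ c) P :=
    fun i c => integrable_dotProduct_right' (hPtilmeas i) (hPtilint i) c
  have hPtildot' : ∀ i c, Integrable (fun ω => c ⬝ᵥ Ptil i ω) P := fun i c =>
    (hPtildot i c).congr (ae_of_all _ fun ω => dotProduct_comm _ _)
  have hAint : ∀ (i : Fin 2) (θ' : Fin p → ℝ),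
      Integrable (fun ω => ytil i ω - Ptil i ω ⬝ᵥ θ') P :=
    fun i θ' => (hytilint i).sub (hPtildot i θ')
  -- conditional expectation of ε given X is zero
  have hεX : ∀ i, P[ε i|MeasurableSpace.comap (X i) inferInstance] =ᵐ[P] 0 := by
    intro i
    calc P[ε i|MeasurableSpace.comap (X i) inferInstance]
        =ᵐ[P] P[P[ε i|MeasurableSpace.comap (fun ω => (X i ω, Z i ω)) inferInstance]|
            MeasurableSpace.comap (X i) inferInstance] :=
          (condExp_condExp_of_le (hle i) (hmXZ i)).symm
      _ =ᵐ[P] P[(0 : Ω → ℝ)|MeasurableSpace.comap (X i) inferInstance] :=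
          condExp_congr_ae (hεcond i)
      _ =ᵐ[P] 0 := by rw [condExp_zero]
  -- decomposition: ytil - Ptil⬝θ' = ε - (θ'-θ₀)⬝Ptil a.e.
  have hAe : ∀ (i : Fin 2) (θ' : Fin p → ℝ), (fun ω => ytil i ω - Ptil i ω ⬝ᵥ θ')
      =ᵐ[P] fun ω => ε i ω - (θ' - θ₀) ⬝ᵥ Ptil i ω := by
    intro i θ'
    have hXmble : Measurable[MeasurableSpace.comap (X i) inferInstance] (X i) :=
      Measurable.of_comap_le le_rfl
    have hcondf : P[(fun ω => f (X i ω))|MeasurableSpace.comap (X i) inferInstance]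
        = fun ω => f (X i ω) :=
      condExp_of_stronglyMeasurable (hmX i) ((hfmeas.comp hXmble).stronglyMeasurable) (hfX i)
    have hcondP : P[(fun ω => Pv i ω ⬝ᵥ θ₀)|MeasurableSpace.comap (X i) inferInstance]
        =ᵐ[P] fun ω => gP (X i ω) ⬝ᵥ θ₀ := by
      have h1 : P[(fun ω => Pv i ω ⬝ᵥ θ₀)|MeasurableSpace.comap (X i) inferInstance]
          =ᵐ[P] fun ω => dotCLM θ₀ ((P[Pv i|MeasurableSpace.comap (X i) inferInstance]) ω) :=
        condExp_clm (hmX i) (dotCLM θ₀) (hPint i)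
      filter_upwards [h1, hgP i] with ω h1ω h2ω
      rw [h1ω, ← h2ω, dotCLM_apply]
    have hy_eq : y i = ((fun ω => Pv i ω ⬝ᵥ θ₀) + fun ω => f (X i ω)) + ε i :=
      funext fun ω => hmodel i ω
    have hcondy : P[y i|MeasurableSpace.comap (X i) inferInstance]
        =ᵐ[P] fun ω => gP (X i ω) ⬝ᵥ θ₀ + f (X i ω) := by
      calc P[y i|MeasurableSpace.comap (X i) inferInstance]
          =ᵐ[P] P[(fun ω => Pv i ω ⬝ᵥ θ₀) + fun ω => f (X i ω)|
              MeasurableSpace.comap (X i) inferInstance]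
            + P[ε i|MeasurableSpace.comap (X i) inferInstance] := by
            rw [hy_eq]; exact condExp_add ((hPdot i θ₀).add (hfX i)) (hεint i) _
        _ =ᵐ[P] (P[(fun ω => Pv i ω ⬝ᵥ θ₀)|MeasurableSpace.comap (X i) inferInstance]
            + P[(fun ω => f (X i ω))|MeasurableSpace.comap (X i) inferInstance])
            + P[ε i|MeasurableSpace.comap (X i) inferInstance] :=
            (condExp_add (hPdot i θ₀) (hfX i) _).add (EventuallyEq.refl _ _)
        _ =ᵐ[P] fun ω => gP (X i ω) ⬝ᵥ θ₀ + f (X i ω) := by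
            filter_upwards [hcondP, hεX i] with ω h1 h2
            simp only [Pi.add_apply, h1, hcondf, h2, Pi.zero_apply, add_zero]
    filter_upwards [hgy i, hcondy] with ω h1 h2
    rw [hytil i ω, hPtil i ω, hmodel i ω, h1, h2, dotProduct_comm (θ' - θ₀)]
    simp only [sub_dotProduct, dotProduct_sub]
    ring
  -- kernel orthogonality (real form)
  have hker : ∀ (i : Fin 2) (g : (Fin qX → ℝ) × (Fin qz → ℝ) → ℝ), Measurable g →
      (∀ v, |g v| ≤ 1) → ∫ ω, ε i ω * g (X i ω, Z i ω) ∂P = 0 := by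
    intro i g hg hgb
    have hXZm : Measurable[MeasurableSpace.comap (fun ω => (X i ω, Z i ω)) inferInstance]
        (fun ω => (X i ω, Z i ω)) := Measurable.of_comap_le le_rfl
    have hGm : StronglyMeasurable[MeasurableSpace.comap (fun ω => (X i ω, Z i ω)) inferInstance]
        (fun ω => g (X i ω, Z i ω)) := (hg.comp hXZm).stronglyMeasurable
    have hb : ∀ᵐ ω ∂P, ‖g (X i ω, Z i ω)‖ ≤ (1 : ℝ) :=
      ae_of_all _ fun ω => by simpa [Real.norm_eq_abs] using hgb _
    have hmul := condExp_stronglyMeasurable_mul_of_bound (hmXZ i) hGm (hεint i) 1 hb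
    have hz : (fun ω => g (X i ω, Z i ω)) *
        P[ε i|MeasurableSpace.comap (fun ω => (X i ω, Z i ω)) inferInstance] =ᵐ[P] 0 := by
      filter_upwards [hεcond i] with ω hω
      simp only [Pi.mul_apply, hω, Pi.zero_apply, mul_zero]
    have hint : Integrable ((fun ω => g (X i ω, Z i ω)) * ε i) P :=
      (hεint i).bdd_mul ((hGm.mono (hmXZ i)).aestronglyMeasurable)
        hb
    calc ∫ ω, ε i ω * g (X i ω, Z i ω) ∂P
        = ∫ ω, ((fun ω => g (X i ω, Z i ω)) * ε i) ω ∂P :=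
          integral_congr_ae (ae_of_all _ fun ω => by simp [mul_comm])
      _ = ∫ ω, (P[(fun ω => g (X i ω, Z i ω)) * ε i|
            MeasurableSpace.comap (fun ω => (X i ω, Z i ω)) inferInstance]) ω ∂P :=
          (integral_condExp (hmXZ i)).symm
      _ = 0 := by rw [integral_congr_ae (hmul.trans hz)]; simp
  -- complex exponential facts
  have hexp_bd : ∀ r : ℝ, ‖Complex.exp (Complex.I * (r : ℂ))‖ ≤ 1 := by
    intro r
    rw [mul_comm, Complex.norm_exp_ofReal_mul_I]
  have hZdotmeas : ∀ (i : Fin 2) (t' : Fin qz → ℝ), Measurable fun ω => t' ⬝ᵥ Z i ω :=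
    fun i t' => measurable_dotProduct_left' (hZmeas i) t'
  have hexp_meas : ∀ (i : Fin 2) (t' : Fin qz → ℝ),
      AEStronglyMeasurable (fun ω => Complex.exp (Complex.I * ((t' ⬝ᵥ Z i ω : ℝ) : ℂ))) P :=
    fun i t' => (Complex.measurable_exp.comp (measurable_const.mul
      (Complex.continuous_ofReal.measurable.comp (hZdotmeas i t')))).aestronglyMeasurable
  have hcint : ∀ (h : Ω → ℝ), Integrable h P → ∀ (i : Fin 2) (t' : Fin qz → ℝ),
      Integrable (fun ω => ((h ω : ℝ) : ℂ)
        * Complex.exp (Complex.I * ((t' ⬝ᵥ Z i ω : ℝ) : ℂ))) P :=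
    fun h hh i t' => (integrable_complex_ofReal hh).mul_bddone (hexp_meas i t')
      fun ω => hexp_bd _
  -- kernel orthogonality (complex form)
  have hker' : ∀ (i : Fin 2) (t' : Fin qz → ℝ),
      ∫ ω, ((ε i ω : ℝ) : ℂ) * Complex.exp (Complex.I * ((t' ⬝ᵥ Z i ω : ℝ) : ℂ)) ∂P = 0 := by
    intro i t'
    have hcos : ∫ ω, ε i ω * Real.cos (t' ⬝ᵥ Z i ω) ∂P = 0 := by
      have hm : Measurable fun v : (Fin qX → ℝ) × (Fin qz → ℝ) => Real.cos (t' ⬝ᵥ v.2) :=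
        Real.measurable_cos.comp (measurable_dotProduct_left' measurable_snd t')
      exact hker i _ hm fun v => abs_le.2 ⟨Real.neg_one_le_cos _, Real.cos_le_one _⟩
    have hsin : ∫ ω, ε i ω * Real.sin (t' ⬝ᵥ Z i ω) ∂P = 0 := by
      have hm : Measurable fun v : (Fin qX → ℝ) × (Fin qz → ℝ) => Real.sin (t' ⬝ᵥ v.2) :=
        Real.measurable_sin.comp (measurable_dotProduct_left' measurable_snd t')
      exact hker i _ hm fun v => abs_le.2 ⟨Real.neg_one_le_sin _, Real.sin_le_one _⟩
    have heq : ∀ ω, ((ε i ω : ℝ) : ℂ) * Complex.exp (Complex.I * ((t' ⬝ᵥ Z i ω : ℝ) : ℂ))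
        = ((ε i ω * Real.cos (t' ⬝ᵥ Z i ω) : ℝ) : ℂ)
          + ((ε i ω * Real.sin (t' ⬝ᵥ Z i ω) : ℝ) : ℂ) * Complex.I := by
      intro ω
      rw [mul_comm Complex.I, Complex.exp_mul_I]
      push_cast
      ring
    have hcosint : Integrable (fun ω => ε i ω * Real.cos (t' ⬝ᵥ Z i ω)) P :=
      (hεint i).mul_bddone (Real.measurable_cos.comp (hZdotmeas i t')).aestronglyMeasurable
        fun ω => by
          simpa [Real.norm_eq_abs] using abs_le.2 ⟨Real.neg_one_le_cos _, Real.cos_le_one _⟩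
    have hsinint : Integrable (fun ω => ε i ω * Real.sin (t' ⬝ᵥ Z i ω)) P :=
      (hεint i).mul_bddone (Real.measurable_sin.comp (hZdotmeas i t')).aestronglyMeasurable
        fun ω => by
          simpa [Real.norm_eq_abs] using abs_le.2 ⟨Real.neg_one_le_sin _, Real.sin_le_one _⟩
    rw [integral_congr_ae (ae_of_all _ heq),
      integral_add (integrable_complex_ofReal hcosint)
        ((integrable_complex_ofReal hsinint).mul_const _),
      integral_mul_const, integral_complex_ofReal, integral_complex_ofReal, hcos, hsin]
    simp
  -- the key identity
  have key : ∀ θ' : Fin p → ℝ, Minf θ' =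
      ∫ t, (‖∫ ω, (((θ' - θ₀) ⬝ᵥ Ptil 0 ω : ℝ) : ℂ) *
        Complex.exp (Complex.I * ((t ⬝ᵥ Z 0 ω : ℝ) : ℂ)) ∂P‖) ^ 2 ∂μ := by
    intro θ'
    -- independence of the two factors
    have hdotm : Measurable fun v : ℝ × (Fin p → ℝ) × (Fin qX → ℝ) × (Fin qz → ℝ) =>
        (v.1 - gy v.2.2.1) - (v.2.1 - gP v.2.2.1) ⬝ᵥ θ' := by
      have hP2 : Measurable fun v : ℝ × (Fin p → ℝ) × (Fin qX → ℝ) × (Fin qz → ℝ) =>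
          v.2.1 - gP v.2.2.1 :=
        (measurable_fst.comp measurable_snd).sub
          (hgPmeas.comp (measurable_fst.comp (measurable_snd.comp measurable_snd)))
      exact (measurable_fst.sub
        (hgymeas.comp (measurable_fst.comp (measurable_snd.comp measurable_snd)))).sub
        (measurable_dotProduct_right' hP2 θ')
    have hconvA : ∀ i : Fin 2, (fun ω => ytil i ω - Ptil i ω ⬝ᵥ θ')
        = (fun v : ℝ × (Fin p → ℝ) × (Fin qX → ℝ) × (Fin qz → ℝ) =>
            (v.1 - gy v.2.2.1) - (v.2.1 - gP v.2.2.1) ⬝ᵥ θ')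
          ∘ (fun ω => (y i ω, Pv i ω, X i ω, Z i ω)) :=
      fun i => funext fun ω => by simp [hytil i ω, hPtil i ω, Function.comp]
    have hAindep : IndepFun (fun ω => ytil 0 ω - Ptil 0 ω ⬝ᵥ θ')
        (fun ω => ytil 1 ω - Ptil 1 ω ⬝ᵥ θ') P := by
      rw [hconvA 0, hconvA 1]
      exact hindep.comp hdotm hdotm
    have hA01int : Integrable
        (fun ω => (ytil 0 ω - Ptil 0 ω ⬝ᵥ θ') * (ytil 1 ω - Ptil 1 ω ⬝ᵥ θ')) P :=
      hAindep.integrable_mul (hAint 0 θ') (hAint 1 θ')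
    -- pointwise-in-t identity
    have hpt : ∀ t : Fin qz → ℝ,
        ∫ ω, ((ytil 0 ω - Ptil 0 ω ⬝ᵥ θ' : ℝ) : ℂ) * ((ytil 1 ω - Ptil 1 ω ⬝ᵥ θ' : ℝ) : ℂ)
            * Complex.exp (Complex.I * ((t ⬝ᵥ (Z 0 ω - Z 1 ω) : ℝ) : ℂ)) ∂P
          = (((‖∫ ω, (((θ' - θ₀) ⬝ᵥ Ptil 0 ω : ℝ) : ℂ)
              * Complex.exp (Complex.I * ((t ⬝ᵥ Z 0 ω : ℝ) : ℂ)) ∂P‖) ^ 2 : ℝ) : ℂ) := by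
      intro t
      have hsplit : ∀ ω : Ω, ((ytil 0 ω - Ptil 0 ω ⬝ᵥ θ' : ℝ) : ℂ)
            * ((ytil 1 ω - Ptil 1 ω ⬝ᵥ θ' : ℝ) : ℂ)
            * Complex.exp (Complex.I * ((t ⬝ᵥ (Z 0 ω - Z 1 ω) : ℝ) : ℂ))
          = (((ytil 0 ω - Ptil 0 ω ⬝ᵥ θ' : ℝ) : ℂ)
              * Complex.exp (Complex.I * ((t ⬝ᵥ Z 0 ω : ℝ) : ℂ)))
            * (((ytil 1 ω - Ptil 1 ω ⬝ᵥ θ' : ℝ) : ℂ)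
              * Complex.exp (Complex.I * (((-t) ⬝ᵥ Z 1 ω : ℝ) : ℂ))) := by
        intro ω
        have h1 : t ⬝ᵥ (Z 0 ω - Z 1 ω) = t ⬝ᵥ Z 0 ω + (-t) ⬝ᵥ Z 1 ω := by
          rw [dotProduct_sub, neg_dotProduct]; ring
        rw [h1]
        push_cast
        rw [mul_add, Complex.exp_add]
        ring
      rw [integral_congr_ae (ae_of_all _ hsplit)]
      -- factorize by independence
      have hg1m : ∀ s : Fin qz → ℝ,
          Measurable fun v : ℝ × (Fin p → ℝ) × (Fin qX → ℝ) × (Fin qz → ℝ) =>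
            (((v.1 - gy v.2.2.1) - (v.2.1 - gP v.2.2.1) ⬝ᵥ θ' : ℝ) : ℂ)
              * Complex.exp (Complex.I * ((s ⬝ᵥ v.2.2.2 : ℝ) : ℂ)) := by
        intro s
        refine (Complex.continuous_ofReal.measurable.comp hdotm).mul
          (Complex.measurable_exp.comp (measurable_const.mul
            (Complex.continuous_ofReal.measurable.comp
              (measurable_dotProduct_left' (measurable_snd.comp
                (measurable_snd.comp measurable_snd)) s))))
      have hconvC : ∀ (i : Fin 2) (s : Fin qz → ℝ),
          (fun ω => ((ytil i ω - Ptil i ω ⬝ᵥ θ' : ℝ) : ℂ)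
              * Complex.exp (Complex.I * ((s ⬝ᵥ Z i ω : ℝ) : ℂ)))
            = (fun v : ℝ × (Fin p → ℝ) × (Fin qX → ℝ) × (Fin qz → ℝ) =>
                (((v.1 - gy v.2.2.1) - (v.2.1 - gP v.2.2.1) ⬝ᵥ θ' : ℝ) : ℂ)
                  * Complex.exp (Complex.I * ((s ⬝ᵥ v.2.2.2 : ℝ) : ℂ)))
              ∘ (fun ω => (y i ω, Pv i ω, X i ω, Z i ω)) :=
        fun i s => funext fun ω => by simp [hytil i ω, hPtil i ω, Function.comp]
      have hfac : IndepFun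
          (fun ω => ((ytil 0 ω - Ptil 0 ω ⬝ᵥ θ' : ℝ) : ℂ)
            * Complex.exp (Complex.I * ((t ⬝ᵥ Z 0 ω : ℝ) : ℂ)))
          (fun ω => ((ytil 1 ω - Ptil 1 ω ⬝ᵥ θ' : ℝ) : ℂ)
            * Complex.exp (Complex.I * (((-t) ⬝ᵥ Z 1 ω : ℝ) : ℂ))) P := by
        rw [hconvC 0 t, hconvC 1 (-t)]
        exact hindep.comp (hg1m t) (hg1m (-t))
      rw [hfac.integral_mul_complex (hcint _ (hAint 0 θ') 0 t) (hcint _ (hAint 1 θ') 1 (-t))]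
      -- compute each factor
      have hfact : ∀ (i : Fin 2) (t' : Fin qz → ℝ),
          ∫ ω, ((ytil i ω - Ptil i ω ⬝ᵥ θ' : ℝ) : ℂ)
              * Complex.exp (Complex.I * ((t' ⬝ᵥ Z i ω : ℝ) : ℂ)) ∂P
            = - ∫ ω, (((θ' - θ₀) ⬝ᵥ Ptil i ω : ℝ) : ℂ)
              * Complex.exp (Complex.I * ((t' ⬝ᵥ Z i ω : ℝ) : ℂ)) ∂P := by
        intro i t'
        have h1 : (fun ω => ((ytil i ω - Ptil i ω ⬝ᵥ θ' : ℝ) : ℂ)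
              * Complex.exp (Complex.I * ((t' ⬝ᵥ Z i ω : ℝ) : ℂ)))
            =ᵐ[P] fun ω => ((ε i ω : ℝ) : ℂ)
                * Complex.exp (Complex.I * ((t' ⬝ᵥ Z i ω : ℝ) : ℂ))
              - (((θ' - θ₀) ⬝ᵥ Ptil i ω : ℝ) : ℂ)
                * Complex.exp (Complex.I * ((t' ⬝ᵥ Z i ω : ℝ) : ℂ)) := by
          filter_upwards [hAe i θ'] with ω hω
          rw [hω]
          push_cast
          ring
        rw [integral_congr_ae h1,
          integral_sub (hcint _ (hεint i) i t') (hcint _ (hPtildot' i (θ' - θ₀)) i t'),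
          hker' i t', zero_sub]
      rw [hfact 0 t, hfact 1 (-t), neg_mul_neg]
      -- rewrite the second factor as a conjugate
      have hconj : ∫ ω, (((θ' - θ₀) ⬝ᵥ Ptil 1 ω : ℝ) : ℂ)
            * Complex.exp (Complex.I * (((-t) ⬝ᵥ Z 1 ω : ℝ) : ℂ)) ∂P
          = (starRingEnd ℂ) (∫ ω, (((θ' - θ₀) ⬝ᵥ Ptil 1 ω : ℝ) : ℂ)
            * Complex.exp (Complex.I * ((t ⬝ᵥ Z 1 ω : ℝ) : ℂ)) ∂P) := by
        rw [← integral_conj]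
        refine integral_congr_ae (ae_of_all _ fun ω => ?_)
        beta_reduce
        rw [_root_.map_mul, Complex.conj_ofReal, ← Complex.exp_conj]
        congr 1
        rw [_root_.map_mul, Complex.conj_I, Complex.conj_ofReal, neg_dotProduct]
        push_cast
        ring
      -- identically distributed: index 1 ↦ index 0
      have hgBm : Measurable fun v : ℝ × (Fin p → ℝ) × (Fin qX → ℝ) × (Fin qz → ℝ) =>
          (((θ' - θ₀) ⬝ᵥ (v.2.1 - gP v.2.2.1) : ℝ) : ℂ)
            * Complex.exp (Complex.I * ((t ⬝ᵥ v.2.2.2 : ℝ) : ℂ)) := by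
        have hP2 : Measurable fun v : ℝ × (Fin p → ℝ) × (Fin qX → ℝ) × (Fin qz → ℝ) =>
            v.2.1 - gP v.2.2.1 :=
          (measurable_fst.comp measurable_snd).sub
            (hgPmeas.comp (measurable_fst.comp (measurable_snd.comp measurable_snd)))
        exact (Complex.continuous_ofReal.measurable.comp
            (measurable_dotProduct_left' hP2 (θ' - θ₀))).mul
          (Complex.measurable_exp.comp (measurable_const.mul
            (Complex.continuous_ofReal.measurable.comp
              (measurable_dotProduct_left' (measurable_snd.comp
                (measurable_snd.comp measurable_snd)) t))))
      have hconvB : ∀ i : Fin 2,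
          (fun ω => (((θ' - θ₀) ⬝ᵥ Ptil i ω : ℝ) : ℂ)
              * Complex.exp (Complex.I * ((t ⬝ᵥ Z i ω : ℝ) : ℂ)))
            = (fun v : ℝ × (Fin p → ℝ) × (Fin qX → ℝ) × (Fin qz → ℝ) =>
                (((θ' - θ₀) ⬝ᵥ (v.2.1 - gP v.2.2.1) : ℝ) : ℂ)
                  * Complex.exp (Complex.I * ((t ⬝ᵥ v.2.2.2 : ℝ) : ℂ)))
              ∘ (fun ω => (y i ω, Pv i ω, X i ω, Z i ω)) :=
        fun i => funext fun ω => by simp [hPtil i ω, Function.comp]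
      have hid : ∫ ω, (((θ' - θ₀) ⬝ᵥ Ptil 1 ω : ℝ) : ℂ)
            * Complex.exp (Complex.I * ((t ⬝ᵥ Z 1 ω : ℝ) : ℂ)) ∂P
          = ∫ ω, (((θ' - θ₀) ⬝ᵥ Ptil 0 ω : ℝ) : ℂ)
            * Complex.exp (Complex.I * ((t ⬝ᵥ Z 0 ω : ℝ) : ℂ)) ∂P := by
        rw [hconvB 0, hconvB 1]
        exact ((hident.comp hgBm).integral_eq).symm
      rw [hconj, hid, Complex.mul_conj, ← Complex.sq_norm]
    -- assemble: Fubini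
    have hdotZm : Measurable fun z : Ω × (Fin qz → ℝ) => z.2 ⬝ᵥ (Z 0 z.1 - Z 1 z.1) := by
      simp only [dotProduct]
      exact Finset.measurable_sum _ fun j _ =>
        ((measurable_pi_apply j).comp measurable_snd).mul
          ((measurable_pi_apply j).comp (((hZmeas 0).sub (hZmeas 1)).comp measurable_fst))
    have hFmeas : AEStronglyMeasurable (Function.uncurry fun (ω : Ω) (t : Fin qz → ℝ) =>
        ((ytil 0 ω - Ptil 0 ω ⬝ᵥ θ' : ℝ) : ℂ) * ((ytil 1 ω - Ptil 1 ω ⬝ᵥ θ' : ℝ) : ℂ)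
          * Complex.exp (Complex.I * ((t ⬝ᵥ (Z 0 ω - Z 1 ω) : ℝ) : ℂ))) (P.prod μ) := by
      have hA0 : Measurable fun ω => ytil 0 ω - Ptil 0 ω ⬝ᵥ θ' :=
        (hytilmeas 0).sub (measurable_dotProduct_right' (hPtilmeas 0) θ')
      have hA1 : Measurable fun ω => ytil 1 ω - Ptil 1 ω ⬝ᵥ θ' :=
        (hytilmeas 1).sub (measurable_dotProduct_right' (hPtilmeas 1) θ')
      refine Measurable.aestronglyMeasurable ?_
      exact ((Complex.continuous_ofReal.measurable.comp (hA0.comp measurable_fst)).mul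
          (Complex.continuous_ofReal.measurable.comp (hA1.comp measurable_fst))).mul
        (Complex.measurable_exp.comp (measurable_const.mul
          (Complex.continuous_ofReal.measurable.comp hdotZm)))
    have hμint : Integrable (Function.uncurry fun (ω : Ω) (t : Fin qz → ℝ) =>
        ((ytil 0 ω - Ptil 0 ω ⬝ᵥ θ' : ℝ) : ℂ) * ((ytil 1 ω - Ptil 1 ω ⬝ᵥ θ' : ℝ) : ℂ)
          * Complex.exp (Complex.I * ((t ⬝ᵥ (Z 0 ω - Z 1 ω) : ℝ) : ℂ))) (P.prod μ) := by
      have hmaj : Integrable (fun z : Ω × (Fin qz → ℝ) =>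
          ‖(ytil 0 z.1 - Ptil 0 z.1 ⬝ᵥ θ') * (ytil 1 z.1 - Ptil 1 z.1 ⬝ᵥ θ')‖ * 1) (P.prod μ) :=
        hA01int.norm.mul_prod (integrable_const (1 : ℝ))
      refine hmaj.mono' hFmeas (ae_of_all _ fun z => ?_)
      rw [Function.uncurry]
      rw [norm_mul, norm_mul]
      simp only [Complex.norm_real, Real.norm_eq_abs]
      rw [abs_mul]
      have hb := hexp_bd (z.2 ⬝ᵥ (Z 0 z.1 - Z 1 z.1))
      calc |ytil 0 z.1 - Ptil 0 z.1 ⬝ᵥ θ'| * |ytil 1 z.1 - Ptil 1 z.1 ⬝ᵥ θ'|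
            * ‖Complex.exp (Complex.I * ((z.2 ⬝ᵥ (Z 0 z.1 - Z 1 z.1) : ℝ) : ℂ))‖
          ≤ |ytil 0 z.1 - Ptil 0 z.1 ⬝ᵥ θ'| * |ytil 1 z.1 - Ptil 1 z.1 ⬝ᵥ θ'| * 1 := by
            exact mul_le_mul_of_nonneg_left hb (by positivity)
        _ = |ytil 0 z.1 - Ptil 0 z.1 ⬝ᵥ θ'| * |ytil 1 z.1 - Ptil 1 z.1 ⬝ᵥ θ'| * 1 := rfl
    have hmain : ((Minf θ' : ℝ) : ℂ) = ((∫ t, (‖∫ ω,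
        (((θ' - θ₀) ⬝ᵥ Ptil 0 ω : ℝ) : ℂ) *
          Complex.exp (Complex.I * ((t ⬝ᵥ Z 0 ω : ℝ) : ℂ)) ∂P‖) ^ 2 ∂μ : ℝ) : ℂ) := by
      calc ((Minf θ' : ℝ) : ℂ)
          = ∫ ω, (((ytil 0 ω - Ptil 0 ω ⬝ᵥ θ') * (ytil 1 ω - Ptil 1 ω ⬝ᵥ θ')
              * k (Z 0 ω - Z 1 ω) : ℝ) : ℂ) ∂P := by
            rw [hMinf θ', integral_complex_ofReal]
        _ = ∫ ω, ∫ t, ((ytil 0 ω - Ptil 0 ω ⬝ᵥ θ' : ℝ) : ℂ)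
              * ((ytil 1 ω - Ptil 1 ω ⬝ᵥ θ' : ℝ) : ℂ)
              * Complex.exp (Complex.I * ((t ⬝ᵥ (Z 0 ω - Z 1 ω) : ℝ) : ℂ)) ∂μ ∂P := by
            refine integral_congr_ae (ae_of_all _ fun ω => ?_)
            beta_reduce
            rw [Complex.ofReal_mul, Complex.ofReal_mul, hk, ← integral_const_mul]
        _ = ∫ t, ∫ ω, ((ytil 0 ω - Ptil 0 ω ⬝ᵥ θ' : ℝ) : ℂ)
              * ((ytil 1 ω - Ptil 1 ω ⬝ᵥ θ' : ℝ) : ℂ)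
              * Complex.exp (Complex.I * ((t ⬝ᵥ (Z 0 ω - Z 1 ω) : ℝ) : ℂ)) ∂P ∂μ :=
            integral_integral_swap hμint
        _ = ∫ t, (((‖∫ ω, (((θ' - θ₀) ⬝ᵥ Ptil 0 ω : ℝ) : ℂ)
              * Complex.exp (Complex.I * ((t ⬝ᵥ Z 0 ω : ℝ) : ℂ)) ∂P‖) ^ 2 : ℝ) : ℂ) ∂μ :=
            integral_congr_ae (ae_of_all _ hpt)
        _ = ((∫ t, (‖∫ ω, (((θ' - θ₀) ⬝ᵥ Ptil 0 ω : ℝ) : ℂ) *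
              Complex.exp (Complex.I * ((t ⬝ᵥ Z 0 ω : ℝ) : ℂ)) ∂P‖) ^ 2 ∂μ : ℝ) : ℂ) :=
            integral_complex_ofReal
    exact_mod_cast hmain
  -- conclusion
  intro θ
  have h0 : Minf θ₀ = 0 := by
    rw [key θ₀]
    have hz : ∀ t : Fin qz → ℝ, (‖∫ ω, (((θ₀ - θ₀) ⬝ᵥ Ptil 0 ω : ℝ) : ℂ) *
        Complex.exp (Complex.I * ((t ⬝ᵥ Z 0 ω : ℝ) : ℂ)) ∂P‖) ^ 2 = 0 := by
      intro t
      simp [sub_self, zero_dotProduct]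
    rw [integral_congr_ae (ae_of_all _ hz), integral_zero]
  refine ⟨?_, ?_⟩
  · rw [key θ, h0, zero_add]
  · rw [h0, key θ]
    exact integral_nonneg fun t => sq_nonneg _
end
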